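/- arXiv:2004.11101 — 6 statements merged into one kernel-verified Lean document; each statement's English description precedes it below -/
import Mathlib

section
/- There exists a family of infinite subsets of the unit interval [0,1], each discrete in its subspace topology, such that the family has the cardinality of the continuum and for any two distinct members Z, W of the family there is no bijection f : Z → W with both f and f⁻¹ uniformly continuous with respect to the Euclidean metric. -/
namespace S9
open Set Topology


variable {X Y : Type*} [TopologicalSpace X] [TopologicalSpace Y]

/-- derived set (set of accumulation points) of `S`. -/
def der (S : Set X) : Set X := {x | x ∈ closure (S \ {x})}

/-- intersection of all iterated derived sets (starting from the first). -/
def ddd (S : Set X) : Set X := ⋂ j : ℕ, der^[j + 1] S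

/-- marker sets: the invariant. -/
def ttt (S : Set X) (j : ℕ) : Set X := ddd S ∩ closure (der^[j] S \ ddd S)

variable {e : X → Y}

lemma emb_closure (he : IsClosedEmbedding e) (S : Set X) : e '' closure S = closure (e '' S) :=
  (he.closure_image_eq S).symm

lemma emb_der (he : IsClosedEmbedding e) (S : Set X) : e '' der S = der (e '' S) := by
  ext y
  constructor
  · rintro ⟨x, hx, rfl⟩
    have : e '' (S \ {x}) = e '' S \ {e x} := by
      rw [Set.image_diff he.injective, Set.image_singleton]
    have h2 : e x ∈ e '' closure (S \ {x}) := ⟨x, hx, rfl⟩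
    rw [emb_closure he, this] at h2
    exact h2
  · intro hy
    have hy' : y ∈ closure (e '' S \ {y}) := hy
    have hsub : closure (e '' S \ {y}) ⊆ e '' closure S := by
      rw [emb_closure he]
      exact closure_mono (diff_subset.trans subset_closure) |>.trans (by rw [closure_closure])
    obtain ⟨x, hx, rfl⟩ := hsub hy'
    refine ⟨x, ?_, rfl⟩
    have : e '' (S \ {x}) = e '' S \ {e x} := by
      rw [Set.image_diff he.injective, Set.image_singleton]
    show x ∈ closure (S \ {x})
    have : e x ∈ closure (e '' (S \ {x})) := by rw [this]; exact hy'
    rw [← emb_closure he] at this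
    obtain ⟨x', hx', hxx⟩ := this
    rwa [he.injective hxx] at hx'

lemma emb_der_iter (he : IsClosedEmbedding e) (S : Set X) (j : ℕ) : e '' der^[j] S = der^[j] (e '' S) := by
  induction j with
  | zero => simp
  | succ n ih =>
      rw [Function.iterate_succ_apply', Function.iterate_succ_apply', ← ih, emb_der he]

lemma emb_ddd (he : IsClosedEmbedding e) (S : Set X) : e '' ddd S = ddd (e '' S) := by
  unfold ddd
  rw [Set.InjOn.image_iInter_eq (he.injective.injOn)]
  exact iInter_congr fun j => emb_der_iter he S (j + 1)

lemma emb_ttt (he : IsClosedEmbedding e) (S : Set X) (j : ℕ) : e '' ttt S j = ttt (e '' S) j := by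
  unfold ttt
  rw [Set.image_inter he.injective, emb_ddd he, emb_closure he,
    Set.image_diff he.injective, emb_ddd he, emb_der_iter he]



variable {Z W : Set ℝ}

noncomputable section

def incl (Z : Set ℝ) : ↥Z → ↥(closure Z) := Set.inclusion subset_closure

lemma isometry_incl (Z : Set ℝ) : Isometry (incl Z) := by
  apply Isometry.of_dist_eq
  intro a b
  rfl

lemma denseRange_incl (Z : Set ℝ) : DenseRange (incl Z) := by
  rw [Metric.denseRange_iff]
  intro x ε hε
  have hx : (x : ℝ) ∈ closure Z := x.2
  rw [Metric.mem_closure_iff] at hx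
  obtain ⟨z, hz, hd⟩ := hx ε hε
  exact ⟨⟨z, hz⟩, by simpa [incl, Subtype.dist_eq] using hd⟩

lemma uI_incl (Z : Set ℝ) : IsUniformInducing (incl Z) :=
  (isometry_incl Z).isUniformInducing

def di (Z : Set ℝ) : IsDenseInducing (incl Z) :=
  (uI_incl Z).isDenseInducing (denseRange_incl Z)

variable (Φ : ↥Z ≃ ↥W)

def fext (Φ : ↥Z ≃ ↥W) : ↥Z → ↥(closure W) := fun z => incl W (Φ z)

lemma fext_uc (hΦ : UniformContinuous ⇑Φ) : UniformContinuous (fext Φ) :=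
  (isometry_incl W).uniformContinuous.comp hΦ

def ext1 (Φ : ↥Z ≃ ↥W) : ↥(closure Z) → ↥(closure W) := (di Z).extend (fext Φ)

lemma ext1_uc (hΦ : UniformContinuous ⇑Φ) : UniformContinuous (ext1 Φ) := by
  haveI : CompleteSpace ↥(closure W) := isClosed_closure.completeSpace_coe
  exact uniformContinuous_uniformly_extend (uI_incl Z) (denseRange_incl Z) (fext_uc Φ hΦ)

lemma ext1_eq (hΦ : UniformContinuous ⇑Φ) (z : ↥Z) : ext1 Φ (incl Z z) = fext Φ z := by
  haveI : CompleteSpace ↥(closure W) := isClosed_closure.completeSpace_coe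
  exact (di Z).extend_eq (fext_uc Φ hΦ).continuous z

lemma ext_left_inv (hΦ : UniformContinuous ⇑Φ) (hΦ' : UniformContinuous ⇑Φ.symm) :
    (ext1 Φ.symm) ∘ (ext1 Φ) = id := by
  apply DenseRange.equalizer (denseRange_incl Z)
  · exact ((ext1_uc Φ.symm hΦ').comp (ext1_uc Φ hΦ)).continuous
  · exact continuous_id
  · funext z
    simp only [Function.comp_apply, id_eq]
    rw [ext1_eq Φ hΦ z]
    have : fext Φ z = incl W (Φ z) := rfl
    rw [this, ext1_eq Φ.symm hΦ' (Φ z)]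
    show incl Z (Φ.symm (Φ z)) = incl Z z
    rw [Equiv.symm_apply_apply]

/-- A uniformly bicontinuous bijection between subsets of ℝ extends to a
homeomorphism of their closures. -/
def extHomeo (Φ : ↥Z ≃ ↥W) (hΦ : UniformContinuous ⇑Φ) (hΦ' : UniformContinuous ⇑Φ.symm) :
    ↥(closure Z) ≃ₜ ↥(closure W) where
  toFun := ext1 Φ
  invFun := ext1 Φ.symm
  left_inv := fun x => congrFun (ext_left_inv Φ hΦ hΦ') x
  right_inv := by
    intro x
    have := ext_left_inv Φ.symm (by simpa using hΦ') (by simpa using hΦ)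
    simpa using congrFun this x
  continuous_toFun := (ext1_uc Φ hΦ).continuous
  continuous_invFun := (ext1_uc Φ.symm hΦ').continuous

end


noncomputable def val (f : ℕ → Bool) : ℝ := ∑' i, if f i then ((1:ℝ)/4)^(i+1) else 0

lemma term_nonneg (f : ℕ → Bool) (i : ℕ) : (0:ℝ) ≤ if f i then ((1:ℝ)/4)^(i+1) else 0 := by
  split <;> positivity

lemma term_le (f : ℕ → Bool) (i : ℕ) : (if f i then ((1:ℝ)/4)^(i+1) else 0) ≤ ((1:ℝ)/4)^(i+1) := by
  split
  · exact le_rfl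
  · positivity

lemma summable_geom : Summable (fun i : ℕ => ((1:ℝ)/4)^(i+1)) := by
  apply Summable.comp_injective (summable_geometric_of_lt_one (by norm_num) (by norm_num)) 
    (add_left_injective 1)

lemma summable_val (f : ℕ → Bool) : Summable (fun i => if f i then ((1:ℝ)/4)^(i+1) else 0) := by
  apply Summable.of_nonneg_of_le (term_nonneg f) (term_le f) summable_geom

lemma tsum_geom_tail : ∑' i : ℕ, ((1:ℝ)/4)^(i+1) = 1/3 := by
  have h : ∑' i : ℕ, ((1:ℝ)/4)^(i+1) = (1/4) * ∑' i : ℕ, ((1:ℝ)/4)^i := by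
    rw [← tsum_mul_left]
    congr 1
    funext i
    rw [pow_succ]
    ring
  rw [h, tsum_geometric_of_lt_one (by norm_num) (by norm_num)]
  norm_num

lemma val_nonneg (f : ℕ → Bool) : 0 ≤ val f :=
  tsum_nonneg (term_nonneg f)

lemma val_le (f : ℕ → Bool) : val f ≤ 1/3 := by
  calc val f ≤ ∑' i : ℕ, ((1:ℝ)/4)^(i+1) :=
        Summable.tsum_le_tsum (term_le f) (summable_val f) summable_geom
    _ = 1/3 := tsum_geom_tail

lemma continuous_val : Continuous val := by
  apply continuous_tsum (u := fun i => ((1:ℝ)/4)^(i+1))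
  · intro i
    exact (continuous_of_discreteTopology (f := fun b : Bool => if b then ((1:ℝ)/4)^(i+1) else 0)).comp
      (continuous_apply i)
  · exact summable_geom
  · intro n x
    rw [Real.norm_eq_abs, abs_of_nonneg (term_nonneg x n)]
    exact term_le x n

lemma val_sep_aux {f g : ℕ → Bool} {n : ℕ} (hfn : f n = true) (hgn : g n = false)
    (hag : ∀ i < n, f i = g i) : (2/3) * ((1:ℝ)/4)^(n+1) ≤ val f - val g := by
  have hf := (Summable.sum_add_tsum_nat_add (f := fun i => if f i then ((1:ℝ)/4)^(i+1) else 0) (n+1) (summable_val f)).symm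
  have hg := (Summable.sum_add_tsum_nat_add (f := fun i => if g i then ((1:ℝ)/4)^(i+1) else 0) (n+1) (summable_val g)).symm
  have hsum : ∀ h : ℕ → Bool, ∑ i ∈ Finset.range (n+1), (if h i then ((1:ℝ)/4)^(i+1) else 0)
      = (∑ i ∈ Finset.range n, (if h i then ((1:ℝ)/4)^(i+1) else 0)) + (if h n then ((1:ℝ)/4)^(n+1) else 0) :=
    fun h => Finset.sum_range_succ _ n
  have hpref : ∑ i ∈ Finset.range n, (if f i then ((1:ℝ)/4)^(i+1) else 0)
      = ∑ i ∈ Finset.range n, (if g i then ((1:ℝ)/4)^(i+1) else 0) := by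
    apply Finset.sum_congr rfl
    intro i hi
    rw [hag i (Finset.mem_range.mp hi)]
  have htail_f : (0:ℝ) ≤ ∑' i, (if f (i + (n+1)) then ((1:ℝ)/4)^(i + (n+1) + 1) else 0) :=
    tsum_nonneg (fun i => term_nonneg f (i + (n+1)))
  have htail_g : ∑' i, (if g (i + (n+1)) then ((1:ℝ)/4)^(i + (n+1) + 1) else 0) ≤ (1/3) * ((1:ℝ)/4)^(n+1) := by
    calc ∑' i, (if g (i + (n+1)) then ((1:ℝ)/4)^(i + (n+1) + 1) else 0)
        ≤ ∑' i : ℕ, ((1:ℝ)/4)^(i + (n+1) + 1) := by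
          apply Summable.tsum_le_tsum (fun i => term_le g (i + (n+1)))
            ((summable_val g).comp_injective (add_left_injective (n+1)))
            (summable_geom.comp_injective (add_left_injective (n+1)))
      _ = (1/3) * ((1:ℝ)/4)^(n+1) := by
          have : ∀ i : ℕ, ((1:ℝ)/4)^(i + (n+1) + 1) = ((1:ℝ)/4)^(i+1) * ((1:ℝ)/4)^(n+1) := by
            intro i; rw [← pow_add]; ring_nf
          simp_rw [this]
          rw [tsum_mul_right, tsum_geom_tail]
  rw [val, val, hf, hg, hsum f, hsum g, hpref, hfn, hgn]
  simp only [reduceIte, Bool.false_eq_true, if_false, if_true]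
  nlinarith [htail_f, htail_g, hpref]

lemma val_sep {f g : ℕ → Bool} {n : ℕ} (hne : f n ≠ g n)
    (hag : ∀ i < n, f i = g i) : (2/3) * ((1:ℝ)/4)^(n+1) ≤ |val f - val g| := by
  rcases Bool.eq_false_or_eq_true (f n) with hf | hf
  · have hg : g n = false := by
      cases hgn : g n
      · rfl
      · exact absurd (hf.trans hgn.symm) hne
    exact (val_sep_aux hf hg hag).trans (le_abs_self _)
  · have hg : g n = true := by
      cases hgn : g n
      · exact absurd (hf.trans hgn.symm) hne
      · rfl
    have h1 := val_sep_aux hg hf (fun i hi => (hag i hi).symm)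
    rw [abs_sub_comm]
    exact h1.trans (le_abs_self _)

lemma val_injective : Function.Injective val := by
  intro f g hfg
  by_contra hne
  have hex : ∃ n, f n ≠ g n := by
    by_contra h
    push_neg at h
    exact hne (funext h)
  classical
  have hn : f (Nat.find hex) ≠ g (Nat.find hex) := Nat.find_spec hex
  have hag : ∀ i < Nat.find hex, f i = g i := by
    intro i hi
    have := Nat.find_min hex hi
    exact not_ne_iff.mp this
  have hsep := val_sep hn hag
  rw [hfg, sub_self, abs_zero] at hsep
  have : (0:ℝ) < (2/3) * ((1:ℝ)/4)^(Nat.find hex + 1) := by positivity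
  linarith

lemma isClosedEmbedding_val : Topology.IsClosedEmbedding val :=
  Continuous.isClosedEmbedding continuous_val val_injective



/-! ### Topology of the Cantor space `ℕ → Bool` -/

lemma cylinder_mem_nhds (f : ℕ → Bool) (n : ℕ) :
    {g : ℕ → Bool | ∀ i < n, g i = f i} ∈ nhds f := by
  rw [nhds_pi, Filter.mem_pi]
  refine ⟨Set.Iio n, Set.finite_Iio n, fun i => {f i}, fun i => ?_, fun g hg i hi => ?_⟩
  · rw [nhds_discrete Bool]
    exact rfl
  · exact hg i hi

lemma mem_closure_iff_agree {S : Set (ℕ → Bool)} {f : ℕ → Bool} :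
    f ∈ closure S ↔ ∀ n, ∃ g ∈ S, ∀ i < n, g i = f i := by
  constructor
  · intro h n
    obtain ⟨g, hg1, hg2⟩ := mem_closure_iff_nhds.mp h _ (cylinder_mem_nhds f n)
    exact ⟨g, hg2, fun i hi => hg1 i hi⟩
  · intro H
    rw [mem_closure_iff_nhds]
    intro t ht
    rw [nhds_pi, Filter.mem_pi] at ht
    obtain ⟨I, hIfin, u, hu, hsub⟩ := ht
    obtain ⟨N, hN⟩ := hIfin.bddAbove
    obtain ⟨g, hgS, hg⟩ := H (N + 1)
    refine ⟨g, hsub fun i hi => ?_, hgS⟩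
    have : g i = f i := hg i (Nat.lt_succ_of_le (hN hi))
    rw [this]
    have := hu i
    rw [nhds_discrete Bool] at this
    exact this

/-- derived set definition unfolding for Cantor space -/
lemma mem_der_iff_agree {S : Set (ℕ → Bool)} {f : ℕ → Bool} :
    f ∈ der S ↔ ∀ n, ∃ g ∈ S, g ≠ f ∧ ∀ i < n, g i = f i := by
  show f ∈ closure (S \ {f}) ↔ _
  rw [mem_closure_iff_agree]
  constructor
  · intro H n
    obtain ⟨g, ⟨hgS, hgne⟩, hag⟩ := H n
    exact ⟨g, hgS, hgne, hag⟩
  · intro H n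
    obtain ⟨g, hgS, hgne, hag⟩ := H n
    exact ⟨g, ⟨hgS, hgne⟩, hag⟩

lemma closure_eq_union_der {X : Type*} [TopologicalSpace X] (S : Set X) :
    closure S = S ∪ der S := by
  apply Set.Subset.antisymm
  · intro x hx
    by_cases hxS : x ∈ S
    · exact Or.inl hxS
    · refine Or.inr ?_
      show x ∈ closure (S \ {x})
      have : S \ {x} = S := by
        ext y; simp only [Set.mem_diff, Set.mem_singleton_iff]
        exact ⟨fun h => h.1, fun h => ⟨h, fun he => hxS (he ▸ h)⟩⟩
      rwa [this]
  · rintro x (hx | hx)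
    · exact subset_closure hx
    · exact closure_mono diff_subset hx

/-! ### The combinatorial classes -/

def IsP (f : ℕ → Bool) : Prop := ∀ i, f i = true → i % 2 = 0

def IsSpr (f : ℕ → Bool) : Prop :=
  ∃ m, m % 4 = 1 ∧ f m = true ∧ ∀ i, f i = true → i = m ∨ (i < m ∧ i % 2 = 0)

def IsG (k s : ℕ) (f : ℕ → Bool) : Prop :=
  1 ≤ s ∧ s ≤ k ∧ ∃ S : Finset ℕ, S.card = s ∧ (∀ j ∈ S, j % 4 = 3 ∧ 2*k < j) ∧
    (∀ i, f i = true ↔ (i = 2*k ∨ i ∈ S))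

/-- members of the scattered levels -/
def MM (A : Set ℕ) (j : ℕ) : Set (ℕ → Bool) :=
  {f | IsP f ∨ ∃ k ∈ A, ∃ s, s + j ≤ k ∧ IsG k s f}

def ZHat (A : Set ℕ) : Set (ℕ → Bool) := {f | IsSpr f ∨ ∃ k ∈ A, IsG k k f}

def KHat (A : Set ℕ) : Set (ℕ → Bool) := {f | IsSpr f} ∪ MM A 0

def botF : ℕ → Bool := fun _ => false

noncomputable def pHat (k : ℕ) : ℕ → Bool := fun i => decide (i = 2*k)

/-! ### basic class facts -/

lemma IsG.two_k_mem {k s : ℕ} {f : ℕ → Bool} (h : IsG k s f) : f (2*k) = true := by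
  obtain ⟨_, _, S, _, _, hiff⟩ := h
  exact (hiff (2*k)).mpr (Or.inl rfl)

lemma not_isP_of_isG {k s : ℕ} {f : ℕ → Bool} (h : IsG k s f) : ¬ IsP f := by
  obtain ⟨hs, _, S, hcard, hodd, hiff⟩ := h
  intro hP
  have hS : S.Nonempty := Finset.card_pos.mp (hcard ▸ hs)
  obtain ⟨j, hj⟩ := hS
  have hj1 := hodd j hj
  have := hP j ((hiff j).mpr (Or.inr hj))
  omega

lemma not_isP_of_isSpr {f : ℕ → Bool} (h : IsSpr f) : ¬ IsP f := by
  obtain ⟨m, hm, hfm, _⟩ := h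
  intro hP
  have := hP m hfm
  omega

lemma not_isSpr_of_isG {k s : ℕ} {f : ℕ → Bool} (h : IsG k s f) : ¬ IsSpr f := by
  obtain ⟨hs, _, S, hcard, hodd, hiff⟩ := h
  rintro ⟨m, hm4, hfm, hall⟩
  rcases (hiff m).mp hfm with rfl | hmS
  · omega
  · have := hodd m hmS
    omega

lemma IsG.eq_of_eq {k s k' s' : ℕ} {f : ℕ → Bool} (h : IsG k s f) (h' : IsG k' s' f) :
    k = k' ∧ s = s' := by
  obtain ⟨hs, hsk, S, hcard, hodd, hiff⟩ := h
  obtain ⟨hs', hsk', S', hcard', hodd', hiff'⟩ := h'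
  have hkk : k = k' := by
    have h1 := (hiff' (2*k)).mp ((hiff (2*k)).mpr (Or.inl rfl))
    rcases h1 with h1 | h1
    · omega
    · have := (hodd' _ h1).1
      omega
  subst hkk
  have hSS : S = S' := by
    ext j
    constructor
    · intro hj
      have hj4 := hodd j hj
      rcases (hiff' j).mp ((hiff j).mpr (Or.inr hj)) with h1 | h1
      · omega
      · exact h1
    · intro hj
      have hj4 := hodd' j hj
      rcases (hiff j).mp ((hiff' j).mpr (Or.inr hj)) with h1 | h1
      · omega
      · exact h1
  subst hSS
  exact ⟨rfl, by omega⟩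

lemma MM_antitone {A : Set ℕ} {j j' : ℕ} (h : j ≤ j') : MM A j' ⊆ MM A j := by
  rintro f (hf | ⟨k, hk, s, hs, hG⟩)
  · exact Or.inl hf
  · exact Or.inr ⟨k, hk, s, by omega, hG⟩


lemma isP_witness {f : ℕ → Bool} (hf : IsP f) (n : ℕ) :
    ∃ g, IsP g ∧ g ≠ f ∧ ∀ i < n, g i = f i := by
  refine ⟨Function.update f (2*n) (!(f (2*n))), ?_, ?_, ?_⟩
  · intro i hi
    by_cases hieq : i = 2*n
    · omega
    · rw [Function.update_of_ne hieq] at hi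
      exact hf i hi
  · intro h
    have := congrFun h (2*n)
    rw [Function.update_self] at this
    exact (Bool.not_ne_self (f (2*n))) this
  · intro i hi
    have : i ≠ 2*n := by omega
    rw [Function.update_of_ne this]

lemma isG_succ_witness {k s : ℕ} {f : ℕ → Bool} (hf : IsG k s f) (hsk : s + 1 ≤ k) (n : ℕ) :
    ∃ g, IsG k (s+1) g ∧ g ≠ f ∧ ∀ i < n, g i = f i := by
  obtain ⟨hs, hsk', S, hcard, hodd, hiff⟩ := hf
  obtain ⟨B, hB⟩ := S.exists_le
  set p := 4*(n + 2*k + B + 1) + 3 with hp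
  have hp4 : p % 4 = 3 := by omega
  have hpk : 2*k < p := by omega
  have hpn : n ≤ p := by omega
  have hpS : p ∉ S := fun h => by have := hB p h; omega
  have hfp : f p = false := by
    cases hfp : f p
    · rfl
    · rcases (hiff p).mp hfp with h | h
      · omega
      · exact absurd h hpS
  refine ⟨Function.update f p true, ⟨by omega, hsk, insert p S, ?_, ?_, ?_⟩, ?_, ?_⟩
  · rw [Finset.card_insert_of_notMem hpS, hcard]
  · intro j hj
    rcases Finset.mem_insert.mp hj with rfl | hj
    · exact ⟨hp4, hpk⟩
    · exact hodd j hj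
  · intro i
    by_cases hieq : i = p
    · subst hieq
      rw [Function.update_self]
      simp [Finset.mem_insert]
    · rw [Function.update_of_ne hieq, hiff i, Finset.mem_insert]
      constructor
      · rintro (h | h)
        · exact Or.inl h
        · exact Or.inr (Or.inr h)
      · rintro (h | h | h)
        · exact Or.inl h
        · exact absurd h hieq
        · exact Or.inr h
  · intro h
    have := congrFun h p
    rw [Function.update_self, hfp] at this
    simp at this
  · intro i hi
    have : i ≠ p := by omega
    rw [Function.update_of_ne this]

lemma isP_approx_spr {f : ℕ → Bool} (hf : IsP f) (n : ℕ) :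
    ∃ g, IsSpr g ∧ ∀ i < n, g i = f i := by
  classical
  refine ⟨fun i => if i < n then f i else decide (i = 4*n+1), ⟨4*n+1, by omega, ?_, ?_⟩, ?_⟩
  · have : ¬ (4*n+1 < n) := by omega
    simp [this]
  · intro i hi
    by_cases hin : i < n
    · simp only [if_pos hin] at hi
      exact Or.inr ⟨by omega, hf i hi⟩
    · simp only [if_neg hin, decide_eq_true_eq] at hi
      exact Or.inl hi
  · intro i hi
    simp [if_pos hi]

lemma isG_mem_closure_ZHat_aux {A : Set ℕ} (k : ℕ) :
    ∀ d s (f : ℕ → Bool), k ∈ A → IsG k s f → s + d = k → f ∈ closure (ZHat A) := by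
  intro d
  induction d with
  | zero =>
      intro s f hk hf hsk
      have hsk2 : s = k := by omega
      exact subset_closure (Or.inr ⟨k, hk, hsk2 ▸ hf⟩)
  | succ d ih =>
      intro s f hk hf hsk
      have h1 : f ∈ closure {g | IsG k (s+1) g} := by
        rw [mem_closure_iff_agree]
        intro n
        obtain ⟨g, hg, _, hag⟩ := isG_succ_witness hf (by omega) n
        exact ⟨g, hg, hag⟩
      have h2 : {g | IsG k (s+1) g} ⊆ closure (ZHat A) := fun g hg => ih (s+1) g hk hg (by omega)
      have h3 : closure {g | IsG k (s+1) g} ⊆ closure (ZHat A) := by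
        calc closure {g | IsG k (s+1) g} ⊆ closure (closure (ZHat A)) := closure_mono h2
          _ = closure (ZHat A) := closure_closure
      exact h3 h1

lemma isG_mem_closure_ZHat {A : Set ℕ} {k s : ℕ} {f : ℕ → Bool}
    (hk : k ∈ A) (hf : IsG k s f) : f ∈ closure (ZHat A) :=
  isG_mem_closure_ZHat_aux k (k - s) s f hk hf (by have := hf.2.1; omega)


/-- The master analysis of accumulation points of our sets. -/
lemma der_bash {A : Set ℕ} {Q : ℕ → ℕ → Prop} {f : ℕ → Bool}
    (H : ∀ n, ∃ g, (IsP g ∨ IsSpr g ∨ ∃ k ∈ A, ∃ s, Q k s ∧ IsG k s g) ∧ g ≠ f ∧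
      ∀ i < n, g i = f i) :
    IsP f ∨ ∃ k ∈ A, ∃ s s', 1 ≤ s ∧ s < s' ∧ Q k s' ∧ IsG k s f := by
  classical
  by_cases hlane1 : ∃ m, f m = true ∧ m % 4 = 1
  · -- impossible: f would be an isolated sprinkle
    exfalso
    obtain ⟨m₁, hm₁, hm₁4⟩ := hlane1
    -- every large-window witness is a sprinkle with marker m₁
    have Wspr : ∀ n, m₁ < n → ∀ g, (IsP g ∨ IsSpr g ∨ ∃ k ∈ A, ∃ s, Q k s ∧ IsG k s g) →
        (∀ i < n, g i = f i) → (g m₁ = true ∧ ∀ i, g i = true → i = m₁ ∨ (i < m₁ ∧ i % 2 = 0)) := by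
      intro n hn g hgclass hag
      have hgm₁ : g m₁ = true := (hag m₁ hn).trans hm₁
      rcases hgclass with hP | hS | ⟨k, _, s, _, hG⟩
      · exact absurd (hP m₁ hgm₁) (by omega)
      · obtain ⟨m', hm'4, hgm', hall⟩ := hS
        have hmm : m' = m₁ := by
          rcases hall m₁ hgm₁ with h | h
          · omega
          · omega
        subst hmm
        exact ⟨hgm₁, hall⟩
      · obtain ⟨_, _, S, _, hodd, hiff⟩ := hG
        rcases (hiff m₁).mp hgm₁ with h | h
        · omega
        · have := (hodd m₁ h).1
          omega
    have hsupp : ∀ i, f i = true → i ≤ m₁ := by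
      intro i hi
      by_contra hgt
      push_neg at hgt
      obtain ⟨g, hgclass, hgne, hag⟩ := H (i+1)
      obtain ⟨_, hall⟩ := Wspr (i+1) (by omega) g hgclass hag
      have hgi : g i = true := (hag i (by omega)).trans hi
      rcases hall i hgi with h | h <;> omega
    obtain ⟨g, hgclass, hgne, hag⟩ := H (m₁+1)
    obtain ⟨hgm₁, hall⟩ := Wspr (m₁+1) (by omega) g hgclass hag
    apply hgne
    funext i
    by_cases hi : i < m₁ + 1
    · exact hag i hi
    · have hf : f i = false := by
        cases hfi : f i
        · rfl
        · have := hsupp i hfi; omega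
      have hg : g i = false := by
        cases hgi : g i
        · rfl
        · rcases hall i hgi with h | h <;> omega
      rw [hf, hg]
  by_cases hlane3 : ∃ m, f m = true ∧ m % 4 = 3
  · obtain ⟨m₃, hm₃, hm₃4⟩ := hlane3
    have W : ∀ n, m₃ < n → ∃ k s g, k ∈ A ∧ Q k s ∧ IsG k s g ∧ g ≠ f ∧ ∀ i < n, g i = f i := by
      intro n hn
      obtain ⟨g, hgclass, hgne, hag⟩ := H n
      have hgm₃ : g m₃ = true := (hag m₃ hn).trans hm₃
      rcases hgclass with hP | hS | ⟨k, hk, s, hQ, hG⟩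
      · exact absurd (hP m₃ hgm₃) (by omega)
      · obtain ⟨m', hm'4, _, hall⟩ := hS
        rcases hall m₃ hgm₃ with h | h <;> omega
      · exact ⟨k, s, g, hk, hQ, hG, hgne, hag⟩
    obtain ⟨k₀, s₀, g₀, hk₀A, hQ₀, hG₀, hg₀ne, hag₀⟩ := W (m₃+1) (by omega)
    have h2k₀ : 2*k₀ < m₃ := by
      obtain ⟨_, _, S₀, _, hodd₀, hiff₀⟩ := hG₀
      have hg₀m₃ : g₀ m₃ = true := (hag₀ m₃ (by omega)).trans hm₃
      rcases (hiff₀ m₃).mp hg₀m₃ with h | h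
      · omega
      · exact (hodd₀ m₃ h).2
    have hf2k₀ : f (2*k₀) = true := by
      rw [← hag₀ (2*k₀) (by omega)]
      exact hG₀.two_k_mem
    have W2 : ∀ n, m₃ < n → ∃ s g, Q k₀ s ∧ IsG k₀ s g ∧ g ≠ f ∧ ∀ i < n, g i = f i := by
      intro n hn
      obtain ⟨k, s, g, hkA, hQ, hG, hgne, hag⟩ := W n hn
      obtain ⟨hs1, hsk, S, hcard, hodd, hiff⟩ := hG
      have hg2k₀ : g (2*k₀) = true := (hag (2*k₀) (by omega)).trans hf2k₀
      have hkk : k = k₀ := by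
        rcases (hiff (2*k₀)).mp hg2k₀ with h | h
        · omega
        · have := (hodd _ h).1; omega
      subst hkk
      exact ⟨s, g, hQ, ⟨hs1, hsk, S, hcard, hodd, hiff⟩, hgne, hag⟩
    have hshape : ∀ i, f i = true → i = 2*k₀ ∨ (i % 4 = 3 ∧ 2*k₀ < i) := by
      intro i hi
      obtain ⟨s, g, hQ, hG, hgne, hag⟩ := W2 (m₃ + i + 1) (by omega)
      obtain ⟨_, _, S, _, hodd, hiff⟩ := hG
      have hgi : g i = true := (hag i (by omega)).trans hi
      rcases (hiff i).mp hgi with h | h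
      · exact Or.inl h
      · exact Or.inr (hodd i h)
    have hcard_bound : ∀ T : Finset ℕ, (∀ i ∈ T, f i = true ∧ i ≠ 2*k₀) → T.card ≤ k₀ := by
      intro T hT
      obtain ⟨B, hB⟩ := T.exists_le
      obtain ⟨s, g, hQ, hG, hgne, hag⟩ := W2 (m₃ + B + 1) (by omega)
      obtain ⟨hs1, hsk, S, hcard, hodd, hiff⟩ := hG
      have hTS : T ⊆ S := by
        intro i hiT
        obtain ⟨hif, hine⟩ := hT i hiT
        have hgi : g i = true := (hag i (by have := hB i hiT; omega)).trans hif
        rcases (hiff i).mp hgi with h | h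
        · exact absurd h hine
        · exact h
      calc T.card ≤ S.card := Finset.card_le_card hTS
        _ = s := hcard
        _ ≤ k₀ := hsk
    have hOfin : {i | f i = true ∧ i ≠ 2*k₀}.Finite := by
      by_contra hinf
      have hinf' : {i | f i = true ∧ i ≠ 2*k₀}.Infinite := hinf
      obtain ⟨T, hT, hcard⟩ := hinf'.exists_subset_card_eq (k₀+1)
      have := hcard_bound T (fun i hi => hT hi)
      omega
    set Sf := hOfin.toFinset with hSfdef
    have hSf_mem : ∀ i, i ∈ Sf ↔ (f i = true ∧ i ≠ 2*k₀) := by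
      intro i
      rw [hSfdef, Set.Finite.mem_toFinset]
      rfl
    have hm₃Sf : m₃ ∈ Sf := (hSf_mem m₃).mpr ⟨hm₃, by omega⟩
    have hcard1 : 1 ≤ Sf.card := Finset.card_pos.mpr ⟨m₃, hm₃Sf⟩
    have hcardk : Sf.card ≤ k₀ := hcard_bound Sf (fun i hi => (hSf_mem i).mp hi)
    have hGf : IsG k₀ Sf.card f := by
      refine ⟨hcard1, hcardk, Sf, rfl, ?_, ?_⟩
      · intro j hj
        obtain ⟨hjf, hjne⟩ := (hSf_mem j).mp hj
        rcases hshape j hjf with h | h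
        · exact absurd h hjne
        · exact h
      · intro i
        constructor
        · intro hi
          rcases hshape i hi with h | h
          · exact Or.inl h
          · exact Or.inr ((hSf_mem i).mpr ⟨hi, by omega⟩)
        · rintro (rfl | hi)
          · exact hf2k₀
          · exact ((hSf_mem i).mp hi).1
    obtain ⟨Bf, hBf⟩ := Sf.exists_le
    obtain ⟨s', g, hQ', hG', hgne, hag⟩ := W2 (m₃ + Bf + 2*k₀ + 1) (by omega)
    set n := m₃ + Bf + 2*k₀ + 1 with hndef
    obtain ⟨hs1', hsk', S', hcard', hodd', hiff'⟩ := hG'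
    have hSfS' : Sf ⊆ S' := by
      intro i hi
      obtain ⟨hif, hine⟩ := (hSf_mem i).mp hi
      have hgi : g i = true := (hag i (by have := hBf i hi; omega)).trans hif
      rcases (hiff' i).mp hgi with h | h
      · exact absurd h hine
      · exact h
    have hne_elem : ∃ i, i ∈ S' ∧ i ∉ Sf := by
      obtain ⟨i, hi⟩ := Function.ne_iff.mp hgne
      have hin : ¬ i < n := fun h => hi (hag i h)
      have hfi : f i = false := by
        cases hfi : f i
        · rfl
        · exfalso
          rcases hshape i hfi with h | h
          · omega
          · have : i ∈ Sf := (hSf_mem i).mpr ⟨hfi, by omega⟩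
            have := hBf i this
            omega
      have hgi : g i = true := by
        cases hgi : g i
        · exact absurd (hgi.trans hfi.symm) hi
        · rfl
      rcases (hiff' i).mp hgi with h | h
      · omega
      · refine ⟨i, h, fun hiSf => ?_⟩
        have := hBf i hiSf
        omega
    have hstrict : Sf.card < s' := by
      rw [← hcard']
      obtain ⟨i, hiS', hiSf⟩ := hne_elem
      exact Finset.card_lt_card ⟨hSfS', fun hsub => hiSf (hsub hiS')⟩
    exact Or.inr ⟨k₀, hk₀A, Sf.card, s', hcard1, hstrict, hQ', hGf⟩
  · left
    intro i hi
    push_neg at hlane1 hlane3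
    have h1 := hlane1 i hi
    have h3 := hlane3 i hi
    omega


lemma der_subset {A : Set ℕ} {Q : ℕ → ℕ → Prop} {X : Set (ℕ → Bool)}
    (hX : X ⊆ {g | IsP g ∨ IsSpr g ∨ ∃ k ∈ A, ∃ s, Q k s ∧ IsG k s g}) :
    der X ⊆ {f | IsP f ∨ ∃ k ∈ A, ∃ s s', 1 ≤ s ∧ s < s' ∧ Q k s' ∧ IsG k s f} := by
  intro f hf
  rw [mem_der_iff_agree] at hf
  refine der_bash (fun n => ?_)
  obtain ⟨g, hg, hne, hag⟩ := hf n
  exact ⟨g, hX hg, hne, hag⟩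

lemma der_MM {A : Set ℕ} (j : ℕ) : der (MM A j) = MM A (j+1) := by
  apply Set.Subset.antisymm
  · intro f hf
    have h1 := der_subset (A := A) (Q := fun k s => s + j ≤ k) (X := MM A j) ?_ hf
    · rcases h1 with h | ⟨k, hk, s, s', hs1, hss', hQ, hG⟩
      · exact Or.inl h
      · exact Or.inr ⟨k, hk, s, by omega, hG⟩
    · rintro g (hg | ⟨k, hk, s, hs, hG⟩)
      · exact Or.inl hg
      · exact Or.inr (Or.inr ⟨k, hk, s, hs, hG⟩)
  · rintro f (hf | ⟨k, hk, s, hs, hG⟩)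
    · rw [mem_der_iff_agree]
      intro n
      obtain ⟨g, hgP, hne, hag⟩ := isP_witness hf n
      exact ⟨g, Or.inl hgP, hne, hag⟩
    · rw [mem_der_iff_agree]
      intro n
      obtain ⟨g, hgG, hne, hag⟩ := isG_succ_witness hG (by omega) n
      exact ⟨g, Or.inr ⟨k, hk, s+1, by omega, hgG⟩, hne, hag⟩

lemma der_KHat {A : Set ℕ} : der (KHat A) = MM A 1 := by
  apply Set.Subset.antisymm
  · intro f hf
    have h1 := der_subset (A := A) (Q := fun k s => s ≤ k) (X := KHat A) ?_ hf
    · rcases h1 with h | ⟨k, hk, s, s', hs1, hss', hQ, hG⟩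
      · exact Or.inl h
      · exact Or.inr ⟨k, hk, s, by omega, hG⟩
    · rintro g (hg | hg | ⟨k, hk, s, hs, hG⟩)
      · exact Or.inr (Or.inl hg)
      · exact Or.inl hg
      · exact Or.inr (Or.inr ⟨k, hk, s, hG.2.1, hG⟩)
  · intro f hf
    have : f ∈ der (MM A 0) := by rw [der_MM]; exact MM_antitone (by omega) hf
    rw [mem_der_iff_agree] at this ⊢
    intro n
    obtain ⟨g, hg, hne, hag⟩ := this n
    exact ⟨g, Or.inr hg, hne, hag⟩

lemma der_iter_KHat {A : Set ℕ} (j : ℕ) : der^[j+1] (KHat A) = MM A (j+1) := by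
  induction j with
  | zero => simpa using der_KHat
  | succ n ih =>
      rw [Function.iterate_succ_apply', ih, der_MM]

lemma ddd_KHat {A : Set ℕ} : ddd (KHat A) = {f | IsP f} := by
  apply Set.Subset.antisymm
  · intro f hf
    have hmem : ∀ j : ℕ, f ∈ MM A (j+1) := by
      intro j
      have := Set.mem_iInter.mp hf j
      rwa [der_iter_KHat] at this
    rcases hmem 0 with h | ⟨k, hk, s, hs, hG⟩
    · exact h
    · exfalso
      rcases hmem (k+1) with h | ⟨k', hk', s', hs', hG'⟩
      · exact not_isP_of_isG hG h
      · obtain ⟨hkk, hss⟩ := hG'.eq_of_eq hG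
        omega
  · intro f hf
    apply Set.mem_iInter.mpr
    intro j
    rw [der_iter_KHat]
    exact Or.inl hf

lemma pure_bash {A : Set ℕ} {Q : ℕ → ℕ → Prop} {f : ℕ → Bool} (hfP : IsP f)
    (H : ∀ n, ∃ g, (∃ k ∈ A, ∃ s, Q k s ∧ IsG k s g) ∧ ∀ i < n, g i = f i) :
    f = botF ∨ ∃ k ∈ A, (∃ s, Q k s) ∧ f = pHat k := by
  classical
  by_cases hbot : ∀ i, f i = false
  · exact Or.inl (funext hbot)
  · push_neg at hbot
    obtain ⟨e, he⟩ := hbot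
    have hfe : f e = true := by
      cases hfe : f e
      · exact absurd hfe he
      · rfl
    have heven : e % 2 = 0 := hfP e hfe
    -- pin k for any witness with window beyond e
    have pin : ∀ g, (∃ k ∈ A, ∃ s, Q k s ∧ IsG k s g) → g e = true →
        ∃ k ∈ A, (∃ s, Q k s) ∧ e = 2*k ∧ (∀ i, g i = true → i % 2 = 1 ∨ i = e) := by
      rintro g ⟨k, hk, s, hQ, hG⟩ hge
      obtain ⟨_, _, S, _, hodd, hiff⟩ := hG
      have hek : e = 2*k := by
        rcases (hiff e).mp hge with h | h
        · exact h
        · have := (hodd e h).1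
          omega
      refine ⟨k, hk, ⟨s, hQ⟩, hek, fun i hi => ?_⟩
      rcases (hiff i).mp hi with h | h
      · right; omega
      · left
        have := (hodd i h).1
        omega
    obtain ⟨g₀, hg₀cl, hag₀⟩ := H (e+1)
    have hg₀e : g₀ e = true := (hag₀ e (by omega)).trans hfe
    obtain ⟨k, hk, hQk, hek, _⟩ := pin g₀ hg₀cl hg₀e
    refine Or.inr ⟨k, hk, hQk, funext fun i => ?_⟩
    show f i = pHat k i
    by_cases hie : i = e
    · subst hie
      rw [hfe]
      simp [pHat, hek]
    · have hfi : f i = false := by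
        cases hfi : f i
        · rfl
        · exfalso
          obtain ⟨g, hgcl, hag⟩ := H (e + i + 1)
          have hge : g e = true := (hag e (by omega)).trans hfe
          obtain ⟨k', _, _, hek', hall⟩ := pin g hgcl hge
          have hgi : g i = true := (hag i (by omega)).trans hfi
          rcases hall i hgi with h | h
          · have := hfP i hfi
            omega
          · exact hie h
      rw [hfi]
      have : i ≠ 2*k := by omega
      simp [pHat, this]

lemma mkG_isG {k p : ℕ} (hp : p % 4 = 3) (hpk : 2*k < p) (hk : 1 ≤ k) :
    IsG k 1 (fun i => decide (i = 2*k) || decide (i = p)) := by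
  refine ⟨le_refl 1, hk, {p}, Finset.card_singleton p, ?_, ?_⟩
  · intro j hj
    rw [Finset.mem_singleton] at hj
    subst hj
    exact ⟨hp, hpk⟩
  · intro i
    simp [Finset.mem_singleton]

lemma MM_diff_isP {A : Set ℕ} (j : ℕ) :
    MM A j \ {f | IsP f} = {f | ∃ k ∈ A, ∃ s, s + j ≤ k ∧ IsG k s f} := by
  ext f
  constructor
  · rintro ⟨hf | hf, hnP⟩
    · exact absurd hf hnP
    · exact hf
  · rintro ⟨k, hk, s, hs, hG⟩
    exact ⟨Or.inr ⟨k, hk, s, hs, hG⟩, not_isP_of_isG hG⟩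

/-- the key marker-set computation -/
lemma ttt_KHat {A : Set ℕ} (hAinf : A.Infinite) (j : ℕ) (hj : 1 ≤ j) :
    {f | IsP f} ∩ closure (MM A j \ {f | IsP f}) =
    {f | f = botF ∨ ∃ k ∈ A, j+1 ≤ k ∧ f = pHat k} := by
  rw [MM_diff_isP]
  apply Set.Subset.antisymm
  · rintro f ⟨hfP, hfc⟩
    rw [mem_closure_iff_agree] at hfc
    have := pure_bash (A := A) (Q := fun k s => 1 ≤ s ∧ s + j ≤ k) hfP ?_
    · rcases this with h | ⟨k, hk, ⟨s, hs1, hsj⟩, hfp⟩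
      · exact Or.inl h
      · exact Or.inr ⟨k, hk, by omega, hfp⟩
    · intro n
      obtain ⟨g, ⟨k, hk, s, hs, hG⟩, hag⟩ := hfc n
      exact ⟨g, ⟨k, hk, s, ⟨hG.1, hs⟩, hG⟩, hag⟩
  · rintro f (rfl | ⟨k, hk, hjk, rfl⟩)
    · refine ⟨fun i hi => by simp [botF] at hi, ?_⟩
      rw [mem_closure_iff_agree]
      intro n
      obtain ⟨k, hk, hnk⟩ := hAinf.exists_gt (n + j)
      set p := 4*(n + k) + 3 with hp
      refine ⟨fun i => decide (i = 2*k) || decide (i = p), ⟨k, hk, 1, by omega,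
        mkG_isG (by omega) (by omega) (by omega)⟩, ?_⟩
      intro i hi
      have h1 : i ≠ 2*k := by omega
      have h2 : i ≠ p := by omega
      simp [h1, h2, botF]
    · refine ⟨fun i hi => by simp only [pHat, decide_eq_true_eq] at hi; omega, ?_⟩
      rw [mem_closure_iff_agree]
      intro n
      set p := 4*(n + 2*k) + 3 with hp
      refine ⟨fun i => decide (i = 2*k) || decide (i = p), ⟨k, hk, 1, by omega,
        mkG_isG (by omega) (by omega) (by omega)⟩, ?_⟩
      intro i hi
      have h2 : i ≠ p := by omega
      simp [pHat, h2]

lemma closure_ZHat {A : Set ℕ} (hA2 : ∀ k ∈ A, 2 ≤ k) : closure (ZHat A) = KHat A := by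
  apply Set.Subset.antisymm
  · rw [closure_eq_union_der]
    rintro f (hf | hf)
    · rcases hf with hf | ⟨k, hk, hG⟩
      · exact Or.inl hf
      · exact Or.inr (Or.inr ⟨k, hk, k, by omega, hG⟩)
    · have h1 := der_subset (A := A) (Q := fun k s => s = k) (X := ZHat A) ?_ hf
      · rcases h1 with h | ⟨k, hk, s, s', hs1, hss', hQ, hG⟩
        · exact Or.inr (Or.inl h)
        · exact Or.inr (Or.inr ⟨k, hk, s, by omega, hG⟩)
      · rintro g (hg | ⟨k, hk, hG⟩)
        · exact Or.inr (Or.inl hg)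
        · exact Or.inr (Or.inr ⟨k, hk, k, rfl, hG⟩)
  · rintro f (hf | hf | ⟨k, hk, s, hs, hG⟩)
    · exact subset_closure (Or.inl hf)
    · rw [mem_closure_iff_agree]
      intro n
      obtain ⟨g, hgS, hag⟩ := isP_approx_spr hf n
      exact ⟨g, Or.inl hgS, hag⟩
    · exact isG_mem_closure_ZHat hk hG


lemma bool_eq_of_iff {a b : Bool} (h : a = true ↔ b = true) : a = b := by
  cases a <;> cases b <;> simp_all

lemma zhat_isolated {A : Set ℕ} {f : ℕ → Bool} (hf : f ∈ ZHat A) :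
    ∃ N, ∀ g ∈ ZHat A, (∀ i < N, g i = f i) → g = f := by
  rcases hf with ⟨m, hm4, hfm, hall⟩ | ⟨k, hk, hG⟩
  · -- sprinkle with marker m
    refine ⟨m+1, fun g hg hag => ?_⟩
    have hgm : g m = true := (hag m (by omega)).trans hfm
    rcases hg with ⟨m', hm'4, hgm', hall'⟩ | ⟨k', _, hG'⟩
    · have hmm : m' = m := by
        rcases hall' m hgm with h | h <;> omega
      subst hmm
      funext i
      by_cases hi : i < m' + 1
      · exact hag i hi
      · have hfi : f i = false := by
          cases hfi : f i
          · rfl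
          · rcases hall i hfi with h | h <;> omega
        have hgi : g i = false := by
          cases hgi : g i
          · rfl
          · rcases hall' i hgi with h | h <;> omega
        rw [hfi, hgi]
    · exfalso
      obtain ⟨_, _, S', _, hodd', hiff'⟩ := hG'
      rcases (hiff' m).mp hgm with h | h
      · omega
      · have := (hodd' m h).1
        omega
  · -- gadget top
    obtain ⟨hs1, hsk, S, hcard, hodd, hiff⟩ := hG
    obtain ⟨B, hB⟩ := S.exists_le
    refine ⟨B + 2*k + 1, fun g hg hag => ?_⟩
    have hf2k : f (2*k) = true := (hiff (2*k)).mpr (Or.inl rfl)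
    have hg2k : g (2*k) = true := (hag (2*k) (by omega)).trans hf2k
    obtain ⟨j₀, hj₀⟩ := Finset.card_pos.mp (hcard ▸ hs1)
    have hj₀4 := hodd j₀ hj₀
    have hfj₀ : f j₀ = true := (hiff j₀).mpr (Or.inr hj₀)
    have hgj₀ : g j₀ = true := (hag j₀ (by have := hB j₀ hj₀; omega)).trans hfj₀
    rcases hg with ⟨m', hm'4, hgm', hall'⟩ | ⟨k', hk', hG'⟩
    · exfalso
      rcases hall' j₀ hgj₀ with h | h <;> omega
    · obtain ⟨hs1', hsk', S', hcard', hodd', hiff'⟩ := hG'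
      have hkk : k' = k := by
        rcases (hiff' (2*k)).mp hg2k with h | h
        · omega
        · have := (hodd' _ h).1
          omega
      subst hkk
      have hSS' : S ⊆ S' := by
        intro j hj
        have hfj : f j = true := (hiff j).mpr (Or.inr hj)
        have hgj : g j = true := (hag j (by have := hB j hj; omega)).trans hfj
        rcases (hiff' j).mp hgj with h | h
        · have := (hodd j hj).1
          omega
        · exact h
      have hSeq : S' = S := by
        apply (Finset.eq_of_subset_of_card_le hSS' ?_).symm
        rw [hcard, hcard']
      funext i
      apply bool_eq_of_iff
      rw [hiff' i, hiff i, hSeq]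

def topG (k : ℕ) : ℕ → Bool :=
  fun i => decide (i = 2*k) || decide (i ∈ (Finset.range k).image (fun t => 4*(k+t)+3))

lemma topG_isG {k : ℕ} (hk : 1 ≤ k) : IsG k k (topG k) := by
  have hinj : Function.Injective (fun t => 4*(k+t)+3) := by
    intro a b h
    simp only at h
    omega
  refine ⟨hk, le_refl k, (Finset.range k).image (fun t => 4*(k+t)+3), ?_, ?_, ?_⟩
  · rw [Finset.card_image_of_injective _ hinj, Finset.card_range]
  · intro j hj
    simp only [Finset.mem_image, Finset.mem_range] at hj
    obtain ⟨t, ht, rfl⟩ := hj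
    constructor
    · omega
    · omega
  · intro i
    simp [topG]

lemma topG_mem_iff {A : Set ℕ} {k : ℕ} (hk : 1 ≤ k) : topG k ∈ ZHat A ↔ k ∈ A := by
  constructor
  · rintro (hS | ⟨k', hk', hG'⟩)
    · exact absurd hS (not_isSpr_of_isG (topG_isG hk))
    · obtain ⟨h1, _⟩ := hG'.eq_of_eq (topG_isG hk)
      rwa [← h1]
  · intro hkA
    exact Or.inr ⟨k, hkA, topG_isG hk⟩

def sprK (n : ℕ) : ℕ → Bool := fun i => decide (i = 4*n+1)

lemma sprK_mem (A : Set ℕ) (n : ℕ) : sprK n ∈ ZHat A := by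
  refine Or.inl ⟨4*n+1, by omega, by simp [sprK], ?_⟩
  intro i hi
  simp only [sprK, decide_eq_true_eq] at hi
  exact Or.inl hi

lemma sprK_injective : Function.Injective sprK := by
  intro a b h
  by_contra hne
  have h1 : sprK a (4*a+1) = true := by simp [sprK]
  rw [h] at h1
  simp only [sprK, decide_eq_true_eq] at h1
  omega

lemma ZHat_infinite (A : Set ℕ) : (ZHat A).Infinite :=
  Set.infinite_of_injective_forall_mem sprK_injective (sprK_mem A)


noncomputable def ZZ (A : Set ℕ) : Set ℝ := val '' (ZHat A)

lemma ZZ_subset_Icc (A : Set ℕ) : ZZ A ⊆ Set.Icc (0:ℝ) 1 := by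
  rintro _ ⟨f, _, rfl⟩
  exact ⟨val_nonneg f, (val_le f).trans (by norm_num)⟩

lemma ZZ_infinite (A : Set ℕ) : (ZZ A).Infinite :=
  (ZHat_infinite A).image (val_injective.injOn)

lemma ZZ_discrete (A : Set ℕ) : DiscreteTopology ↥(ZZ A) := by
  rw [discreteTopology_iff_isOpen_singleton]
  intro a
  obtain ⟨f, hfZ, hvf⟩ := a.2
  obtain ⟨N, hN⟩ := zhat_isolated hfZ
  set ε := (2/3) * ((1:ℝ)/4)^N with hε
  have hεpos : 0 < ε := by positivity
  have hsep : ∀ g ∈ ZHat A, g ≠ f → ε ≤ |val g - val f| := by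
    intro g hg hgne
    have hdiff : ∃ i, g i ≠ f i := Function.ne_iff.mp hgne
    classical
    have hfind := Nat.find_spec hdiff
    set i₀ := Nat.find hdiff with hi₀
    have hag : ∀ i < i₀, g i = f i := fun i hi => not_ne_iff.mp (Nat.find_min hdiff hi)
    have hi₀N : i₀ < N := by
      by_contra hge
      push_neg at hge
      exact hgne (hN g hg (fun i hi => hag i (by omega)))
    calc ε ≤ (2/3) * ((1:ℝ)/4)^(i₀+1) := by
          rw [hε]
          apply mul_le_mul_of_nonneg_left _ (by norm_num)
          apply pow_le_pow_of_le_one (by norm_num) (by norm_num) (by omega)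
      _ ≤ |val g - val f| := val_sep hfind hag
  have hset : {a} = (Subtype.val : ↥(ZZ A) → ℝ) ⁻¹' Metric.ball (a : ℝ) ε := by
    ext b
    simp only [Set.mem_singleton_iff, Set.mem_preimage, Metric.mem_ball]
    constructor
    · rintro rfl
      simpa using hεpos
    · intro hb
      obtain ⟨g, hgZ, hvg⟩ := b.2
      apply Subtype.ext
      show (b : ℝ) = (a : ℝ)
      by_contra hne
      have hgf : g ≠ f := by
        intro hgf
        apply hne
        rw [← hvg, ← hvf, hgf]
      have := hsep g hgZ hgf
      rw [hvg, hvf] at this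
      rw [Real.dist_eq] at hb
      rw [← hvg, ← hvf] at hne
      have habs : |(b:ℝ) - (a:ℝ)| = |val g - val f| := by rw [← hvg, ← hvf]
      rw [habs] at hb
      linarith
  rw [hset]
  exact Metric.isOpen_ball.preimage continuous_subtype_val

lemma pHat_ne_botF (k : ℕ) : pHat k ≠ botF := by
  intro h
  have := congrFun h (2*k)
  simp [pHat, botF] at this

lemma pHat_injective : Function.Injective pHat := by
  intro a b h
  have h1 : pHat b (2*a) = true := by
    rw [← h]
    simp [pHat]
  simp only [pHat, decide_eq_true_eq] at h1
  omega

lemma detector_cantor {A : Set ℕ} (j : ℕ) :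
    ({f : ℕ → Bool | f = botF ∨ ∃ k ∈ A, j+1 ≤ k ∧ f = pHat k} =
     {f : ℕ → Bool | f = botF ∨ ∃ k ∈ A, j+1+1 ≤ k ∧ f = pHat k}) ↔ (j+1) ∉ A := by
  constructor
  · intro heq hjA
    have h1 : pHat (j+1) ∈ {f : ℕ → Bool | f = botF ∨ ∃ k ∈ A, j+1 ≤ k ∧ f = pHat k} :=
      Or.inr ⟨j+1, hjA, le_refl _, rfl⟩
    rw [heq] at h1
    rcases h1 with h | ⟨k, hk, hjk, hpk⟩
    · exact pHat_ne_botF _ h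
    · have := pHat_injective hpk
      omega
  · intro hjA
    ext f
    simp only [Set.mem_setOf_eq]
    constructor
    · rintro (h | ⟨k, hk, hjk, rfl⟩)
      · exact Or.inl h
      · refine Or.inr ⟨k, hk, ?_, rfl⟩
        rcases Nat.eq_or_lt_of_le hjk with h | h
        · exact absurd (h ▸ hk) hjA
        · omega
    · rintro (h | ⟨k, hk, hjk, rfl⟩)
      · exact Or.inl h
      · exact Or.inr ⟨k, hk, by omega, rfl⟩

lemma ttt_closure_ZZ {A : Set ℕ} (hAinf : A.Infinite) (hA2 : ∀ k ∈ A, 2 ≤ k)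
    (j : ℕ) (hj : 1 ≤ j) :
    ttt (closure (ZZ A)) j = val '' {f | f = botF ∨ ∃ k ∈ A, j+1 ≤ k ∧ f = pHat k} := by
  have hcl : closure (ZZ A) = val '' KHat A := by
    rw [ZZ, ← emb_closure isClosedEmbedding_val, closure_ZHat hA2]
  rw [hcl, ← emb_ttt isClosedEmbedding_val]
  have hKT : ttt (KHat A) j = {f | f = botF ∨ ∃ k ∈ A, j+1 ≤ k ∧ f = pHat k} := by
    show ddd (KHat A) ∩ closure (der^[j] (KHat A) \ ddd (KHat A)) = _
    obtain ⟨j', rfl⟩ : ∃ j', j = j' + 1 := ⟨j - 1, by omega⟩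
    rw [ddd_KHat, der_iter_KHat]
    exact ttt_KHat hAinf (j'+1) (by omega)
  rw [hKT]

lemma main_eq_of_unif {A B : Set ℕ} (hA : A.Infinite ∧ ∀ k ∈ A, 2 ≤ k)
    (hB : B.Infinite ∧ ∀ k ∈ B, 2 ≤ k)
    (Φ : ↥(ZZ A) ≃ ↥(ZZ B)) (hΦ : UniformContinuous ⇑Φ)
    (hΦ' : UniformContinuous ⇑Φ.symm) : A = B := by
  have h := extHomeo Φ hΦ hΦ'
  have eA : IsClosedEmbedding (Subtype.val : ↥(closure (ZZ A)) → ℝ) :=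
    isClosed_closure.isClosedEmbedding_subtypeVal
  have eB : IsClosedEmbedding (Subtype.val : ↥(closure (ZZ B)) → ℝ) :=
    isClosed_closure.isClosedEmbedding_subtypeVal
  have hh : IsClosedEmbedding ⇑h := h.isClosedEmbedding
  have keyA : ∀ j, ttt (closure (ZZ A)) j
      = Subtype.val '' (ttt (Set.univ : Set ↥(closure (ZZ A))) j) := by
    intro j
    rw [emb_ttt eA, Set.image_univ, Subtype.range_coe]
  have keyB : ∀ j, ttt (closure (ZZ B)) j
      = Subtype.val '' (ttt (Set.univ : Set ↥(closure (ZZ B))) j) := by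
    intro j
    rw [emb_ttt eB, Set.image_univ, Subtype.range_coe]
  have keyh : ∀ j, ttt (Set.univ : Set ↥(closure (ZZ B))) j
      = ⇑h '' (ttt (Set.univ : Set ↥(closure (ZZ A))) j) := by
    intro j
    rw [emb_ttt hh, Set.image_univ, Set.range_eq_univ.mpr h.surjective]
  have htrans : ∀ j j', (ttt (closure (ZZ A)) j = ttt (closure (ZZ A)) j')
      ↔ (ttt (closure (ZZ B)) j = ttt (closure (ZZ B)) j') := by
    intro j j'
    rw [keyA, keyA, keyB, keyB, keyh, keyh,
      Set.image_eq_image eA.injective, Set.image_eq_image eB.injective,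
      Set.image_eq_image hh.injective]
  ext k
  by_cases hk2 : 2 ≤ k
  · obtain ⟨j, rfl⟩ : ∃ j, k = (j + 1) + 1 := ⟨k - 2, by omega⟩
    have hdA : ((j+1)+1) ∈ A ↔
        ¬ (ttt (closure (ZZ A)) (j+1) = ttt (closure (ZZ A)) ((j+1)+1)) := by
      rw [ttt_closure_ZZ hA.1 hA.2 (j+1) (by omega),
        ttt_closure_ZZ hA.1 hA.2 ((j+1)+1) (by omega),
        Set.image_eq_image val_injective, detector_cantor (j+1)]
      tauto
    have hdB : ((j+1)+1) ∈ B ↔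
        ¬ (ttt (closure (ZZ B)) (j+1) = ttt (closure (ZZ B)) ((j+1)+1)) := by
      rw [ttt_closure_ZZ hB.1 hB.2 (j+1) (by omega),
        ttt_closure_ZZ hB.1 hB.2 ((j+1)+1) (by omega),
        Set.image_eq_image val_injective, detector_cantor (j+1)]
      tauto
    rw [hdA, hdB, htrans]
  · constructor
    · intro hk
      exact absurd (hA.2 k hk) hk2
    · intro hk
      exact absurd (hB.2 k hk) hk2



def famA : Set (Set ℕ) := {A | A.Infinite ∧ ∀ k ∈ A, 2 ≤ k}

lemma ZZ_injOn : Set.InjOn ZZ famA := by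
  intro A hA B hB hZZ
  by_contra hne
  have hex : ∃ k, (k ∈ A ∧ k ∉ B) ∨ (k ∈ B ∧ k ∉ A) := by
    by_contra hno
    push_neg at hno
    apply hne
    ext k
    have := hno k
    tauto
  obtain ⟨k, hk | hk⟩ := hex
  · have hk1 : 1 ≤ k := by have := hA.2 k hk.1; omega
    have h1 : val (topG k) ∈ ZZ A := ⟨topG k, (topG_mem_iff hk1).mpr hk.1, rfl⟩
    rw [hZZ] at h1
    obtain ⟨g, hg, hvg⟩ := h1
    rw [val_injective hvg] at hg
    exact hk.2 ((topG_mem_iff hk1).mp hg)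
  · have hk1 : 1 ≤ k := by have := hB.2 k hk.1; omega
    have h1 : val (topG k) ∈ ZZ B := ⟨topG k, (topG_mem_iff hk1).mpr hk.1, rfl⟩
    rw [← hZZ] at h1
    obtain ⟨g, hg, hvg⟩ := h1
    rw [val_injective hvg] at hg
    exact hk.2 ((topG_mem_iff hk1).mp hg)

def encA (B : Set ℕ) : Set ℕ := {n | (∃ b ∈ B, n = 2*b+4) ∨ ∃ c, n = 2*c+5}

lemma encA_mem_famA (B : Set ℕ) : encA B ∈ famA := by
  constructor
  · apply Set.infinite_of_injective_forall_mem (f := fun c : ℕ => 2*c+5)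
    · intro a b h
      simp only at h
      omega
    · intro c
      exact Or.inr ⟨c, rfl⟩
  · rintro k (⟨b, _, rfl⟩ | ⟨c, rfl⟩) <;> omega

lemma encA_spec (B : Set ℕ) (b : ℕ) : 2*b+4 ∈ encA B ↔ b ∈ B := by
  constructor
  · rintro (⟨b', hb', heq⟩ | ⟨c, heq⟩)
    · have : b = b' := by omega
      rwa [this]
    · omega
  · intro hb
    exact Or.inl ⟨b, hb, rfl⟩

lemma encA_injective : Function.Injective encA := by
  intro B B' h
  ext b
  rw [← encA_spec B b, ← encA_spec B' b, h]

lemma mk_famA : Cardinal.mk ↥famA = Cardinal.continuum := by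
  apply le_antisymm
  · calc Cardinal.mk ↥famA ≤ Cardinal.mk (Set ℕ) := Cardinal.mk_subtype_le _
      _ = 2 ^ Cardinal.aleph0 := by rw [Cardinal.mk_set, Cardinal.mk_nat]
      _ = Cardinal.continuum := Cardinal.two_power_aleph0
  · have hinj : Function.Injective (fun B : Set ℕ => (⟨encA B, encA_mem_famA B⟩ : ↥famA)) := by
      intro B B' h
      exact encA_injective (congrArg Subtype.val h)
    calc Cardinal.continuum = 2 ^ Cardinal.aleph0 := Cardinal.two_power_aleph0.symm
      _ = Cardinal.mk (Set ℕ) := by rw [Cardinal.mk_set, Cardinal.mk_nat]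
      _ ≤ Cardinal.mk ↥famA := Cardinal.mk_le_of_injective hinj

lemma mk_F : Cardinal.mk ↥(ZZ '' famA) = Cardinal.continuum := by
  rw [Cardinal.mk_image_eq_of_injOn ZZ famA ZZ_injOn, mk_famA]

end S9

/-- There is a family of infinite discrete subsets of `[0,1]`,
of cardinality continuum, such that between distinct members there is no
bijection that is uniformly continuous in both directions. -/
theorem stmt_9 :
    ∃ 𝓕 : Set (Set ℝ),
      Cardinal.mk 𝓕 = Cardinal.continuum ∧
      (∀ Z ∈ 𝓕, Z ⊆ Set.Icc (0 : ℝ) 1) ∧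
      (∀ Z ∈ 𝓕, Z.Infinite) ∧
      (∀ Z ∈ 𝓕, DiscreteTopology ↥Z) ∧
      (∀ Z ∈ 𝓕, ∀ W ∈ 𝓕, Z ≠ W →
        ¬ ∃ f : ↥Z ≃ ↥W, UniformContinuous ⇑f ∧ UniformContinuous ⇑f.symm) := by
  refine ⟨S9.ZZ '' S9.famA, S9.mk_F, ?_, ?_, ?_, ?_⟩
  · rintro Z ⟨A, hA, rfl⟩
    exact S9.ZZ_subset_Icc A
  · rintro Z ⟨A, hA, rfl⟩
    exact S9.ZZ_infinite A
  · rintro Z ⟨A, hA, rfl⟩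
    exact S9.ZZ_discrete A
  · rintro Z ⟨A, hA, rfl⟩ W ⟨B, hB, rfl⟩ hne ⟨Φ, hΦ, hΦ'⟩
    exact hne (congrArg S9.ZZ (S9.main_eq_of_unif hA hB Φ hΦ hΦ'))
end

section
/- There exists a family of infinite, closed, discrete subsets of ℝ such that the family has the cardinality of the continuum and for any two distinct members A, B of the family there is no bijection f : A → B with both f and f⁻¹ uniformly continuous with respect to the Euclidean metric. -/
namespace S10

noncomputable section

def a (r : ℕ → Bool) (k : ℕ) : ℕ := 4*k + 4 + (if r (Nat.unpair k).1 then 2 else 0)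

def s (r : ℕ → Bool) (k : ℕ) : ℝ := ((2:ℝ) ^ (k + a r k))⁻¹

def blk (r : ℕ → Bool) (k : ℕ) : Set ℝ := (fun j : ℕ => 2*(k:ℝ) + (j:ℝ) * s r k) '' Set.Iio (a r k)

def A (r : ℕ → Bool) : Set ℝ := ⋃ k, blk r k

lemma a_lb (r : ℕ → Bool) (k : ℕ) : 4*k+4 ≤ a r k := by unfold a; split <;> omega
lemma a_ub (r : ℕ → Bool) (k : ℕ) : a r k ≤ 4*k+6 := by unfold a; split <;> omega
lemma a_pos (r : ℕ → Bool) (k : ℕ) : 0 < a r k := by have := a_lb r k; omega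

lemma s_pos (r : ℕ → Bool) (k : ℕ) : 0 < s r k := by
  unfold s; positivity

lemma as_le (r : ℕ → Bool) (k : ℕ) : (a r k : ℝ) * s r k ≤ ((2:ℝ)^k)⁻¹ := by
  unfold s
  rw [pow_add, mul_inv]
  have h1 : (a r k : ℝ) * ((2:ℝ)^(a r k))⁻¹ ≤ 1 := by
    rw [mul_inv_le_iff₀ (by positivity), one_mul]
    exact_mod_cast (Nat.lt_two_pow_self (n := a r k)).le
  have h2 : (0:ℝ) < ((2:ℝ)^k)⁻¹ := by positivity
  nlinarith

lemma mem_blk_bounds {r : ℕ → Bool} {k : ℕ} {x : ℝ} (hx : x ∈ blk r k) :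
    2*(k:ℝ) ≤ x ∧ x < 2*(k:ℝ) + 1 := by
  obtain ⟨j, hj, rfl⟩ := hx
  have hs := s_pos r k
  have hja : (j:ℝ) < (a r k : ℝ) := by exact_mod_cast hj
  have h1 : (j:ℝ) * s r k < (a r k : ℝ) * s r k := by
    exact mul_lt_mul_of_pos_right hja hs
  have h2 : ((2:ℝ)^k)⁻¹ ≤ 1 := by
    rw [inv_le_one_iff₀]; right; exact one_le_pow₀ one_le_two
  have h3 := as_le r k
  refine ⟨?_, ?_⟩
  · show 2*(k:ℝ) ≤ 2*(k:ℝ) + (j:ℝ) * s r k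
    nlinarith [mul_nonneg (Nat.cast_nonneg j) hs.le]
  · show 2*(k:ℝ) + (j:ℝ) * s r k < 2*(k:ℝ) + 1
    nlinarith

lemma blk_diam {r : ℕ → Bool} {k : ℕ} {x y : ℝ} (hx : x ∈ blk r k) (hy : y ∈ blk r k) :
    |x - y| < ((2:ℝ)^k)⁻¹ := by
  obtain ⟨j, hj, rfl⟩ := hx
  obtain ⟨j', hj', rfl⟩ := hy
  have hs := s_pos r k
  have hja : (j:ℝ) < (a r k : ℝ) := by exact_mod_cast hj
  have hja' : (j':ℝ) < (a r k : ℝ) := by exact_mod_cast hj'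
  have h3 := as_le r k
  have hj0 : (0:ℝ) ≤ (j:ℝ) * s r k := by positivity
  have hj0' : (0:ℝ) ≤ (j':ℝ) * s r k := by positivity
  rw [abs_sub_lt_iff]
  constructor <;> nlinarith

lemma blk_sep' {r : ℕ → Bool} {k k' : ℕ} {x y : ℝ} (hkk : k < k')
    (hx : x ∈ blk r k) (hy : y ∈ blk r k') : 1 ≤ y - x := by
  have h1 := (mem_blk_bounds hx).2
  have h2 := (mem_blk_bounds hy).1
  have : (k:ℝ) + 1 ≤ (k':ℝ) := by exact_mod_cast hkk
  linarith

lemma blk_sep {r : ℕ → Bool} {k k' : ℕ} {x y : ℝ} (hkk : k ≠ k')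
    (hx : x ∈ blk r k) (hy : y ∈ blk r k') : 1 ≤ |x - y| := by
  rcases lt_or_gt_of_ne hkk with h | h
  · have := blk_sep' h hx hy
    rw [abs_sub_comm]; exact this.trans (le_abs_self _)
  · have := blk_sep' h hy hx
    exact this.trans (le_abs_self _)

lemma mem_blk_unique {r : ℕ → Bool} {k k' : ℕ} {x : ℝ}
    (hx : x ∈ blk r k) (hx' : x ∈ blk r k') : k = k' := by
  by_contra hne
  have := blk_sep hne hx hx'
  simp at this
  linarith

lemma base_mem_blk (r : ℕ → Bool) (k : ℕ) : 2*(k:ℝ) ∈ blk r k :=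
  ⟨0, a_pos r k, by simp⟩

lemma base_mem_A (r : ℕ → Bool) (k : ℕ) : 2*(k:ℝ) ∈ A r :=
  Set.mem_iUnion.2 ⟨k, base_mem_blk r k⟩

lemma blk_finite (r : ℕ → Bool) (k : ℕ) : (blk r k).Finite :=
  (Set.finite_Iio _).image _

lemma blk_ncard (r : ℕ → Bool) (k : ℕ) : (blk r k).ncard = a r k := by
  have hinj : Set.InjOn (fun j : ℕ => 2*(k:ℝ) + (j:ℝ) * s r k) (Set.Iio (a r k)) := by
    intro j1 _ j2 _ h
    simp only at h
    have hs := (s_pos r k).ne'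
    have h' : (j1:ℝ) * s r k = (j2:ℝ) * s r k := by linarith
    have := mul_right_cancel₀ hs h'
    exact_mod_cast this
  rw [blk, Set.ncard_image_of_injOn hinj]
  have : (Set.Iio (a r k)) = ↑(Finset.Iio (a r k)) := by ext; simp
  rw [this, Set.ncard_coe_finset, Nat.card_Iio]

lemma A_infinite (r : ℕ → Bool) : (A r).Infinite := by
  apply Set.infinite_of_injective_forall_mem (f := fun k : ℕ => 2*(k:ℝ))
  · intro k k' h
    simp only at h
    have : (k:ℝ) = (k':ℝ) := by linarith
    exact_mod_cast this
  · intro k; exact base_mem_A r k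

lemma A_locallyFinite (r : ℕ → Bool) : LocallyFinite (blk r) := by
  intro x
  refine ⟨Metric.ball x 1, Metric.ball_mem_nhds x one_pos, ?_⟩
  obtain ⟨N, hN⟩ := exists_nat_ge ((x+1)/2)
  apply Set.Finite.subset (Set.finite_Iio N)
  rintro k ⟨y, hy, hyb⟩
  have h1 := (mem_blk_bounds hy).1
  rw [Metric.mem_ball, Real.dist_eq] at hyb
  have h2 : y - x < 1 := (le_abs_self _).trans_lt hyb
  have : 2*(k:ℝ) < 2*(N:ℝ) := by linarith
  have : (k:ℝ) < (N:ℝ) := by linarith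
  exact_mod_cast this

lemma A_closed (r : ℕ → Bool) : IsClosed (A r) :=
  (A_locallyFinite r).isClosed_iUnion fun k => (blk_finite r k).isClosed

lemma isolated {r : ℕ → Bool} {x : ℝ} (hx : x ∈ A r) :
    ∃ ε > 0, ∀ y ∈ A r, |y - x| < ε → y = x := by
  obtain ⟨k, hk⟩ := Set.mem_iUnion.1 hx
  refine ⟨min (s r k) 1, lt_min (s_pos r k) one_pos, fun y hy hlt => ?_⟩
  obtain ⟨k', hk'⟩ := Set.mem_iUnion.1 hy
  have hkk : k' = k := by
    by_contra hne
    have := blk_sep hne hk' hk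
    have := min_le_right (s r k) 1
    linarith
  subst hkk
  obtain ⟨j, hj, rfl⟩ := hk
  obtain ⟨j', hj', rfl⟩ := hk'
  have hs := s_pos r k'
  have hd : |(j':ℝ) - (j:ℝ)| * s r k' < s r k' := by
    have : (2*(k':ℝ) + (j':ℝ) * s r k') - (2*(k':ℝ) + (j:ℝ) * s r k')
        = ((j':ℝ) - (j:ℝ)) * s r k' := by ring
    rw [this] at hlt
    rw [abs_mul, abs_of_pos hs] at hlt
    exact hlt.trans_le (min_le_left _ _)
  have hj1 : |(j':ℝ) - (j:ℝ)| < 1 := by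
    by_contra hcon
    push_neg at hcon
    nlinarith
  rw [abs_lt] at hj1
  have : j' = j := by
    have h1 : (j':ℝ) < (j:ℝ) + 1 := by linarith
    have h2 : (j:ℝ) < (j':ℝ) + 1 := by linarith
    have h1' : j' < j + 1 := by exact_mod_cast h1
    have h2' : j < j' + 1 := by exact_mod_cast h2
    omega
  rw [this]

lemma A_discrete (r : ℕ → Bool) : DiscreteTopology ↥(A r) := by
  rw [discreteTopology_iff_nhds]
  intro x
  refine le_antisymm (Filter.le_pure_iff.2 ?_) (pure_le_nhds x)
  obtain ⟨ε, hε, hiso⟩ := isolated x.2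
  rw [mem_nhds_subtype]
  refine ⟨Metric.ball (x:ℝ) ε, Metric.ball_mem_nhds _ hε, fun y hy => ?_⟩
  rw [Set.mem_preimage, Metric.mem_ball, Real.dist_eq] at hy
  exact Subtype.ext (hiso y.1 y.2 hy)

/-- A uniformly continuous bijection maps sufficiently small blocks into blocks. -/
lemma map_blk {r r' : ℕ → Bool} (f : ↥(A r) ≃ ↥(A r')) {δ : ℝ}
    (hδ : ∀ ⦃x y : ↥(A r)⦄, dist x y < δ → dist (f x) (f y) < 1)
    {k : ℕ} (hk : ((2:ℝ)^k)⁻¹ ≤ δ) :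
    ∃ i, ∀ (x : ↥(A r)), (x:ℝ) ∈ blk r k → ((f x : ℝ)) ∈ blk r' i := by
  set x₀ : ↥(A r) := ⟨2*(k:ℝ), base_mem_A r k⟩ with hx₀
  obtain ⟨i, hi⟩ := Set.mem_iUnion.1 (f x₀).2
  refine ⟨i, fun x hx => ?_⟩
  obtain ⟨i', hi'⟩ := Set.mem_iUnion.1 (f x).2
  suffices h : i' = i by rw [← h]; exact hi'
  by_contra hne
  have h1 : dist x x₀ < δ := by
    rw [Subtype.dist_eq, Real.dist_eq]
    exact lt_of_lt_of_le (blk_diam hx (base_mem_blk r k)) hk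
  have h2 := hδ h1
  have h3 := blk_sep hne hi' hi
  rw [Subtype.dist_eq, Real.dist_eq] at h2
  linarith

lemma card_le {r r' : ℕ → Bool} (f : ↥(A r) ≃ ↥(A r')) {k i : ℕ}
    (h : ∀ (x : ↥(A r)), (x:ℝ) ∈ blk r k → ((f x : ℝ)) ∈ blk r' i) :
    a r k ≤ a r' i := by
  classical
  rw [← blk_ncard r k, ← blk_ncard r' i]
  refine Set.ncard_le_ncard_of_injOn
    (fun y => if hy : y ∈ A r then ((f ⟨y, hy⟩ : ↥(A r')) : ℝ) else 0) ?_ ?_ (blk_finite r' i)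
  · intro y hy
    have hyA : y ∈ A r := Set.mem_iUnion.2 ⟨k, hy⟩
    rw [dif_pos hyA]
    exact h ⟨y, hyA⟩ hy
  · intro y1 hy1 y2 hy2 heq
    have h1 : y1 ∈ A r := Set.mem_iUnion.2 ⟨k, hy1⟩
    have h2 : y2 ∈ A r := Set.mem_iUnion.2 ⟨k, hy2⟩
    simp only at heq
    rw [dif_pos h1, dif_pos h2] at heq
    have : f ⟨y1, h1⟩ = f ⟨y2, h2⟩ := Subtype.ext heq
    have := f.injective this
    exact congrArg Subtype.val this

lemma pow_inv_le {K k : ℕ} (h : K ≤ k) : ((2:ℝ)^k)⁻¹ ≤ ((2:ℝ)^K)⁻¹ := by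
  apply inv_anti₀ (by positivity)
  exact pow_le_pow_right₀ one_le_two h

lemma main {r r' : ℕ → Bool} (f : ↥(A r) ≃ ↥(A r'))
    (hf : UniformContinuous ⇑f) (hg : UniformContinuous ⇑f.symm) : r = r' := by
  obtain ⟨δ, δpos, hδ⟩ := Metric.uniformContinuous_iff.1 hf 1 one_pos
  obtain ⟨η, ηpos, hη⟩ := Metric.uniformContinuous_iff.1 hg 1 one_pos
  obtain ⟨K, hK⟩ : ∃ K : ℕ, ((2:ℝ)^K)⁻¹ ≤ δ := by
    obtain ⟨K, hK⟩ := pow_unbounded_of_one_lt δ⁻¹ (one_lt_two (α := ℝ))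
    exact ⟨K, (inv_le_comm₀ δpos (by positivity)).1 hK.le⟩
  obtain ⟨K', hK'⟩ : ∃ K' : ℕ, ((2:ℝ)^K')⁻¹ ≤ η := by
    obtain ⟨K', hK'⟩ := pow_unbounded_of_one_lt η⁻¹ (one_lt_two (α := ℝ))
    exact ⟨K', (inv_le_comm₀ ηpos (by positivity)).1 hK'.le⟩
  funext n
  set k := Nat.pair n (K + K') with hkdef
  have hkb : K + K' ≤ k := Nat.right_le_pair n (K + K')
  have hkK : ((2:ℝ)^k)⁻¹ ≤ δ := (pow_inv_le (by omega)).trans hK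
  obtain ⟨i, hi⟩ := map_blk f hδ hkK
  have hcard1 : a r k ≤ a r' i := card_le f hi
  have hik : k ≤ i := by have := a_lb r k; have := a_ub r' i; omega
  have hiK' : ((2:ℝ)^i)⁻¹ ≤ η := (pow_inv_le (by omega)).trans hK'
  obtain ⟨j, hj⟩ := map_blk f.symm hη hiK'
  have hjk : j = k := by
    set x₀ : ↥(A r) := ⟨2*(k:ℝ), base_mem_A r k⟩ with hx₀
    have h1 : ((f x₀ : ℝ)) ∈ blk r' i := hi x₀ (base_mem_blk r k)
    have h2 : ((f.symm (f x₀) : ℝ)) ∈ blk r j := hj (f x₀) h1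
    rw [f.symm_apply_apply] at h2
    exact mem_blk_unique h2 (base_mem_blk r k)
  have hcard2 : a r' i ≤ a r k := by
    have := card_le f.symm (k := i) (i := j) hj
    rwa [hjk] at this
  have heq : a r k = a r' i := le_antisymm hcard1 hcard2
  have hki : k = i := by
    have h1 := a_lb r k; have h2 := a_ub r k
    have h3 := a_lb r' i; have h4 := a_ub r' i
    unfold a at heq
    split_ifs at heq <;> omega
  unfold a at heq
  rw [← hki] at heq
  rw [hkdef, Nat.unpair_pair] at heq
  simp only at heq
  split_ifs at heq with h1 h2 h2
  · rw [h1, h2]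
  · omega
  · omega
  · rw [Bool.eq_false_iff.2 h1, Bool.eq_false_iff.2 h2]

lemma A_injective : Function.Injective A := by
  intro r r' h
  refine main (Equiv.setCongr h) ?_ ?_ <;>
  · rw [Metric.uniformContinuous_iff]
    intro ε hε
    exact ⟨ε, hε, fun x y hxy => by
      rwa [Subtype.dist_eq] at hxy ⊢⟩

end
end S10

/-- There is a family of infinite, closed, discrete subsets of `ℝ`,
of cardinality continuum, such that between distinct members there is no bijection
that is uniformly continuous in both directions. -/
theorem stmt_10 :
    ∃ 𝓕 : Set (Set ℝ),
      Cardinal.mk 𝓕 = Cardinal.continuum ∧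
      (∀ A ∈ 𝓕, A.Infinite) ∧
      (∀ A ∈ 𝓕, IsClosed A) ∧
      (∀ A ∈ 𝓕, DiscreteTopology ↥A) ∧
      (∀ A ∈ 𝓕, ∀ B ∈ 𝓕, A ≠ B →
        ¬ ∃ f : ↥A ≃ ↥B, UniformContinuous ⇑f ∧ UniformContinuous ⇑f.symm) := by
  refine ⟨Set.range S10.A, ?_, ?_, ?_, ?_, ?_⟩
  · rw [Cardinal.mk_range_eq _ S10.A_injective]
    have : Cardinal.mk (ℕ → Bool) = 2 ^ Cardinal.aleph0 := by
      rw [Cardinal.mk_arrow]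
      simp
    rw [this, Cardinal.two_power_aleph0]
  · rintro A ⟨r, rfl⟩; exact S10.A_infinite r
  · rintro A ⟨r, rfl⟩; exact S10.A_closed r
  · rintro A ⟨r, rfl⟩; exact S10.A_discrete r
  · rintro A ⟨r, rfl⟩ B ⟨r', rfl⟩ hne ⟨f, hf, hg⟩
    exact hne (congrArg S10.A (S10.main f hf hg))
end

section
/- Let X be a countably infinite discrete topological space. Then there exists a family, of the cardinality of the continuum, of pairwise non-homeomorphic compact metrizable topological spaces K, each of cardinality continuum, such that each K contains a dense subspace homeomorphic to X (i.e., each K is a metrizable compactification of X). -/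
open Set Topology Filter Metric

noncomputable section
namespace Stmt11

variable {Y Z : Type*} [TopologicalSpace Y] [TopologicalSpace Z]

/-- Points whose connected component is nondegenerate. -/
def deg (Y : Type*) [TopologicalSpace Y] : Set Y := {y | connectedComponent y ≠ {y}}

def tset (y : Y) : Set Y :=
  connectedComponent y ∩ closure (deg Y \ connectedComponent y)

/-- The invariant: set of possible finite nonzero cardinalities of `tset`. -/
def invar (Y : Type*) [TopologicalSpace Y] : Set ℕ :=
  {m | 1 ≤ m ∧ ∃ y : Y, (tset y).ncard = m}

lemma image_connectedComponent (h : Y ≃ₜ Z) (y : Y) :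
    h '' connectedComponent y = connectedComponent (h y) := by
  apply subset_antisymm
  · exact (isPreconnected_connectedComponent.image _ h.continuous.continuousOn).subset_connectedComponent
      ⟨y, mem_connectedComponent, rfl⟩
  · intro z hz
    have h2 : h.symm '' connectedComponent (h y) ⊆ connectedComponent y := by
      refine (isPreconnected_connectedComponent.image _
        h.symm.continuous.continuousOn).subset_connectedComponent ⟨h y, mem_connectedComponent, by simp⟩
    refine ⟨h.symm z, h2 ⟨z, hz, rfl⟩, by simp⟩

lemma mem_deg_iff (h : Y ≃ₜ Z) (y : Y) : h y ∈ deg Z ↔ y ∈ deg Y := by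
  simp only [deg, mem_setOf_eq, ← image_connectedComponent h y, not_iff_not]
  constructor
  · intro hz
    apply subset_antisymm
    · intro w hw
      have : h w ∈ h '' connectedComponent y := ⟨w, hw, rfl⟩
      rw [hz] at this
      simpa [h.injective.eq_iff] using this
    · simp [mem_connectedComponent]
  · intro hy; rw [hy]; simp

lemma image_deg (h : Y ≃ₜ Z) : h '' deg Y = deg Z := by
  ext z
  constructor
  · rintro ⟨y, hy, rfl⟩; exact (mem_deg_iff h y).2 hy
  · intro hz
    refine ⟨h.symm z, ?_, by simp⟩
    have := (mem_deg_iff h (h.symm z)).1 (by simpa using hz)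
    exact this

lemma image_tset (h : Y ≃ₜ Z) (y : Y) : h '' tset y = tset (h y) := by
  unfold tset
  rw [Set.image_inter h.injective, h.image_closure, Set.image_diff h.injective,
    image_deg h, image_connectedComponent h]

lemma invar_subset (h : Y ≃ₜ Z) : invar Y ⊆ invar Z := by
  intro m hm
  obtain ⟨h1, y, hy⟩ := hm
  refine ⟨h1, h y, ?_⟩
  rw [← image_tset h y, Set.ncard_image_of_injective _ h.injective, hy]

lemma invar_congr (h : Y ≃ₜ Z) : invar Y = invar Z :=
  subset_antisymm (invar_subset h) (invar_subset h.symm)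

/-- A countable preconnected set of reals is a subsingleton. -/
lemma subsingleton_of_countable_preconnected {s : Set ℝ} (hc : s.Countable)
    (hp : IsPreconnected s) : s.Subsingleton := by
  intro a ha b hb
  by_contra hab
  rcases lt_or_gt_of_ne hab with hlt | hlt
  · have : Icc a b ⊆ s := hp.Icc_subset ha hb
    have h2 : (Icc a b).Countable := hc.mono this
    have h3 := Cardinal.mk_le_aleph0_iff.2 h2.to_subtype
    rw [Cardinal.mk_Icc_real hlt] at h3
    exact absurd h3 (not_le.2 Cardinal.aleph0_lt_continuum)
  · have : Icc b a ⊆ s := hp.Icc_subset hb ha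
    have h2 : (Icc b a).Countable := hc.mono this
    have h3 := Cardinal.mk_le_aleph0_iff.2 h2.to_subtype
    rw [Cardinal.mk_Icc_real hlt] at h3
    exact absurd h3 (not_le.2 Cardinal.aleph0_lt_continuum)

/-! ### The construction -/

def v (n : ℕ) : ℝ := (1/2 : ℝ)^n

lemma v_pos (n : ℕ) : 0 < v n := by simp only [v]; positivity
lemma v_le_one (n : ℕ) : v n ≤ 1 :=
  pow_le_one₀ (by norm_num) (by norm_num)
lemma v_anti {m n : ℕ} (h : m < n) : v n < v m :=
  pow_lt_pow_right_of_lt_one₀ (by norm_num) (by norm_num) h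
lemma v_le_of_le {m n : ℕ} (h : m ≤ n) : v n ≤ v m := by
  rcases h.lt_or_eq with h | h
  · exact (v_anti h).le
  · rw [h]
lemma v_succ (n : ℕ) : v (n+1) = v n / 2 := by
  simp [v, pow_succ]; ring
lemma v_inj {m n : ℕ} (h : v m = v n) : m = n := by
  rcases lt_trichotomy m n with hl | hl | hl
  · exact absurd h (v_anti hl).ne'
  · exact hl
  · exact absurd h (v_anti hl).ne

def tt (n i : ℕ) : ℝ := (i+1)/(n+1)

lemma tt_pos (n i : ℕ) : 0 < tt n i := by simp only [tt]; positivity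
lemma tt_le_one {n i : ℕ} (h : i ≤ n) : tt n i ≤ 1 := by
  rw [tt, div_le_one (by positivity)]
  have : (i:ℝ) ≤ n := Nat.cast_le.2 h
  linarith
lemma tt_inj {n i j : ℕ} (h : tt n i = tt n j) : i = j := by
  simp only [tt] at h
  have hn : ((n:ℝ)+1) ≠ 0 := by positivity
  field_simp at h
  exact Nat.succ_injective (by exact_mod_cast h)

def cc (n i : ℕ) : ℝ := v n * (2*i+1) / (8*(n+1))

lemma cc_pos (n i : ℕ) : 0 < cc n i := by
  have := v_pos n
  simp only [cc]
  positivity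
lemma cc_lt {n i : ℕ} (h : i ≤ n) : cc n i < v n / 4 := by
  rw [cc, div_lt_div_iff₀ (by positivity) (by norm_num)]
  have h1 : (i:ℝ) ≤ n := Nat.cast_le.2 h
  have := v_pos n
  nlinarith

def xo (n i k : ℕ) : ℝ := v n + cc n i * v k

lemma xo_mem {n i k : ℕ} (h : i ≤ n) : xo n i k ∈ Ioo (v n) ((5/4) * v n) := by
  have h1 := cc_pos n i
  have h2 := cc_lt h
  have h3 := v_pos k
  have h4 := v_le_one k
  have h5 := v_pos n
  constructor
  · have : 0 < cc n i * v k := by positivity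
    simp only [xo]; linarith
  · have : cc n i * v k ≤ cc n i := by
      nlinarith
    simp only [xo]; nlinarith

lemma strips_lt {n n' : ℕ} (h : n < n') : (5/4) * v n' < v n := by
  have h1 : v n' ≤ v (n+1) := v_le_of_le h
  rw [v_succ] at h1
  have := v_pos n
  linarith

lemma v_not_mem_strip {m n : ℕ} : v m ∉ Ioo (v n) ((5/4) * v n) := by
  intro ⟨h1, h2⟩
  rcases lt_trichotomy m n with hl | hl | hl
  · have := strips_lt hl
    have := v_pos m
    nlinarith [v_anti hl]
  · subst hl; exact lt_irrefl _ h1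
  · exact absurd h1 (v_anti hl).le.not_gt

lemma zero_not_mem_strip {n : ℕ} : (0:ℝ) ∉ Ioo (v n) ((5/4) * v n) := by
  intro ⟨h1, _⟩
  exact absurd h1 (v_pos n).le.not_gt

lemma v_eq (k : ℕ) : v k = ((2:ℝ)^k)⁻¹ := by
  simp [v, one_div, inv_pow]

lemma nat_odd_dyadic {a b c : ℕ} (h : (2*a+1) * 2^c = 2*b+1) : c = 0 ∧ a = b := by
  rcases Nat.eq_zero_or_pos c with hc | hc
  · subst hc; simp at h; omega
  · obtain ⟨d, hd⟩ : 2 ∣ 2^c := dvd_pow_self 2 hc.ne'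
    rw [hd] at h
    exfalso
    have he : 2 ∣ (2*a+1) * (2*d) := ⟨(2*a+1)*d, by ring⟩
    rw [h] at he
    omega

lemma odd_dyadic_inj {i k i' k' : ℕ} (h : ((2*i+1 : ℕ) : ℝ) * v k = ((2*i'+1 : ℕ) : ℝ) * v k') :
    i = i' ∧ k = k' := by
  rw [v_eq, v_eq] at h
  have h2 : ((2*i+1 : ℕ) : ℝ) * 2^k' = ((2*i'+1 : ℕ) : ℝ) * 2^k := by
    field_simp at h
    push_cast at h ⊢
    linear_combination h
  have h3 : ((2*i+1) * 2^k' : ℕ) = ((2*i'+1) * 2^k : ℕ) := by exact_mod_cast h2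
  rcases le_total k k' with hk | hk
  · obtain ⟨d, rfl⟩ := Nat.exists_eq_add_of_le hk
    have h5 : (2*i+1) * 2^d = 2*i'+1 := by
      rw [pow_add] at h3
      apply Nat.eq_of_mul_eq_mul_left (Nat.two_pow_pos k)
      calc 2^k * ((2*i+1)*2^d) = (2*i+1) * (2^k * 2^d) := by ring
        _ = (2*i'+1) * 2^k := h3
        _ = 2^k * (2*i'+1) := by ring
    obtain ⟨hd0, hii⟩ := nat_odd_dyadic h5
    exact ⟨hii, by omega⟩
  · obtain ⟨d, rfl⟩ := Nat.exists_eq_add_of_le hk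
    have h5 : (2*i'+1) * 2^d = 2*i+1 := by
      rw [pow_add] at h3
      apply Nat.eq_of_mul_eq_mul_left (Nat.two_pow_pos k')
      calc 2^k' * ((2*i'+1)*2^d) = (2*i'+1) * (2^k' * 2^d) := by ring
        _ = (2*i+1) * 2^k' := h3.symm
        _ = 2^k' * (2*i+1) := by ring
    obtain ⟨hd0, hii⟩ := nat_odd_dyadic h5
    exact ⟨hii.symm, by omega⟩

/-! ### The pieces -/

def JJ : Set (ℝ×ℝ) := {0} ×ˢ Icc (0:ℝ) 1
def V (n : ℕ) : Set (ℝ×ℝ) := {v n} ×ˢ Icc (0:ℝ) 1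
def Qs : Set ℝ := insert 0 (range v)
def φ (n i : ℕ) (q : ℝ×ℝ) : ℝ×ℝ := (v n + cc n i * q.1, tt n i - q.1 * q.2 / (4*(n+1)))
def D (n i : ℕ) : Set (ℝ×ℝ) := φ n i '' (Qs ×ˢ Icc (0:ℝ) 1)
def ED (n i k : ℕ) : Set (ℝ×ℝ) := {xo n i k} ×ˢ Icc (tt n i - v k/(4*(n+1))) (tt n i)
def C (A : Set ℕ) (n : ℕ) : Set (ℝ×ℝ) := V n ∪ ⋃ (i : Fin (n+1)) (_ : n ∈ A), D n (i:ℕ)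
def M (A : Set ℕ) : Set (ℝ×ℝ) := JJ ∪ ⋃ n, C A n

lemma tendsto_v : Tendsto v atTop (𝓝 0) :=
  tendsto_pow_atTop_nhds_zero_of_lt_one (by norm_num) (by norm_num)

lemma isCompact_Qs : IsCompact Qs := tendsto_v.isCompact_insert_range

lemma Qs_subset : Qs ⊆ Icc (0:ℝ) 1 := by
  rintro x (rfl | ⟨k, rfl⟩)
  · exact ⟨le_refl 0, by norm_num⟩
  · exact ⟨(v_pos k).le, v_le_one k⟩

lemma continuous_φ (n i : ℕ) : Continuous (φ n i) := by
  unfold φ; fun_prop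

lemma isCompact_D (n i : ℕ) : IsCompact (D n i) :=
  ((isCompact_Qs.prod isCompact_Icc).image (continuous_φ n i))

lemma isCompact_V (n : ℕ) : IsCompact (V n) := isCompact_singleton.prod isCompact_Icc

lemma isCompact_JJ : IsCompact JJ := isCompact_singleton.prod isCompact_Icc

lemma isCompact_C (A : Set ℕ) (n : ℕ) : IsCompact (C A n) := by
  refine (isCompact_V n).union (isCompact_iUnion fun i => ?_)
  exact isCompact_iUnion fun _ => isCompact_D n i

lemma mem_D_iff {p : ℝ×ℝ} {n i : ℕ} :
    p ∈ D n i ↔ ∃ s ∈ Qs, ∃ y ∈ Icc (0:ℝ) 1, p = φ n i (s, y) := by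
  constructor
  · rintro ⟨⟨s, y⟩, ⟨hs, hy⟩, rfl⟩
    exact ⟨s, hs, y, hy, rfl⟩
  · rintro ⟨s, hs, y, hy, rfl⟩
    exact ⟨(s, y), ⟨hs, hy⟩, rfl⟩

lemma phi_snd_le {n i : ℕ} {s y : ℝ} (hs0 : 0 ≤ s) (hy0 : 0 ≤ y) :
    tt n i - s*y/(4*(n+1)) ≤ tt n i := by
  have : (0:ℝ) ≤ s*y/(4*(n+1)) := by positivity
  linarith

lemma phi_snd_nonneg {n i : ℕ} {s y : ℝ} (hs : s ∈ Icc (0:ℝ) 1) (hy : y ∈ Icc (0:ℝ) 1) :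
    0 ≤ tt n i - s*y/(4*(n+1)) := by
  have hn : (0:ℝ) < (n:ℝ)+1 := by positivity
  have h1 : s*y ≤ 1 := by nlinarith [hs.1, hs.2, hy.1, hy.2]
  have h2 : s*y/(4*((n:ℝ)+1)) ≤ 1/(4*((n:ℝ)+1)) := by
    gcongr
  have h3 : 1/(4*((n:ℝ)+1)) ≤ tt n i := by
    rw [tt, div_le_div_iff₀ (by positivity) hn]
    have : (1:ℝ) ≤ (i:ℝ)+1 := by
      have := Nat.cast_nonneg (α := ℝ) i
      linarith
    nlinarith
  linarith

lemma D_subset_strip {n i : ℕ} (h : i ≤ n) :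
    D n i ⊆ Icc (v n) ((5/4) * v n) ×ˢ Icc (0:ℝ) 1 := by
  rintro p hp
  rw [mem_D_iff] at hp
  obtain ⟨s, hs, y, hy, rfl⟩ := hp
  obtain ⟨hs0, hs1⟩ := Qs_subset hs
  have hcc := cc_pos n i
  have hccl := cc_lt h
  have hvn := v_pos n
  refine ⟨⟨?_, ?_⟩, ?_, ?_⟩
  · simp only [φ]; nlinarith
  · simp only [φ]; nlinarith
  · exact phi_snd_nonneg ⟨hs0, hs1⟩ hy
  · exact (phi_snd_le hs0 hy.1).trans (tt_le_one h)

lemma V_subset_strip (n : ℕ) : V n ⊆ Icc (v n) ((5/4) * v n) ×ˢ Icc (0:ℝ) 1 := by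
  rintro ⟨x, y⟩ ⟨hx, hy⟩
  simp only [mem_singleton_iff] at hx
  subst hx
  exact ⟨⟨le_refl _, by nlinarith [v_pos n]⟩, hy⟩

lemma C_subset_strip (A : Set ℕ) (n : ℕ) :
    C A n ⊆ Icc (v n) ((5/4) * v n) ×ˢ Icc (0:ℝ) 1 := by
  rintro p (hp | hp)
  · exact V_subset_strip n hp
  · simp only [mem_iUnion] at hp
    obtain ⟨i, _, hp⟩ := hp
    exact D_subset_strip (Nat.lt_succ_iff.1 i.2) hp

lemma closure_iUnionC_subset (A : Set ℕ) : closure (⋃ n, C A n) ⊆ (⋃ n, C A n) ∪ JJ := by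
  intro p hp
  by_cases hmem : p ∈ ⋃ n, C A n
  · exact Or.inl hmem
  right
  have key : ∀ N : ℕ, p ∈ (⋃ n ∈ Finset.range N, C A n) ∪ (Icc 0 ((5/4) * v N) ×ˢ Icc (0:ℝ) 1) := by
    intro N
    have hsub : (⋃ n, C A n) ⊆ (⋃ n ∈ Finset.range N, C A n) ∪ (Icc 0 ((5/4) * v N) ×ˢ Icc (0:ℝ) 1) := by
      intro q hq
      obtain ⟨n, hn⟩ := mem_iUnion.1 hq
      rcases lt_or_ge n N with hlt | hge
      · left
        simp only [mem_iUnion]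
        exact ⟨n, Finset.mem_range.2 hlt, hn⟩
      · right
        obtain ⟨⟨ha, hb⟩, hc⟩ := C_subset_strip A n hn
        refine ⟨⟨(v_pos n).le.trans ha, hb.trans ?_⟩, hc⟩
        have := v_le_of_le hge
        linarith
    have hcl : IsClosed ((⋃ n ∈ Finset.range N, C A n) ∪ (Icc 0 ((5/4) * v N) ×ˢ Icc (0:ℝ) 1)) := by
      refine IsClosed.union ?_ ((isClosed_Icc).prod isClosed_Icc)
      refine Set.Finite.isClosed_biUnion (Finset.finite_toSet _) fun n _ => (isCompact_C A n).isClosed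
    exact closure_minimal hsub hcl hp
  have hnot : ∀ N : ℕ, p ∈ Icc 0 ((5/4) * v N) ×ˢ Icc (0:ℝ) 1 := by
    intro N
    rcases key N with h | h
    · exfalso
      apply hmem
      simp only [mem_iUnion, Finset.mem_range] at h ⊢
      obtain ⟨n, _, hn⟩ := h
      exact ⟨n, hn⟩
    · exact h
  have hp1 : p.1 ≤ 0 := by
    have htend : Tendsto (fun N : ℕ => (5/4) * v N) atTop (𝓝 ((5/4) * 0)) :=
      tendsto_v.const_mul _
    rw [mul_zero] at htend
    exact ge_of_tendsto' htend fun N => (hnot N).1.2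
  exact ⟨le_antisymm hp1 (hnot 0).1.1, (hnot 0).2⟩

lemma isClosed_M (A : Set ℕ) : IsClosed (M A) := by
  apply isClosed_of_closure_subset
  rw [M, closure_union]
  apply Set.union_subset
  · intro p hp
    rw [isCompact_JJ.isClosed.closure_eq] at hp
    exact Or.inl hp
  · intro p hp
    rcases closure_iUnionC_subset A hp with h | h
    · exact Or.inr h
    · exact Or.inl h

lemma M_subset_box (A : Set ℕ) : M A ⊆ Icc (0:ℝ) 2 ×ˢ Icc (0:ℝ) 1 := by
  rintro p (hp | hp)
  · obtain ⟨h1, h2⟩ := hp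
    simp only [mem_singleton_iff] at h1
    exact ⟨⟨by rw [h1], by rw [h1]; norm_num⟩, h2⟩
  · obtain ⟨n, hn⟩ := mem_iUnion.1 hp
    obtain ⟨⟨ha, hb⟩, hc⟩ := C_subset_strip A n hn
    refine ⟨⟨(v_pos n).le.trans ha, hb.trans ?_⟩, hc⟩
    have := v_le_one n
    linarith

lemma isCompact_M (A : Set ℕ) : IsCompact (M A) :=
  IsCompact.of_isClosed_subset (isCompact_Icc.prod isCompact_Icc) (isClosed_M A) (M_subset_box A)

/-! ### Membership and slices -/

lemma JJ_subset_M (A : Set ℕ) : JJ ⊆ M A := fun _ hp => Or.inl hp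

lemma V_subset_M (A : Set ℕ) (n : ℕ) : V n ⊆ M A :=
  fun p hp => Or.inr (mem_iUnion.2 ⟨n, Or.inl hp⟩)

lemma D_subset_M {A : Set ℕ} {n i : ℕ} (hA : n ∈ A) (hin : i ≤ n) : D n i ⊆ M A := by
  intro p hp
  refine Or.inr (mem_iUnion.2 ⟨n, Or.inr ?_⟩)
  simp only [mem_iUnion]
  exact ⟨⟨i, Nat.lt_succ_of_le hin⟩, hA, hp⟩

lemma ED_subset_D {n i k : ℕ} : ED n i k ⊆ D n i := by
  rintro ⟨x, z⟩ ⟨hx, hz⟩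
  simp only [mem_singleton_iff] at hx
  obtain ⟨hz1, hz2⟩ := hz
  have hvk := v_pos k
  have hb : (0:ℝ) < 4*((n:ℝ)+1) := by positivity
  set y : ℝ := (tt n i - z) * (4*((n:ℝ)+1)) / v k with hy_def
  have hy : y ∈ Icc (0:ℝ) 1 := by
    constructor
    · apply div_nonneg _ hvk.le
      apply mul_nonneg _ hb.le
      linarith
    · rw [div_le_one hvk, ← le_div_iff₀ hb]
      linarith
  rw [mem_D_iff]
  refine ⟨v k, Or.inr ⟨k, rfl⟩, y, hy, ?_⟩
  simp only [φ, Prod.mk.injEq]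
  constructor
  · rw [hx]; rfl
  · rw [hy_def]
    field_simp
    ring

lemma ED_subset_M {A : Set ℕ} {n i k : ℕ} (hA : n ∈ A) (hin : i ≤ n) : ED n i k ⊆ M A :=
  ED_subset_D.trans (D_subset_M hA hin)

lemma D_elim {n i : ℕ} {p : ℝ×ℝ} (hin : i ≤ n) (hp : p ∈ D n i) :
    p ∈ V n ∨ ∃ k, p ∈ ED n i k := by
  rw [mem_D_iff] at hp
  obtain ⟨s, hs, y, hy, rfl⟩ := hp
  rcases hs with rfl | ⟨k, rfl⟩
  · left
    refine ⟨by simp [φ], ?_, ?_⟩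
    · simp only [φ]
      simpa using (tt_pos n i).le
    · simp only [φ]
      simpa using tt_le_one hin
  · right
    refine ⟨k, by simp [φ, xo], ?_, ?_⟩
    · simp only [φ]
      have hvk := v_pos k
      have h4 : v k * y / (4*((n:ℝ)+1)) ≤ v k / (4*((n:ℝ)+1)) := by
        gcongr
        nlinarith [hy.1, hy.2]
      linarith
    · simp only [φ]
      have : (0:ℝ) ≤ v k * y / (4*((n:ℝ)+1)) := by
        have := (v_pos k).le
        have := hy.1
        positivity
      linarith

lemma mem_M_elim {A : Set ℕ} {p : ℝ×ℝ} (hp : p ∈ M A) :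
    p ∈ JJ ∨ (∃ n, p ∈ V n) ∨ ∃ n i k, n ∈ A ∧ i ≤ n ∧ p ∈ ED n i k := by
  rcases hp with hp | hp
  · exact Or.inl hp
  obtain ⟨n, hn⟩ := mem_iUnion.1 hp
  rcases hn with hn | hn
  · exact Or.inr (Or.inl ⟨n, hn⟩)
  · simp only [mem_iUnion] at hn
    obtain ⟨i, hA, hD⟩ := hn
    rcases D_elim (Nat.lt_succ_iff.1 i.2) hD with h | ⟨k, h⟩
    · exact Or.inr (Or.inl ⟨n, h⟩)
    · exact Or.inr (Or.inr ⟨n, i, k, hA, Nat.lt_succ_iff.1 i.2, h⟩)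

lemma xo_pos {n i k : ℕ} : 0 < xo n i k := by
  have := v_pos n
  have := cc_pos n i
  have := v_pos k
  simp only [xo]
  positivity

lemma xo_ne_v {n i k m : ℕ} (hin : i ≤ n) : xo n i k ≠ v m := by
  intro h
  exact v_not_mem_strip (h ▸ xo_mem hin)

lemma xo_ne_xo {n i k n' i' k' : ℕ} (hin : i ≤ n) (hin' : i' ≤ n') (hnn : n ≠ n') :
    xo n i k ≠ xo n' i' k' := by
  intro h
  rcases hnn.lt_or_gt with hl | hl
  · have h1 := (xo_mem (k := k) hin).1
    have h2 := (xo_mem (k := k') hin').2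
    have h3 := strips_lt hl
    rw [h] at h1
    linarith
  · have h1 := (xo_mem (k := k') hin').1
    have h2 := (xo_mem (k := k) hin).2
    have h3 := strips_lt hl
    rw [← h] at h1
    linarith

lemma xo_inj {n i k i' k' : ℕ} (h : xo n i k = xo n i' k') : i = i' ∧ k = k' := by
  have h' : v n * (2*(i:ℝ)+1) / (8*((n:ℝ)+1)) * v k = v n * (2*(i':ℝ)+1) / (8*((n:ℝ)+1)) * v k' := by
    simp only [xo, cc] at h
    push_cast at h ⊢
    linarith
  have hvn : v n ≠ 0 := (v_pos n).ne'
  have h8 : (8*((n:ℝ)+1)) ≠ 0 := by positivity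
  rw [div_mul_eq_mul_div, div_mul_eq_mul_div, div_eq_div_iff h8 h8] at h'
  have h2 := mul_right_cancel₀ h8 h'
  have h3 : v n * ((2*(i:ℝ)+1) * v k) = v n * ((2*(i':ℝ)+1) * v k') := by
    linear_combination h2
  have h4 := mul_left_cancel₀ hvn h3
  have h5 : ((2*i+1 : ℕ) : ℝ) * v k = ((2*i'+1 : ℕ) : ℝ) * v k' := by
    push_cast
    linarith
  exact odd_dyadic_inj h5

def sl (S : Set (ℝ×ℝ)) (x : ℝ) : Set (ℝ×ℝ) := {p ∈ S | p.1 = x}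

lemma mem_JJ_iff {p : ℝ×ℝ} : p ∈ JJ ↔ p.1 = 0 ∧ p.2 ∈ Icc (0:ℝ) 1 := by
  rw [JJ, Set.mem_prod, mem_singleton_iff]

lemma mem_V_iff {p : ℝ×ℝ} {n : ℕ} : p ∈ V n ↔ p.1 = v n ∧ p.2 ∈ Icc (0:ℝ) 1 := by
  rw [V, Set.mem_prod, mem_singleton_iff]

lemma mem_ED_iff {p : ℝ×ℝ} {n i k : ℕ} :
    p ∈ ED n i k ↔ p.1 = xo n i k ∧ p.2 ∈ Icc (tt n i - v k/(4*(n+1))) (tt n i) := by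
  rw [ED, Set.mem_prod, mem_singleton_iff]

lemma sl_M_zero (A : Set ℕ) : sl (M A) 0 = JJ := by
  ext p
  constructor
  · rintro ⟨hp, hx⟩
    rcases mem_M_elim hp with h | ⟨n, h⟩ | ⟨n, i, k, _, hin, h⟩
    · exact h
    · rw [mem_V_iff] at h
      exact absurd (h.1.symm.trans hx) (v_pos n).ne'
    · rw [mem_ED_iff] at h
      exact absurd (h.1.symm.trans hx) xo_pos.ne'
  · intro hp
    exact ⟨JJ_subset_M A hp, (mem_JJ_iff.1 hp).1⟩

lemma sl_M_v (A : Set ℕ) (n : ℕ) : sl (M A) (v n) = V n := by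
  ext p
  constructor
  · rintro ⟨hp, hx⟩
    rcases mem_M_elim hp with h | ⟨m, h⟩ | ⟨m, i, k, _, hin, h⟩
    · rw [mem_JJ_iff] at h
      exact absurd (hx.symm.trans h.1) (v_pos n).ne'
    · rw [mem_V_iff] at h ⊢
      exact ⟨hx, h.2⟩
    · rw [mem_ED_iff] at h
      exact absurd (h.1.symm.trans hx) (xo_ne_v hin)
  · intro hp
    exact ⟨V_subset_M A n hp, (mem_V_iff.1 hp).1⟩

lemma sl_M_xo {A : Set ℕ} {n i k : ℕ} (hA : n ∈ A) (hin : i ≤ n) :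
    sl (M A) (xo n i k) = ED n i k := by
  ext p
  constructor
  · rintro ⟨hp, hx⟩
    rcases mem_M_elim hp with h | ⟨m, h⟩ | ⟨m, i', k', hA', hin', h⟩
    · rw [mem_JJ_iff] at h
      exact absurd (hx.symm.trans h.1) xo_pos.ne'
    · rw [mem_V_iff] at h
      exact absurd (hx.symm.trans h.1) (xo_ne_v hin)
    · rw [mem_ED_iff] at h ⊢
      by_cases hmn : m = n
      · subst hmn
        obtain ⟨hi, hk⟩ := xo_inj (h.1.symm.trans hx)
        subst hi; subst hk
        exact ⟨hx, h.2⟩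
      · exact absurd (h.1.symm.trans hx) (xo_ne_xo hin' hin hmn)
  · intro hp
    exact ⟨ED_subset_M hA hin hp, (mem_ED_iff.1 hp).1⟩

/-! ### Rationality of structure coordinates -/

def qv (n : ℕ) : ℚ := (1/2 : ℚ)^n

lemma qv_cast (n : ℕ) : ((qv n : ℚ) : ℝ) = v n := by
  simp only [qv, v]
  push_cast
  norm_num

lemma M_fst_rat {A : Set ℕ} {p : ℝ×ℝ} (hp : p ∈ M A) : ∃ q : ℚ, p.1 = (q:ℝ) := by
  rcases mem_M_elim hp with h | ⟨n, h⟩ | ⟨n, i, k, _, _, h⟩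
  · exact ⟨0, by simpa using (mem_JJ_iff.1 h).1⟩
  · refine ⟨qv n, ?_⟩
    rw [(mem_V_iff.1 h).1, qv_cast]
  · refine ⟨qv n + qv n * (2*i+1) / (8*(n+1)) * qv k, ?_⟩
    rw [(mem_ED_iff.1 h).1]
    simp only [xo, cc]
    push_cast [qv_cast]
    ring

/-! ### The fillers -/

instance M_nonempty (A : Set ℕ) : Nonempty ↥(M A) :=
  ⟨⟨(0,0), JJ_subset_M A (mem_JJ_iff.2 ⟨rfl, by norm_num, by norm_num⟩)⟩⟩

def dseq (A : Set ℕ) (m : ℕ) : ℝ×ℝ := (TopologicalSpace.denseSeq ↥(M A) m : ↥(M A))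

lemma dseq_mem (A : Set ℕ) (m : ℕ) : dseq A m ∈ M A := (TopologicalSpace.denseSeq ↥(M A) m).2

lemma dseq_dense (A : Set ℕ) {p : ℝ×ℝ} (hp : p ∈ M A) {ε : ℝ} (hε : 0 < ε) :
    ∃ m, dist p (dseq A m) < ε := by
  have h := TopologicalSpace.denseRange_denseSeq ↥(M A)
  rw [Metric.denseRange_iff] at h
  obtain ⟨m, hm⟩ := h ⟨p, hp⟩ ε hε
  exact ⟨m, by simpa [Subtype.dist_eq, dseq] using hm⟩

def filler (A : Set ℕ) (u : ℕ) : ℝ×ℝ :=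
  ((dseq A u.unpair.1).1 + Real.sqrt 2 * v u, (dseq A u.unpair.1).2)

def F (A : Set ℕ) : Set (ℝ×ℝ) := range (filler A)

def K (A : Set ℕ) : Set (ℝ×ℝ) := M A ∪ F A

lemma sqrt2_pos : (0:ℝ) < Real.sqrt 2 := Real.sqrt_pos.2 (by norm_num)

lemma sqrt2_le_two : Real.sqrt 2 ≤ 2 := by
  have h := Real.sqrt_le_sqrt (by norm_num : (2:ℝ) ≤ 4)
  have h4 : Real.sqrt 4 = 2 := by
    rw [show (4:ℝ) = 2^2 by norm_num, Real.sqrt_sq (by norm_num : (0:ℝ) ≤ 2)]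
  linarith

lemma filler_fst_eq (A : Set ℕ) (u : ℕ) :
    ∃ q : ℚ, (filler A u).1 = (q:ℝ) + Real.sqrt 2 * ((qv u : ℚ) : ℝ) := by
  obtain ⟨q, hq⟩ := M_fst_rat (dseq_mem A u.unpair.1)
  exact ⟨q, by rw [filler, qv_cast, ← hq]⟩

lemma filler_fst_irrational (A : Set ℕ) (u : ℕ) : Irrational (filler A u).1 := by
  obtain ⟨q, hq⟩ := filler_fst_eq A u
  rw [hq]
  have h1 : Irrational (Real.sqrt 2 * ((qv u : ℚ) : ℝ)) :=
    irrational_sqrt_two.mul_ratCast (ne_of_gt (by simp only [qv]; positivity))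
  exact h1.ratCast_add q

lemma filler_not_mem_M (A : Set ℕ) (u : ℕ) : filler A u ∉ M A := by
  intro h
  obtain ⟨q, hq⟩ := M_fst_rat h
  exact (filler_fst_irrational A u) ⟨q, hq.symm⟩

lemma filler_fst_inj (A : Set ℕ) {u u' : ℕ} (h : (filler A u).1 = (filler A u').1) : u = u' := by
  by_contra hne
  obtain ⟨q, hq⟩ := filler_fst_eq A u
  obtain ⟨q', hq'⟩ := filler_fst_eq A u'
  rw [hq, hq'] at h
  have hv : ((qv u : ℚ) : ℝ) - ((qv u' : ℚ) : ℝ) ≠ 0 := by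
    rw [qv_cast, qv_cast, sub_ne_zero]
    exact fun hh => hne (v_inj hh)
  have hvq : (qv u - qv u' : ℚ) ≠ 0 := by
    intro hh
    apply hv
    rw [← Rat.cast_sub, hh, Rat.cast_zero]
  have key : Real.sqrt 2 * ((qv u - qv u' : ℚ) : ℝ) = ((q' - q : ℚ) : ℝ) := by
    push_cast
    linarith
  have : Irrational (Real.sqrt 2 * ((qv u - qv u' : ℚ) : ℝ)) :=
    irrational_sqrt_two.mul_ratCast hvq
  rw [key] at this
  exact (Rat.not_irrational _) this

lemma filler_dist (A : Set ℕ) (u : ℕ) :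
    dist (filler A u) (dseq A u.unpair.1) = Real.sqrt 2 * v u := by
  rw [Prod.dist_eq, filler]
  simp [Real.dist_eq, abs_mul, abs_of_nonneg sqrt2_pos.le, abs_of_nonneg (v_pos u).le]
  exact (v_pos u).le

lemma filler_mem_K (A : Set ℕ) (u : ℕ) : filler A u ∈ K A := Or.inr ⟨u, rfl⟩

lemma M_subset_K (A : Set ℕ) : M A ⊆ K A := subset_union_left

/-! ### K is compact -/

lemma exists_small_v {ε : ℝ} (hε : 0 < ε) (c : ℝ) : ∃ N : ℕ, c * v N < ε := by
  rcases le_or_gt c 0 with hc | hc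
  · exact ⟨0, lt_of_le_of_lt (mul_nonpos_of_nonpos_of_nonneg hc (v_pos 0).le) hε⟩
  · have htend : Tendsto (fun N : ℕ => c * v N) atTop (𝓝 (c * 0)) := tendsto_v.const_mul c
    rw [mul_zero] at htend
    exact (htend.eventually (gt_mem_nhds hε)).exists

lemma v_anti' {m n : ℕ} (h : m ≤ n) : v n ≤ v m := v_le_of_le h

lemma closure_F_subset (A : Set ℕ) : closure (F A) ⊆ F A ∪ M A := by
  intro p hp
  by_cases hpM : p ∈ M A
  · exact Or.inr hpM
  left
  obtain ⟨ε, hε, hball⟩ : ∃ ε > 0, ball p ε ⊆ (M A)ᶜ :=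
    Metric.isOpen_iff.1 (isClosed_M A).isOpen_compl p hpM
  have hinf : ε ≤ infDist p (M A) := by
    by_contra hlt
    push_neg at hlt
    obtain ⟨m, hm, hdm⟩ := (infDist_lt_iff ⟨_, dseq_mem A 0⟩).1 hlt
    have hmb : m ∈ ball p ε := by rw [mem_ball, dist_comm]; exact hdm
    exact (hball hmb) hm
  obtain ⟨N, hN⟩ := exists_small_v hε (Real.sqrt 2)
  have hsplit : F A ⊆ (filler A '' {u | u ≤ N}) ∪ {q | infDist q (M A) ≤ Real.sqrt 2 * v N} := by
    rintro _ ⟨u, rfl⟩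
    rcases le_or_gt u N with hu | hu
    · exact Or.inl ⟨u, hu, rfl⟩
    · right
      have h1 : infDist (filler A u) (M A) ≤ Real.sqrt 2 * v u := by
        rw [← filler_dist A u]
        exact infDist_le_dist_of_mem (dseq_mem A u.unpair.1)
      have h2 : v u ≤ v N := v_anti' hu.le
      have := mul_le_mul_of_nonneg_left h2 sqrt2_pos.le
      simp only [mem_setOf_eq]
      linarith
  have hclosed : IsClosed ((filler A '' {u | u ≤ N}) ∪ {q | infDist q (M A) ≤ Real.sqrt 2 * v N}) := by
    refine IsClosed.union ?_ ?_
    · exact (Set.Finite.image _ (finite_le_nat N)).isClosed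
    · exact isClosed_le (continuous_infDist_pt _) continuous_const
  have := closure_minimal hsplit hclosed hp
  rcases this with h | h
  · obtain ⟨u, _, hu⟩ := h
    exact ⟨u, hu⟩
  · exfalso
    simp only [mem_setOf_eq] at h
    linarith

lemma isClosed_K (A : Set ℕ) : IsClosed (K A) := by
  apply isClosed_of_closure_subset
  rw [K, closure_union]
  rintro p (hp | hp)
  · rw [(isClosed_M A).closure_eq] at hp
    exact Or.inl hp
  · rcases closure_F_subset A hp with h | h
    · exact Or.inr h
    · exact Or.inl h

lemma K_subset_box (A : Set ℕ) : K A ⊆ Icc (0:ℝ) 4 ×ˢ Icc (0:ℝ) 1 := by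
  rintro p (hp | hp)
  · obtain ⟨⟨h1, h2⟩, h3⟩ := M_subset_box A hp
    exact ⟨⟨h1, by linarith⟩, h3⟩
  · obtain ⟨u, rfl⟩ := hp
    obtain ⟨⟨h1, h2⟩, h3⟩ := M_subset_box A (dseq_mem A u.unpair.1)
    have hv1 := v_pos u
    have hv2 := v_le_one u
    have hs := sqrt2_pos
    have hs2 := sqrt2_le_two
    refine ⟨⟨?_, ?_⟩, h3⟩
    · simp only [filler]
      nlinarith
    · simp only [filler]
      nlinarith

lemma isCompact_K (A : Set ℕ) : IsCompact (K A) :=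
  IsCompact.of_isClosed_subset (isCompact_Icc.prod isCompact_Icc) (isClosed_K A) (K_subset_box A)

/-! ### Slices of K -/

lemma sl_K_eq_sl_M (A : Set ℕ) {x : ℝ} (hx : ∃ q : ℚ, x = (q:ℝ)) : sl (K A) x = sl (M A) x := by
  ext p
  constructor
  · rintro ⟨hp | hp, hpx⟩
    · exact ⟨hp, hpx⟩
    · obtain ⟨u, rfl⟩ := hp
      obtain ⟨q, hq⟩ := hx
      exact absurd (hpx.trans hq) ((filler_fst_irrational A u).ne_rat q)
  · rintro ⟨hp, hpx⟩
    exact ⟨Or.inl hp, hpx⟩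

lemma sl_K_zero (A : Set ℕ) : sl (K A) 0 = JJ := by
  rw [sl_K_eq_sl_M A ⟨0, by norm_num⟩, sl_M_zero]

lemma sl_K_v (A : Set ℕ) (n : ℕ) : sl (K A) (v n) = V n := by
  rw [sl_K_eq_sl_M A ⟨qv n, (qv_cast n).symm⟩, sl_M_v]

lemma sl_K_xo {A : Set ℕ} {n i k : ℕ} (hA : n ∈ A) (hin : i ≤ n) :
    sl (K A) (xo n i k) = ED n i k := by
  rw [sl_K_eq_sl_M A ?_, sl_M_xo hA hin]
  refine ⟨qv n + qv n * (2*i+1) / (8*(n+1)) * qv k, ?_⟩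
  simp only [xo, cc]
  push_cast [qv_cast]
  ring

lemma sl_K_filler (A : Set ℕ) (u : ℕ) : sl (K A) ((filler A u).1) = {filler A u} := by
  ext p
  constructor
  · rintro ⟨hp | hp, hpx⟩
    · exfalso
      exact (filler_fst_irrational A u).ne_rat (M_fst_rat hp).choose
        (hpx.symm.trans (M_fst_rat hp).choose_spec)
    · obtain ⟨u', rfl⟩ := hp
      obtain rfl := filler_fst_inj A hpx
      rfl
  · rintro rfl
    exact ⟨filler_mem_K A u, rfl⟩

lemma mem_K_elim {A : Set ℕ} {p : ℝ×ℝ} (hp : p ∈ K A) :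
    p ∈ JJ ∨ (∃ n, p ∈ V n) ∨ (∃ n i k, n ∈ A ∧ i ≤ n ∧ p ∈ ED n i k) ∨ ∃ u, p = filler A u := by
  rcases hp with hp | hp
  · rcases mem_M_elim hp with h | h | h
    · exact Or.inl h
    · exact Or.inr (Or.inl h)
    · exact Or.inr (Or.inr (Or.inl h))
  · obtain ⟨u, rfl⟩ := hp
    exact Or.inr (Or.inr (Or.inr ⟨u, rfl⟩))

lemma isPreconnected_singleton_prod_Icc (x a b : ℝ) :
    IsPreconnected (({x} : Set ℝ) ×ˢ Icc a b) := by
  rw [Set.singleton_prod]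
  exact isPreconnected_Icc.image _ (Continuous.continuousOn (Continuous.prodMk_right x))

lemma isPreconnected_sl_K {A : Set ℕ} {p : ℝ×ℝ} (hp : p ∈ K A) :
    IsPreconnected (sl (K A) p.1) := by
  rcases mem_K_elim hp with h | ⟨n, h⟩ | ⟨n, i, k, hA, hin, h⟩ | ⟨u, rfl⟩
  · rw [(mem_JJ_iff.1 h).1, sl_K_zero]
    exact isPreconnected_singleton_prod_Icc 0 0 1
  · rw [(mem_V_iff.1 h).1, sl_K_v]
    exact isPreconnected_singleton_prod_Icc _ 0 1
  · rw [(mem_ED_iff.1 h).1, sl_K_xo hA hin]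
    exact isPreconnected_singleton_prod_Icc _ _ _
  · rw [sl_K_filler]
    exact isPreconnected_singleton

lemma countable_fst_K (A : Set ℕ) : (Prod.fst '' K A).Countable := by
  have hsub : Prod.fst '' K A ⊆
      ({0} : Set ℝ) ∪ range v ∪ (range fun z : ℕ×ℕ×ℕ => xo z.1 z.2.1 z.2.2) ∪
        range (fun u => (filler A u).1) := by
    rintro _ ⟨p, hp, rfl⟩
    rcases mem_K_elim hp with h | ⟨n, h⟩ | ⟨n, i, k, _, _, h⟩ | ⟨u, rfl⟩
    · exact Or.inl (Or.inl (Or.inl (mem_JJ_iff.1 h).1))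
    · exact Or.inl (Or.inl (Or.inr ⟨n, (mem_V_iff.1 h).1.symm⟩))
    · exact Or.inl (Or.inr ⟨⟨n, i, k⟩, (mem_ED_iff.1 h).1.symm⟩)
    · exact Or.inr ⟨u, rfl⟩
  exact Set.Countable.mono hsub
    (((countable_singleton 0).union (countable_range v)).union (countable_range _) |>.union
      (countable_range _))

lemma connectedComponentIn_K {A : Set ℕ} {p : ℝ×ℝ} (hp : p ∈ K A) :
    connectedComponentIn (K A) p = sl (K A) p.1 := by
  apply subset_antisymm
  · intro q hq
    have hqK : q ∈ K A := connectedComponentIn_subset _ _ hq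
    have hsub : Prod.fst '' connectedComponentIn (K A) p ⊆ Prod.fst '' K A :=
      Set.image_mono (connectedComponentIn_subset _ _)
    have hss : (Prod.fst '' connectedComponentIn (K A) p).Subsingleton :=
      subsingleton_of_countable_preconnected ((countable_fst_K A).mono hsub)
        (isPreconnected_connectedComponentIn.image _ continuous_fst.continuousOn)
    have hq1 : q.1 = p.1 :=
      hss ⟨q, hq, rfl⟩ ⟨p, mem_connectedComponentIn hp, rfl⟩
    exact ⟨hqK, hq1⟩
  · exact (isPreconnected_sl_K hp).subset_connectedComponentIn ⟨hp, rfl⟩ (sep_subset _ _)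

/-! ### Density and isolation of the fillers -/

lemma K_subset_closure_F (A : Set ℕ) : K A ⊆ closure (F A) := by
  rintro p (hp | hp)
  · rw [Metric.mem_closure_iff]
    intro ε hε
    obtain ⟨m, hm⟩ := dseq_dense A hp (half_pos hε)
    obtain ⟨j, hj⟩ := exists_small_v (half_pos hε) (Real.sqrt 2)
    refine ⟨filler A (Nat.pair m j), ⟨_, rfl⟩, ?_⟩
    have h1 : dist (filler A (Nat.pair m j)) (dseq A m) = Real.sqrt 2 * v (Nat.pair m j) := by
      have := filler_dist A (Nat.pair m j)
      rwa [Nat.unpair_pair] at this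
    have h2 : v (Nat.pair m j) ≤ v j := v_anti' (Nat.right_le_pair m j)
    have h3 := mul_le_mul_of_nonneg_left h2 sqrt2_pos.le
    calc dist p (filler A (Nat.pair m j))
        ≤ dist p (dseq A m) + dist (dseq A m) (filler A (Nat.pair m j)) := dist_triangle _ _ _
      _ = dist p (dseq A m) + dist (filler A (Nat.pair m j)) (dseq A m) := by rw [dist_comm (dseq A m)]
      _ < ε/2 + ε/2 := by rw [h1]; exact add_lt_add_of_lt_of_le hm (h3.trans hj.le)
      _ = ε := add_halves ε
  · exact subset_closure hp

lemma filler_isolated (A : Set ℕ) (u : ℕ) :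
    ∃ ε > 0, ∀ p ∈ K A, dist p (filler A u) < ε → p = filler A u := by
  obtain ⟨ε₁, hε₁, hball⟩ : ∃ ε > 0, ball (filler A u) ε ⊆ (M A)ᶜ :=
    Metric.isOpen_iff.1 (isClosed_M A).isOpen_compl _ (filler_not_mem_M A u)
  obtain ⟨N, hN⟩ := exists_small_v (half_pos hε₁) (Real.sqrt 2)
  set S : Set (ℝ×ℝ) := (filler A '' {u' | u' ≤ N}) \ {filler A u} with hS
  have hSfin : S.Finite := (Set.Finite.image _ (finite_le_nat N)).diff
  have hfS : filler A u ∉ S := fun h => h.2 rfl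
  obtain ⟨ε₂, hε₂, hball₂⟩ : ∃ ε > 0, ball (filler A u) ε ⊆ Sᶜ :=
    Metric.isOpen_iff.1 hSfin.isClosed.isOpen_compl _ hfS
  refine ⟨min (ε₁/2) ε₂, lt_min (half_pos hε₁) hε₂, ?_⟩
  intro p hp hd
  have hd1 : dist p (filler A u) < ε₁/2 := hd.trans_le (min_le_left _ _)
  have hd2 : dist p (filler A u) < ε₂ := hd.trans_le (min_le_right _ _)
  have hMfar : ∀ q ∈ M A, ε₁ ≤ dist q (filler A u) := by
    intro q hq
    by_contra hlt
    push_neg at hlt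
    exact (hball (by rwa [mem_ball])) hq
  rcases hp with hp | hp
  · exfalso
    have := hMfar p hp
    linarith
  · obtain ⟨u', rfl⟩ := hp
    by_contra hne
    rcases le_or_gt u' N with hu' | hu'
    · have hpS : filler A u' ∈ S := ⟨⟨u', hu', rfl⟩, hne⟩
      exact (hball₂ (by rwa [mem_ball])) hpS
    · have h1 : dist (filler A u') (dseq A u'.unpair.1) = Real.sqrt 2 * v u' := filler_dist A u'
      have h2 : Real.sqrt 2 * v u' < ε₁/2 := by
        have := mul_le_mul_of_nonneg_left (v_anti' hu'.le) sqrt2_pos.le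
        linarith
      have h3 := hMfar (dseq A u'.unpair.1) (dseq_mem A u'.unpair.1)
      have h4 := dist_triangle (dseq A u'.unpair.1) (filler A u') (filler A u)
      rw [dist_comm (dseq A u'.unpair.1) (filler A u')] at h4
      linarith

/-! ### The key closure computations -/

def FAR (c ε : ℝ) : Set (ℝ×ℝ) := {q | ε ≤ |q.1 - c|}

lemma isClosed_FAR (c ε : ℝ) : IsClosed (FAR c ε) :=
  isClosed_le continuous_const ((continuous_fst.sub continuous_const).abs)

def tops (n : ℕ) : Set (ℝ×ℝ) := (fun i => (v n, tt n i)) '' ↑(Finset.range (n+1))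

def Yd (n : ℕ) (δ : ℝ) : Set ℝ := ⋃ i ∈ Finset.range (n+1), Icc (tt n i - δ) (tt n i)

lemma isClosed_Yd (n : ℕ) (δ : ℝ) : IsClosed (Yd n δ) :=
  Set.Finite.isClosed_biUnion (Finset.finite_toSet _) fun _ _ => isClosed_Icc

lemma cc_ge (n i : ℕ) : v n / (8*(n+1)) ≤ cc n i := by
  rw [cc]
  gcongr
  nlinarith [v_pos n, Nat.cast_nonneg (α := ℝ) i]

lemma M_diff_V_subset (A : Set ℕ) (n : ℕ) {δ : ℝ} (hδ : 0 < δ) :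
    M A \ V n ⊆ FAR (v n) (min ((3/8)*(v n)) (δ*(v n)/2)) ∪ {q : ℝ×ℝ | q.2 ∈ Yd n δ} := by
  intro q hq
  obtain ⟨hqM, hqV⟩ := hq
  have hvn := v_pos n
  set ε := min ((3/8)*(v n)) (δ*(v n)/2) with hε_def
  have hε38 : ε ≤ (3/8)*(v n) := min_le_left _ _
  have hεδ : ε ≤ δ*(v n)/2 := min_le_right _ _
  rcases mem_M_elim hqM with h | ⟨m, h⟩ | ⟨m, i, k, hA, him, h⟩
  · left
    simp only [FAR, mem_setOf_eq, (mem_JJ_iff.1 h).1, zero_sub, abs_neg, abs_of_nonneg hvn.le]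
    linarith
  · left
    have hx := (mem_V_iff.1 h).1
    have hmn : m ≠ n := by
      rintro rfl
      exact hqV h
    simp only [FAR, mem_setOf_eq, hx]
    rcases hmn.lt_or_gt with hl | hl
    · have h1 : v n ≤ v (m+1) := v_anti' hl
      rw [v_succ] at h1
      rw [abs_of_nonneg (by linarith [v_anti hl])]
      linarith [v_anti hl]
    · have h1 : v m ≤ v (n+1) := v_anti' hl
      rw [v_succ] at h1
      rw [abs_of_nonpos (by linarith)]
      linarith
  · have hx := (mem_ED_iff.1 h).1
    by_cases hmn : m = n
    · subst hmn
      set o := cc m i * v k with ho_def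
      have ho : 0 < o := mul_pos (cc_pos m i) (v_pos k)
      rcases le_or_gt ε o with hcase | hcase
      · left
        simp only [FAR, mem_setOf_eq, hx, xo]
        rw [add_sub_cancel_left, abs_of_nonneg ho.le]
        exact hcase
      · right
        simp only [mem_setOf_eq, Yd, mem_iUnion]
        refine ⟨i, Finset.mem_range.2 (Nat.lt_succ_of_le him), ?_⟩
        have hy := (mem_ED_iff.1 h).2
        have hl : v k / (4*(m+1)) < δ := by
          have hcc := cc_ge m i
          have h8 : (0:ℝ) < 8*((m:ℝ)+1) := by positivity
          have h1 : v m / (8*(m+1)) * v k ≤ o := by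
            rw [ho_def]
            exact mul_le_mul_of_nonneg_right hcc (v_pos k).le
          have h2 : v m / (8*(m+1)) * v k < δ*(v m)/2 := by
            calc v m / (8*(m+1)) * v k ≤ o := h1
              _ < ε := hcase
              _ ≤ δ*(v m)/2 := hεδ
          -- v k < δ * 4*(m+1)
          have h3 : v k < 4*((m:ℝ)+1)*δ := by
            have hvm := v_pos m
            rw [div_mul_eq_mul_div, div_lt_iff₀ h8] at h2
            nlinarith
          rw [div_lt_iff₀ (by positivity : (0:ℝ) < 4*((m:ℝ)+1))]
          linarith
        exact ⟨by linarith [hy.1], hy.2⟩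
    · left
      simp only [FAR, mem_setOf_eq, hx]
      have hxo := xo_mem (k := k) him
      rcases Ne.lt_or_gt hmn with hl | hl
      · -- m < n : xo m i k > v m ≥ 2 v n
        have h1 : v n ≤ v (m+1) := v_anti' hl
        rw [v_succ] at h1
        rw [abs_of_nonneg (by linarith [hxo.1])]
        linarith [hxo.1]
      · -- n < m : xo m i k < (5/4) v m ≤ (5/8) v n
        have h1 : v m ≤ v (n+1) := v_anti' hl
        rw [v_succ] at h1
        rw [abs_of_nonpos (by linarith [hxo.2])]
        linarith [hxo.2]

lemma Tset_V_subset_tops (A : Set ℕ) (n : ℕ) :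
    V n ∩ closure (M A \ V n) ⊆ tops n := by
  intro q hq
  obtain ⟨hqV, hqcl⟩ := hq
  have hvn := v_pos n
  have key : ∀ δ : ℝ, 0 < δ → q.2 ∈ Yd n δ := by
    intro δ hδ
    have hsub := M_diff_V_subset A n hδ
    have hclosed : IsClosed (FAR (v n) (min ((3/8)*(v n)) (δ*(v n)/2)) ∪ {q : ℝ×ℝ | q.2 ∈ Yd n δ}) :=
      (isClosed_FAR _ _).union (IsClosed.preimage continuous_snd (isClosed_Yd n δ))
    have := closure_minimal hsub hclosed hqcl
    rcases this with h | h
    · exfalso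
      simp only [FAR, mem_setOf_eq, (mem_V_iff.1 hqV).1, sub_self, abs_zero] at h
      have : (0:ℝ) < min ((3/8)*(v n)) (δ*(v n)/2) := lt_min (by positivity) (by positivity)
      linarith
    · exact h
  -- conclude q.2 = tt n i for some i ≤ n
  by_contra hq2
  have hne : ∀ i ∈ Finset.range (n+1), 0 < |q.2 - tt n i| := by
    intro i hi
    rw [abs_pos, sub_ne_zero]
    intro h2
    apply hq2
    exact ⟨i, by simpa using hi, Prod.ext_iff.2 ⟨((mem_V_iff.1 hqV).1).symm, h2.symm⟩⟩
  have hFdne : ((Finset.range (n+1)).image (fun i => |q.2 - tt n i|)).Nonempty :=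
    ⟨|q.2 - tt n 0|, Finset.mem_image_of_mem _ (by simp)⟩
  set δ₀ := ((Finset.range (n+1)).image (fun i => |q.2 - tt n i|)).min' hFdne with hδ₀def
  have hδ₀pos : 0 < δ₀ := by
    obtain ⟨i, hi, heq⟩ := Finset.mem_image.1 (Finset.min'_mem _ hFdne)
    rw [hδ₀def, ← heq]
    exact hne i hi
  have hYd := key (δ₀/2) (by linarith)
  simp only [Yd, mem_iUnion] at hYd
  obtain ⟨i, hi, h1, h2⟩ := hYd
  have hle : |q.2 - tt n i| ≤ δ₀/2 := abs_le.2 ⟨by linarith, by linarith⟩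
  have hmin := Finset.min'_le _ _ (Finset.mem_image_of_mem (fun i => |q.2 - tt n i|) hi)
  rw [← hδ₀def] at hmin
  linarith

lemma isClosed_ED (n i k : ℕ) : IsClosed (ED n i k) := isClosed_singleton.prod isClosed_Icc

lemma tops_subset_Tset {A : Set ℕ} {n : ℕ} (hA : n ∈ A) :
    tops n ⊆ V n ∩ closure (M A \ V n) := by
  rintro _ ⟨i, hi, rfl⟩
  have hin : i ≤ n := Nat.lt_succ_iff.1 (by simpa using hi)
  refine ⟨mem_V_iff.2 ⟨rfl, (tt_pos n i).le, tt_le_one hin⟩, ?_⟩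
  have htend : Tendsto (fun k => ((xo n i k, tt n i) : ℝ×ℝ)) atTop (𝓝 (v n, tt n i)) := by
    apply Filter.Tendsto.prodMk_nhds ?_ tendsto_const_nhds
    have h1 : Tendsto (fun k => v n + cc n i * v k) atTop (𝓝 (v n + cc n i * 0)) :=
      Filter.Tendsto.const_add _ (tendsto_v.const_mul _)
    rw [mul_zero, add_zero] at h1
    exact h1
  apply mem_closure_of_tendsto htend
  apply Filter.Eventually.of_forall
  intro k
  constructor
  · apply ED_subset_M hA hin
    apply mem_ED_iff.2 ⟨rfl, ?_, le_refl _⟩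
    have : (0:ℝ) ≤ v k / (4*(n+1)) := div_nonneg (v_pos k).le (by positivity)
    linarith
  · intro hV
    exact xo_ne_v hin (mem_V_iff.1 hV).1

lemma M_diff_V_far {A : Set ℕ} {n : ℕ} (hA : n ∉ A) :
    M A \ V n ⊆ FAR (v n) ((3/8)*(v n)) := by
  intro q hq
  obtain ⟨hqM, hqV⟩ := hq
  have hvn := v_pos n
  rcases mem_M_elim hqM with h | ⟨m, h⟩ | ⟨m, i, k, hA', him, h⟩
  · simp only [FAR, mem_setOf_eq, (mem_JJ_iff.1 h).1, zero_sub, abs_neg, abs_of_nonneg hvn.le]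
    linarith
  · have hx := (mem_V_iff.1 h).1
    have hmn : m ≠ n := by rintro rfl; exact hqV h
    simp only [FAR, mem_setOf_eq, hx]
    rcases hmn.lt_or_gt with hl | hl
    · have h1 : v n ≤ v (m+1) := v_anti' hl
      rw [v_succ] at h1
      rw [abs_of_nonneg (by linarith [v_anti hl])]
      linarith [v_anti hl]
    · have h1 : v m ≤ v (n+1) := v_anti' hl
      rw [v_succ] at h1
      rw [abs_of_nonpos (by linarith)]
      linarith
  · have hx := (mem_ED_iff.1 h).1
    have hmn : m ≠ n := by rintro rfl; exact hA hA'
    simp only [FAR, mem_setOf_eq, hx]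
    have hxo := xo_mem (k := k) him
    rcases hmn.lt_or_gt with hl | hl
    · have h1 : v n ≤ v (m+1) := v_anti' hl
      rw [v_succ] at h1
      rw [abs_of_nonneg (by linarith [hxo.1])]
      linarith [hxo.1]
    · have h1 : v m ≤ v (n+1) := v_anti' hl
      rw [v_succ] at h1
      rw [abs_of_nonpos (by linarith [hxo.2])]
      linarith [hxo.2]

lemma Tset_V_empty {A : Set ℕ} {n : ℕ} (hA : n ∉ A) :
    V n ∩ closure (M A \ V n) = ∅ := by
  ext q
  simp only [mem_inter_iff, mem_empty_iff_false, iff_false, not_and]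
  intro hqV hqcl
  have := closure_minimal (M_diff_V_far hA) (isClosed_FAR _ _) hqcl
  simp only [FAR, mem_setOf_eq, (mem_V_iff.1 hqV).1, sub_self, abs_zero] at this
  have hvn := v_pos n
  linarith

lemma Tset_ED {A : Set ℕ} {n i k : ℕ} (hA : n ∈ A) (hin : i ≤ n) :
    ED n i k ∩ closure (M A \ ED n i k) = ∅ := by
  have hvn := v_pos n
  set c := xo n i k with hc_def
  set o := cc n i * v k with ho_def
  have ho : 0 < o := mul_pos (cc_pos n i) (v_pos k)
  have hov : o < v n / 4 := by
    have h1 := cc_lt hin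
    have h2 := v_le_one k
    have h3 := (cc_pos n i)
    nlinarith [v_pos k]
  obtain ⟨K₁, hK₁⟩ := exists_small_v (div_pos (by linarith : (0:ℝ) < 2*o) hvn) 1
  rw [one_mul] at hK₁
  set NEAR : Set (ℝ×ℝ) :=
    ⋃ z ∈ ((Finset.range (n+1)) ×ˢ (Finset.range (K₁+1))).erase (i,k), ED n z.1 z.2 with hNEAR_def
  have hNEARclosed : IsClosed NEAR :=
    Set.Finite.isClosed_biUnion (Finset.finite_toSet _) fun z _ => isClosed_ED n z.1 z.2
  have hsplit : M A \ ED n i k ⊆ FAR c (o/2) ∪ NEAR := by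
    intro q hq
    obtain ⟨hqM, hqE⟩ := hq
    rcases mem_M_elim hqM with h | ⟨m, h⟩ | ⟨m, i', k', hA', him, h⟩
    · left
      have hcv : v n < c := (xo_mem (k := k) hin).1
      simp only [FAR, mem_setOf_eq, (mem_JJ_iff.1 h).1, zero_sub, abs_neg,
        abs_of_nonneg (by linarith : (0:ℝ) ≤ c)]
      linarith
    · left
      have hx := (mem_V_iff.1 h).1
      simp only [FAR, mem_setOf_eq, hx]
      rcases lt_trichotomy m n with hl | heq | hl
      · have h1 : v n ≤ v (m+1) := v_anti' hl
        rw [v_succ] at h1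
        have hcu : c < (5/4) * v n := (xo_mem (k := k) hin).2
        rw [abs_of_nonneg (by linarith [v_anti hl])]
        linarith [v_anti hl]
      · rw [heq]
        have : v n - c = -o := by rw [hc_def, ho_def]; simp [xo]
        rw [this, abs_neg, abs_of_nonneg ho.le]
        linarith
      · have h1 : v m ≤ v (n+1) := v_anti' hl
        rw [v_succ] at h1
        have hcl : v n < c := (xo_mem (k := k) hin).1
        rw [abs_of_nonpos (by linarith)]
        linarith
    · have hx := (mem_ED_iff.1 h).1
      rcases lt_trichotomy m n with hl | heq | hl
      · left
        have h1 : v n ≤ v (m+1) := v_anti' hl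
        rw [v_succ] at h1
        have hxo := (xo_mem (k := k') him).1
        have hcu : c < (5/4) * v n := (xo_mem (k := k) hin).2
        simp only [FAR, mem_setOf_eq, hx]
        rw [abs_of_nonneg (by linarith)]
        linarith
      · -- same strip
        rw [heq] at him h hx
        by_cases hz : (i', k') = (i, k)
        · exfalso
          rw [Prod.mk.injEq] at hz
          exact hqE (by rw [← hz.1, ← hz.2]; exact h)
        · set o' := cc n i' * v k' with ho'_def
          have ho' : 0 < o' := mul_pos (cc_pos n i') (v_pos k')
          have hxq : q.1 - c = o' - o := by
            rw [hx, hc_def, ho'_def, ho_def]; simp only [xo]; ring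
          rcases le_or_gt o' (o/2) with hcase | hcase
          · left
            simp only [FAR, mem_setOf_eq, hxq]
            rw [abs_of_nonpos (by linarith)]
            linarith
          · right
            have hk' : k' < K₁ + 1 := by
              by_contra hk'
              push_neg at hk'
              have h1 : v k' ≤ v K₁ := v_anti' (by omega)
              have h2 : o' ≤ (v n/4) * v k' := by
                rw [ho'_def]
                exact mul_le_mul_of_nonneg_right (cc_lt him).le (v_pos k').le
              have h3 : (v n/4) * v k' ≤ (v n/4) * v K₁ := by
                apply mul_le_mul_of_nonneg_left h1 (by positivity)
              have h4 : (v n/4) * v K₁ < (v n/4) * (2*o/(v n)) := by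
                apply mul_lt_mul_of_pos_left hK₁ (by positivity)
              have h5 : (v n/4) * (2*o/(v n)) = o/2 := by field_simp; ring
              linarith
            simp only [hNEAR_def, mem_iUnion]
            refine ⟨(i', k'), ?_, h⟩
            rw [Finset.mem_erase]
            refine ⟨hz, ?_⟩
            rw [Finset.mem_product]
            exact ⟨Finset.mem_range.2 (Nat.lt_succ_of_le him), Finset.mem_range.2 hk'⟩
      · left
        have h1 : v m ≤ v (n+1) := v_anti' hl
        rw [v_succ] at h1
        have hxo := (xo_mem (k := k') him).2
        have hcl : v n < c := (xo_mem (k := k) hin).1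
        simp only [FAR, mem_setOf_eq, hx]
        rw [abs_of_nonpos (by linarith)]
        linarith
  ext q
  simp only [mem_inter_iff, mem_empty_iff_false, iff_false, not_and]
  intro hqE hqcl
  have := closure_minimal hsplit ((isClosed_FAR _ _).union hNEARclosed) hqcl
  rcases this with h | h
  · simp only [FAR, mem_setOf_eq, (mem_ED_iff.1 hqE).1, ← hc_def, sub_self, abs_zero] at h
    linarith
  · simp only [hNEAR_def, mem_iUnion] at h
    obtain ⟨z, hz, hzE⟩ := h
    have h1 : xo n z.1 z.2 = xo n i k := ((mem_ED_iff.1 hzE).1.symm.trans (mem_ED_iff.1 hqE).1)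
    obtain ⟨h2, h3⟩ := xo_inj h1
    rw [Finset.mem_erase] at hz
    exact hz.1 (by rw [Prod.ext_iff]; exact ⟨h2, h3⟩)

lemma Tset_V {A : Set ℕ} {n : ℕ} (hA : n ∈ A) :
    V n ∩ closure (M A \ V n) = tops n :=
  subset_antisymm (Tset_V_subset_tops A n) (tops_subset_Tset hA)

lemma JJ_subset_closure_diff (A : Set ℕ) : JJ ⊆ closure (M A \ JJ) := by
  intro p hp
  obtain ⟨hp1, hp2⟩ := mem_JJ_iff.1 hp
  have htend : Tendsto (fun m => ((v m, p.2) : ℝ×ℝ)) atTop (𝓝 (0, p.2)) :=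
    tendsto_v.prodMk_nhds tendsto_const_nhds
  have hmem : ∀ m : ℕ, ((v m, p.2) : ℝ×ℝ) ∈ M A \ JJ := fun m =>
    ⟨V_subset_M A m (mem_V_iff.2 ⟨rfl, hp2⟩), fun hJ => (v_pos m).ne' (mem_JJ_iff.1 hJ).1⟩
  have hcl := mem_closure_of_tendsto htend (Filter.Eventually.of_forall hmem)
  have hpp : p = ((0:ℝ), p.2) := Prod.ext_iff.2 ⟨hp1, rfl⟩
  rw [hpp]
  exact hcl

lemma Tset_JJ (A : Set ℕ) : JJ ∩ closure (M A \ JJ) = JJ :=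
  inter_eq_left.2 (JJ_subset_closure_diff A)

lemma JJ_infinite : JJ.Infinite := by
  apply Set.infinite_of_injective_forall_mem (f := fun j : ℕ => ((0:ℝ), 1/((j:ℝ)+2)))
  · intro a b hab
    simp only [Prod.mk.injEq, true_and] at hab
    have ha : ((a:ℝ)+2) ≠ 0 := by positivity
    have hb : ((b:ℝ)+2) ≠ 0 := by positivity
    rw [div_eq_div_iff ha hb] at hab
    have : (a:ℝ) = b := by linarith
    exact_mod_cast this
  · intro j
    refine mem_JJ_iff.2 ⟨rfl, by positivity, ?_⟩
    rw [div_le_one (by positivity)]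
    have := Nat.cast_nonneg (α := ℝ) j
    linarith

lemma tops_ncard (n : ℕ) : (tops n).ncard = n + 1 := by
  have hinj : Function.Injective (fun i => ((v n, tt n i) : ℝ×ℝ)) := by
    intro a b hab
    exact tt_inj (congrArg Prod.snd hab)
  rw [tops, Set.ncard_image_of_injective _ hinj, Set.ncard_coe_finset, Finset.card_range]

/-! ### The subtype and its invariant -/

abbrev KT (A : Set ℕ) := ↥(K A)

lemma val_image_connectedComponent {A : Set ℕ} (y : KT A) :
    Subtype.val '' connectedComponent y = sl (K A) (y : ℝ×ℝ).1 := by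
  rw [← connectedComponentIn_eq_image y.2]
  exact connectedComponentIn_K y.2

lemma prod_Icc_ne_singleton {x a b : ℝ} (hab : a < b) (p : ℝ×ℝ) :
    ({x} : Set ℝ) ×ˢ Icc a b ≠ {p} := by
  intro h
  have h1 : ((x, a) : ℝ×ℝ) ∈ ({x} : Set ℝ) ×ˢ Icc a b := ⟨rfl, le_refl a, hab.le⟩
  have h2 : ((x, b) : ℝ×ℝ) ∈ ({x} : Set ℝ) ×ˢ Icc a b := ⟨rfl, hab.le, le_refl b⟩
  rw [h, mem_singleton_iff] at h1 h2
  have h3 := h1.trans h2.symm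
  rw [Prod.ext_iff] at h3
  exact hab.ne h3.2

lemma mem_deg_KT {A : Set ℕ} (y : KT A) : y ∈ deg (KT A) ↔ (y : ℝ×ℝ) ∈ M A := by
  have hiff : connectedComponent y = {y} ↔ sl (K A) (y : ℝ×ℝ).1 = {(y : ℝ×ℝ)} := by
    rw [← val_image_connectedComponent y, ← image_singleton]
    exact (Set.image_eq_image Subtype.val_injective).symm
  constructor
  · intro hy
    by_contra hM
    have hne : connectedComponent y ≠ {y} := hy
    apply hne
    rw [hiff]
    have hyF : (y : ℝ×ℝ) ∈ F A := y.2.resolve_left hM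
    obtain ⟨u, hu⟩ := hyF
    rw [← hu]
    exact sl_K_filler A u
  · intro hM hy
    rw [hiff] at hy
    rcases mem_M_elim hM with h | ⟨n, h⟩ | ⟨n, i, k, hA, hin, h⟩
    · rw [(mem_JJ_iff.1 h).1, sl_K_zero] at hy
      exact prod_Icc_ne_singleton (by norm_num : (0:ℝ) < 1) _ hy
    · rw [(mem_V_iff.1 h).1, sl_K_v] at hy
      exact prod_Icc_ne_singleton (by norm_num : (0:ℝ) < 1) _ hy
    · rw [(mem_ED_iff.1 h).1, sl_K_xo hA hin] at hy
      refine prod_Icc_ne_singleton ?_ _ hy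
      have h1 : (0:ℝ) < v k / (4*(n+1)) := by
        have := v_pos k
        positivity
      linarith

lemma val_image_deg (A : Set ℕ) : Subtype.val '' deg (KT A) = M A := by
  ext p
  constructor
  · rintro ⟨y, hy, rfl⟩
    exact (mem_deg_KT y).1 hy
  · intro hp
    exact ⟨⟨p, M_subset_K A hp⟩, (mem_deg_KT _).2 hp, rfl⟩

lemma val_image_closure {A : Set ℕ} (s : Set (KT A)) :
    Subtype.val '' closure s = closure (Subtype.val '' s) :=
  ((isClosed_K A).isClosedEmbedding_subtypeVal.closure_image_eq s).symm

lemma val_image_tset {A : Set ℕ} (y : KT A) :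
    Subtype.val '' tset y
      = sl (K A) (y : ℝ×ℝ).1 ∩ closure (M A \ sl (K A) (y : ℝ×ℝ).1) := by
  unfold tset
  rw [Set.image_inter Subtype.val_injective, val_image_closure,
    Set.image_diff Subtype.val_injective, val_image_deg, val_image_connectedComponent]

lemma tset_ncard_eq {A : Set ℕ} (y : KT A) :
    (tset y).ncard = (sl (K A) (y : ℝ×ℝ).1 ∩ closure (M A \ sl (K A) (y : ℝ×ℝ).1)).ncard := by
  rw [← val_image_tset, Set.ncard_image_of_injective _ Subtype.val_injective]

lemma invar_KT (A : Set ℕ) : invar (KT A) = (fun n => n + 1) '' A := by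
  ext m
  constructor
  · rintro ⟨h1, y, hy⟩
    rw [tset_ncard_eq] at hy
    rcases mem_K_elim y.2 with h | ⟨n, h⟩ | ⟨n, i, k, hA, hin, h⟩ | ⟨u, hu⟩
    · exfalso
      rw [(mem_JJ_iff.1 h).1, sl_K_zero, Tset_JJ, JJ_infinite.ncard] at hy
      omega
    · rw [(mem_V_iff.1 h).1, sl_K_v] at hy
      by_cases hA : n ∈ A
      · rw [Tset_V hA, tops_ncard] at hy
        exact ⟨n, hA, hy⟩
      · exfalso
        rw [Tset_V_empty hA, Set.ncard_empty] at hy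
        omega
    · exfalso
      rw [(mem_ED_iff.1 h).1, sl_K_xo hA hin, Tset_ED hA hin, Set.ncard_empty] at hy
      omega
    · exfalso
      rw [hu, sl_K_filler A u, Set.diff_singleton_eq_self (filler_not_mem_M A u),
        (isClosed_M A).closure_eq, Set.singleton_inter_eq_empty.2 (filler_not_mem_M A u),
        Set.ncard_empty] at hy
      omega
  · rintro ⟨n, hA, rfl⟩
    refine ⟨Nat.succ_le_succ (Nat.zero_le n), ?_⟩
    refine ⟨⟨(v n, 0), M_subset_K A (V_subset_M A n (mem_V_iff.2 ⟨rfl, le_refl 0, by norm_num⟩))⟩, ?_⟩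
    rw [tset_ncard_eq]
    show (sl (K A) (v n, (0:ℝ)).1 ∩ _).ncard = n + 1
    rw [show ((v n, (0:ℝ)) : ℝ×ℝ).1 = v n from rfl, sl_K_v, Tset_V hA, tops_ncard]

/-! ### Final ingredients -/

lemma mk_KT (A : Set ℕ) : Cardinal.mk (KT A) = Cardinal.continuum := by
  apply le_antisymm
  · calc Cardinal.mk (KT A) ≤ Cardinal.mk (ℝ×ℝ) := Cardinal.mk_set_le _
      _ = Cardinal.continuum := by
          rw [Cardinal.mk_prod, Cardinal.mk_real]
          simp only [Cardinal.lift_id]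
          exact Cardinal.mul_eq_self Cardinal.aleph0_le_continuum
  · have hinj : Function.Injective (fun y : ↥(Icc (0:ℝ) 1) =>
        (⟨((0:ℝ), (y:ℝ)), M_subset_K A (JJ_subset_M A (mem_JJ_iff.2 ⟨rfl, y.2⟩))⟩ : KT A)) := by
      intro a b hab
      have h1 : ((0:ℝ), (a:ℝ)) = ((0:ℝ), (b:ℝ)) := Subtype.ext_iff.1 hab
      exact Subtype.ext (Prod.ext_iff.1 h1).2
    calc Cardinal.continuum = Cardinal.mk ↥(Icc (0:ℝ) 1) :=
          (Cardinal.mk_Icc_real (by norm_num : (0:ℝ) < 1)).symm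
      _ ≤ Cardinal.mk (KT A) := Cardinal.mk_le_of_injective hinj

def emb (A : Set ℕ) (u : ℕ) : KT A := ⟨filler A u, filler_mem_K A u⟩

lemma emb_injective (A : Set ℕ) : Function.Injective (emb A) := by
  intro a b hab
  rw [Subtype.ext_iff] at hab
  exact filler_fst_inj A (congrArg Prod.fst hab)

lemma emb_isolated (A : Set ℕ) (u : ℕ) : IsOpen ({emb A u} : Set (KT A)) := by
  obtain ⟨ε, hε, hiso⟩ := filler_isolated A u
  have heq : ({emb A u} : Set (KT A)) = Metric.ball (emb A u) ε := by
    ext y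
    constructor
    · rintro rfl
      exact Metric.mem_ball_self hε
    · intro hy
      rw [Metric.mem_ball, Subtype.dist_eq] at hy
      exact Subtype.ext (hiso y.1 y.2 hy)
  rw [heq]
  exact Metric.isOpen_ball

lemma denseRange_emb (A : Set ℕ) : DenseRange (emb A) := by
  rw [Metric.denseRange_iff]
  intro y r hr
  have hy := K_subset_closure_F A y.2
  rw [Metric.mem_closure_iff] at hy
  obtain ⟨b, ⟨u, rfl⟩, hb⟩ := hy r hr
  exact ⟨u, by rwa [Subtype.dist_eq]⟩

lemma nonhomeo {A B : Set ℕ} (h : KT A ≃ₜ KT B) : A = B := by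
  have hinv := invar_congr h
  rw [invar_KT, invar_KT] at hinv
  have hinj : Function.Injective (fun n : ℕ => n + 1) := fun a b hab => by
    have : a + 1 = b + 1 := hab
    omega
  exact Set.image_injective.2 hinj hinv

end Stmt11

/-- A countably infinite discrete space `X` has continuum many
pairwise non-homeomorphic metrizable compactifications, each of cardinality
continuum: there is an `ℝ`-indexed family of compact metrizable spaces of
cardinality continuum, each containing a dense homeomorphic copy of `X`, which
are pairwise non-homeomorphic. -/
theorem stmt_11 (X : Type) [TopologicalSpace X] [DiscreteTopology X]
    [Countable X] [Infinite X] :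
    ∃ (K : ℝ → Type) (tK : ∀ r, TopologicalSpace (K r)),
      (∀ r, @CompactSpace (K r) (tK r)) ∧
      (∀ r, @TopologicalSpace.MetrizableSpace (K r) (tK r)) ∧
      (∀ r, Cardinal.mk (K r) = Cardinal.continuum) ∧
      (∀ r, ∃ e : X → K r, @Topology.IsEmbedding X (K r) _ (tK r) e ∧
        @DenseRange (K r) (tK r) X e) ∧
      (∀ r s : ℝ, r ≠ s → ¬ Nonempty (@Homeomorph (K r) (K s) (tK r) (tK s))) := by
  classical
  obtain ⟨f⟩ : Nonempty (ℝ ≃ Set ℕ) := by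
    apply Cardinal.eq.1
    rw [Cardinal.mk_real, Cardinal.mk_set, Cardinal.mk_nat, Cardinal.two_power_aleph0]
  obtain ⟨g⟩ : Nonempty (X ≃ ℕ) := nonempty_equiv_of_countable
  refine ⟨fun r => Stmt11.KT (f r), fun _ => inferInstance, ?_, ?_, ?_, ?_, ?_⟩
  · exact fun r => isCompact_iff_compactSpace.1 (Stmt11.isCompact_K _)
  · exact fun r => inferInstance
  · exact fun r => Stmt11.mk_KT _
  · intro r
    refine ⟨fun x => Stmt11.emb (f r) (g x), ?_, ?_⟩
    · rw [Topology.isEmbedding_iff]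
      constructor
      · rw [Topology.isInducing_iff_nhds]
        intro x
        rw [nhds_discrete, (isOpen_singleton_iff_nhds_eq_pure _).1 (Stmt11.emb_isolated _ _),
          Filter.comap_pure]
        have hpre : (fun x => Stmt11.emb (f r) (g x)) ⁻¹' {Stmt11.emb (f r) (g x)} = {x} := by
          ext x'
          simp only [mem_preimage, mem_singleton_iff]
          constructor
          · intro h
            exact g.injective (Stmt11.emb_injective _ h)
          · rintro rfl
            rfl
        rw [hpre, Filter.principal_singleton]
      · intro a b hab
        exact g.injective (Stmt11.emb_injective _ hab)
    · have hr : Set.range (fun x => Stmt11.emb (f r) (g x)) = Set.range (Stmt11.emb (f r)) := by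
        ext y
        constructor
        · rintro ⟨x, rfl⟩
          exact ⟨g x, rfl⟩
        · rintro ⟨u, rfl⟩
          exact ⟨g.symm u, by simp⟩
      rw [DenseRange, hr]
      exact Stmt11.denseRange_emb _
  · rintro r s hrs ⟨h⟩
    exact hrs (f.injective (Stmt11.nonhomeo h))
end
end

section
/- Every open subset U of ℝ whose subspace topology has infinitely many connected components is homeomorphic to the subspace ℝ \ ℤ of ℝ. -/
open Set Topology

noncomputable section Stmt16Aux

private lemma aux_no_min {s : Set ℝ} (ho : IsOpen s) {a : ℝ} (ha : a ∈ s)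
    (h : ∀ x ∈ s, a ≤ x) : False := by
  rcases Metric.isOpen_iff.1 ho a ha with ⟨ε, hε, hb⟩
  have h2 : a - ε / 2 ∈ s := hb (by
    rw [Metric.mem_ball, Real.dist_eq, show a - ε / 2 - a = -(ε / 2) by ring, abs_neg,
      abs_of_nonneg (by linarith)]
    linarith)
  linarith [h _ h2]

private lemma aux_no_max {s : Set ℝ} (ho : IsOpen s) {a : ℝ} (ha : a ∈ s)
    (h : ∀ x ∈ s, x ≤ a) : False := by
  rcases Metric.isOpen_iff.1 ho a ha with ⟨ε, hε, hb⟩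
  have h2 : a + ε / 2 ∈ s := hb (by
    rw [Metric.mem_ball, Real.dist_eq, show a + ε / 2 - a = ε / 2 by ring,
      abs_of_nonneg (by linarith)]
    linarith)
  linarith [h _ h2]

/-- Transport a homeomorphism of `ℝ` to a homeomorphism between a set and its image. -/
private def homeoOfImageEq (e : ℝ ≃ₜ ℝ) {s t : Set ℝ} (h : e '' s = t) : ↥s ≃ₜ ↥t :=
  (e.image s).trans (Homeomorph.setCongr h)

private lemma ioiHomeo (a : ℝ) : Nonempty (↥(Ioi a) ≃ₜ ℝ) := by
  have h : (Homeomorph.addLeft a) '' Ioi (0 : ℝ) = Ioi a := by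
    show (fun x => a + x) '' Ioi (0 : ℝ) = Ioi a
    rw [image_const_add_Ioi, add_zero]
  exact ⟨(homeoOfImageEq _ h).symm.trans Real.expOrderIso.toHomeomorph.symm⟩

private lemma iioHomeo (b : ℝ) : Nonempty (↥(Iio b) ≃ₜ ℝ) := by
  obtain ⟨e⟩ := ioiHomeo (-b)
  have h : (Homeomorph.neg ℝ) '' Ioi (-b) = Iio b := by
    show Neg.neg '' Ioi (-b) = Iio b
    ext x
    simp only [mem_image, mem_Ioi, mem_Iio]
    constructor
    · rintro ⟨y, hy, rfl⟩
      linarith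
    · intro hx
      exact ⟨-x, by linarith, by ring⟩
  exact ⟨(homeoOfImageEq _ h).symm.trans e⟩

private lemma iooHomeo {a b : ℝ} (hab : a < b) : Nonempty (↥(Ioo a b) ≃ₜ ℝ) := by
  have hk : 0 < (b - a) / Real.pi := div_pos (by linarith) Real.pi_pos
  have hπ : Real.pi ≠ 0 := Real.pi_ne_zero
  have himg : (affineHomeomorph ((b - a) / Real.pi) ((a + b) / 2) hk.ne') ''
      Ioo (-(Real.pi / 2)) (Real.pi / 2) = Ioo a b := by
    show ((b - a) / Real.pi * · + (a + b) / 2) '' Ioo (-(Real.pi / 2)) (Real.pi / 2) = Ioo a b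
    rw [image_affine_Ioo hk]
    have e1 : (b - a) / Real.pi * (-(Real.pi / 2)) + (a + b) / 2 = a := by
      field_simp
      ring
    have e2 : (b - a) / Real.pi * (Real.pi / 2) + (a + b) / 2 = b := by
      field_simp
      ring
    rw [e1, e2]
  exact ⟨(homeoOfImageEq _ himg).symm.trans Real.tanOrderIso.toHomeomorph⟩

private lemma open_preconn {s : Set ℝ} (ho : IsOpen s) (hc : IsPreconnected s)
    (hne : s.Nonempty) : Nonempty (↥s ≃ₜ ℝ) := by
  obtain ⟨x, hx⟩ := hne
  set a := sInf s with ha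
  set b := sSup s with hb
  have hmem := hc.mem_intervals
  simp only [mem_insert_iff, mem_singleton_iff] at hmem
  rcases hmem with hs | hs | hs | hs | hs | hs | hs | hs | hs | hs
  · -- Icc
    rw [hs] at hx
    exact (aux_no_min ho (show a ∈ s by rw [hs]; exact ⟨le_rfl, hx.1.trans hx.2⟩)
      (fun y hy => by rw [hs] at hy; exact hy.1)).elim
  · -- Ico
    rw [hs] at hx
    exact (aux_no_min ho (show a ∈ s by rw [hs]; exact ⟨le_rfl, lt_of_le_of_lt hx.1 hx.2⟩)
      (fun y hy => by rw [hs] at hy; exact hy.1)).elim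
  · -- Ioc
    rw [hs] at hx
    exact (aux_no_max ho (show b ∈ s by rw [hs]; exact ⟨lt_of_lt_of_le hx.1 hx.2, le_rfl⟩)
      (fun y hy => by rw [hs] at hy; exact hy.2)).elim
  · -- Ioo
    rw [hs] at hx
    obtain ⟨e⟩ := iooHomeo (hx.1.trans hx.2)
    exact ⟨(Homeomorph.setCongr hs).trans e⟩
  · -- Ici
    exact (aux_no_min ho (show a ∈ s by rw [hs]; exact self_mem_Ici)
      (fun y hy => by rw [hs] at hy; exact hy)).elim
  · -- Ioi
    obtain ⟨e⟩ := ioiHomeo (a)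
    exact ⟨(Homeomorph.setCongr hs).trans e⟩
  · -- Iic
    exact (aux_no_max ho (show b ∈ s by rw [hs]; exact self_mem_Iic)
      (fun y hy => by rw [hs] at hy; exact hy)).elim
  · -- Iio
    obtain ⟨e⟩ := iioHomeo (b)
    exact ⟨(Homeomorph.setCongr hs).trans e⟩
  · -- univ
    exact ⟨(Homeomorph.setCongr hs).trans (Homeomorph.Set.univ ℝ)⟩
  · -- empty
    rw [hs] at hx
    exact absurd hx (notMem_empty x)

/-- The key structure theorem: an open subset of `ℝ` with infinitely many connected
components is homeomorphic to `Σ _ : ℕ, ℝ`. -/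
private lemma key {U : Set ℝ} (hU : IsOpen U) (h : Infinite (ConnectedComponents ↥U)) :
    Nonempty (↥U ≃ₜ (Σ _ : ℕ, ℝ)) := by
  haveI := hU.locallyConnectedSpace
  set f : ↥U → ConnectedComponents ↥U := ConnectedComponents.mk with hf
  have hfiber : ∀ c, ∃ x : ↥U, f ⁻¹' {c} = connectedComponent x := by
    intro c
    obtain ⟨x, rfl⟩ := ConnectedComponents.surjective_coe c
    exact ⟨x, connectedComponents_preimage_singleton⟩
  have hopen : ∀ c, IsOpen (f ⁻¹' {c}) := by
    intro c
    obtain ⟨x, hx⟩ := hfiber c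
    rw [hx]
    exact isOpen_connectedComponent
  set S : ConnectedComponents ↥U → Set ℝ := fun c => Subtype.val '' (f ⁻¹' {c}) with hS
  have hSopen : ∀ c, IsOpen (S c) := fun c => hU.isOpenMap_subtype_val _ (hopen c)
  have hSne : ∀ c, (S c).Nonempty := by
    intro c
    obtain ⟨x, hx⟩ := hfiber c
    exact ⟨x, mem_image_of_mem _ (by rw [hx]; exact mem_connectedComponent)⟩
  have hSconn : ∀ c, IsPreconnected (S c) := by
    intro c
    obtain ⟨x, hx⟩ := hfiber c
    have : S c = Subtype.val '' connectedComponent x := by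
      show Subtype.val '' (f ⁻¹' {c}) = _
      rw [hx]
    rw [this]
    exact isPreconnected_connectedComponent.image _ continuous_subtype_val.continuousOn
  -- countability of components
  have hq : ∀ c, ∃ q : ℚ, (q : ℝ) ∈ S c := fun c =>
    Rat.denseRange_cast.exists_mem_open (hSopen c) (hSne c)
  choose q hq using hq
  have hinj : Function.Injective q := by
    intro c c' hcc
    obtain ⟨x, hxc, hxq⟩ := hq c
    obtain ⟨y, hyc, hyq⟩ := hq c'
    have hxy : x = y := Subtype.val_injective (by rw [hxq, hyq, hcc])
    have h1 : f x = c := hxc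
    have h2 : f y = c' := hyc
    rw [← h1, ← h2, hxy]
  haveI hcount : Countable (ConnectedComponents ↥U) := hinj.countable
  letI : Encodable (ConnectedComponents ↥U) := Encodable.ofCountable _
  letI : Denumerable (ConnectedComponents ↥U) := Denumerable.ofEncodableOfInfinite _
  let e : ConnectedComponents ↥U ≃ ℕ := Denumerable.eqv _
  -- each fiber is homeomorphic to ℝ
  have hfib : ∀ c, Nonempty (↥(f ⁻¹' {c}) ≃ₜ ℝ) := by
    intro c
    have emb : IsEmbedding ((Subtype.val : ↥U → ℝ) ∘ (Subtype.val : ↥(f ⁻¹' {c}) → ↥U)) :=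
      IsEmbedding.subtypeVal.comp IsEmbedding.subtypeVal
    have hrange : Set.range ((Subtype.val : ↥U → ℝ) ∘ (Subtype.val : ↥(f ⁻¹' {c}) → ↥U))
        = S c := by
      rw [Set.range_comp, Subtype.range_coe]
    obtain ⟨h2⟩ := open_preconn (hSopen c) (hSconn c) (hSne c)
    exact ⟨(emb.toHomeomorph.trans (Homeomorph.setCongr hrange)).trans h2⟩
  have φ : ∀ c, ↥(f ⁻¹' {c}) ≃ₜ ℝ := fun c => (hfib c).some
  -- sigma decomposition of U
  let E : (Σ c, ↥(f ⁻¹' {c})) ≃ ↥U :=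
    { toFun := fun p => p.2.1
      invFun := fun x => ⟨f x, x, rfl⟩
      left_inv := by
        rintro ⟨c, x, hx⟩
        have hx' : f x = c := hx
        subst hx'
        rfl
      right_inv := fun x => rfl }
  have Econt : Continuous E := continuous_sigma fun c => continuous_subtype_val
  have Eopen : IsOpenMap E := isOpenMap_sigma.2 fun c => (hopen c).isOpenMap_subtype_val
  have hsig : IsHomeomorph (Sigma.map e (fun c => φ c) :
      (Σ c, ↥(f ⁻¹' {c})) → Σ _ : ℕ, ℝ) :=
    IsHomeomorph.sigmaMap e.bijective fun c => (φ c).isHomeomorph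
  exact ⟨(E.toHomeomorphOfContinuousOpen Econt Eopen).symm.trans (hsig.homeomorph _)⟩

private lemma mem_compl_int (n : ℕ) : ((n : ℝ) + 1 / 2) ∈ (Set.range ((↑) : ℤ → ℝ))ᶜ := by
  rintro ⟨m, hm⟩
  have h2 : ((2 * m : ℤ) : ℝ) = ((2 * (n : ℤ) + 1 : ℤ) : ℝ) := by push_cast; linarith
  have := Int.cast_injective h2
  omega

private lemma inf_components :
    Infinite (ConnectedComponents ↥((Set.range ((↑) : ℤ → ℝ))ᶜ)) := by
  set V := (Set.range ((↑) : ℤ → ℝ))ᶜ with hV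
  have key2 : ∀ n m : ℕ, n < m →
      (ConnectedComponents.mk (⟨(n : ℝ) + 1 / 2, mem_compl_int n⟩ : ↥V) :
        ConnectedComponents ↥V) ≠
      ConnectedComponents.mk (⟨(m : ℝ) + 1 / 2, mem_compl_int m⟩ : ↥V) := by
    intro n m hnm heq
    rw [ConnectedComponents.coe_eq_coe] at heq
    set x : ↥V := ⟨(n : ℝ) + 1 / 2, mem_compl_int n⟩ with hx
    set y : ↥V := ⟨(m : ℝ) + 1 / 2, mem_compl_int m⟩ with hy
    set T : Set ℝ := Subtype.val '' (connectedComponent x : Set ↥V) with hT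
    have hTconn : IsPreconnected T :=
      isPreconnected_connectedComponent.image _ continuous_subtype_val.continuousOn
    have hxT : ((n : ℝ) + 1 / 2) ∈ T := ⟨x, mem_connectedComponent, rfl⟩
    have hyT : ((m : ℝ) + 1 / 2) ∈ T :=
      ⟨y, by rw [heq]; exact mem_connectedComponent, rfl⟩
    have hTV : T ⊆ V := by
      rintro t ⟨z, _, rfl⟩
      exact z.2
    have hord : OrdConnected T := hTconn.ordConnected
    have hmn : (n : ℝ) + 1 ≤ (m : ℝ) + 1 / 2 := by
      have : (n : ℝ) + 1 ≤ (m : ℝ) := by exact_mod_cast hnm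
      linarith
    have hmem : ((n : ℝ) + 1) ∈ T :=
      hord.out hxT hyT ⟨by linarith, hmn⟩
    exact hTV hmem ⟨(n : ℤ) + 1, by push_cast; ring⟩
  apply Infinite.of_injective
    (fun n : ℕ => (ConnectedComponents.mk (⟨(n : ℝ) + 1 / 2, mem_compl_int n⟩ : ↥V) :
      ConnectedComponents ↥V))
  intro n m hnm
  by_contra hne
  rcases lt_trichotomy n m with hlt | hEq | hlt
  · exact key2 n m hlt hnm
  · exact hne hEq
  · exact key2 m n hlt hnm.symm

end Stmt16Aux

/-- Every open subset of `ℝ` with infinitely many connected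
components is homeomorphic to `ℝ \ ℤ`. -/
theorem stmt_16 (U : Set ℝ) (hU : IsOpen U)
    (h : Infinite (ConnectedComponents ↥U)) :
    Nonempty (↥U ≃ₜ ↥((Set.range ((↑) : ℤ → ℝ))ᶜ)) := by
  have hV : IsOpen ((Set.range ((↑) : ℤ → ℝ))ᶜ) :=
    Int.isClosedEmbedding_coe_real.isClosed_range.isOpen_compl
  obtain ⟨e1⟩ := key hU h
  obtain ⟨e2⟩ := key hV inf_components
  exact ⟨e1.trans e2.symm⟩
end

section
/- There exists a family of totally disconnected subsets of ℝ that has cardinality 2^𝔠 (where 𝔠 is the cardinality of the continuum) and whose members are pairwise non-homeomorphic as topological subspaces of ℝ. -/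
open Cardinal Set

namespace Stmt17

noncomputable section

/-- The irrationals. -/
def Irr : Set ℝ := {x | Irrational x}

lemma totallyDisconnected_of_subset_irr {X : Set ℝ} (hX : X ⊆ Irr) :
    IsTotallyDisconnected X := by
  intro t htX ht a ha b hb
  by_contra hab
  rcases lt_or_gt_of_ne hab with h | h
  · rcases exists_rat_btwn h with ⟨q, hq1, hq2⟩
    exact Rat.not_irrational q (hX (htX (ht.Icc_subset ha hb ⟨hq1.le, hq2.le⟩)))
  · rcases exists_rat_btwn h with ⟨q, hq1, hq2⟩
    exact Rat.not_irrational q (hX (htX (ht.Icc_subset hb ha ⟨hq1.le, hq2.le⟩)))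

/-- Recovery of a set from countable data and a homeomorphic copy. -/
def phi (r : ℕ → ℝ × ℝ) (Y : Set ℝ) : Set ℝ :=
  {x | ∃ y ∈ Y, ∀ ε > 0, ∃ δ > 0, ∀ n, |(r n).1 - y| < δ → |(r n).2 - x| < ε}

lemma recover {X Y : Set ℝ} (hY : Y.Nonempty) (H : ↥X ≃ₜ ↥Y) :
    ∃ r : ℕ → ℝ × ℝ, X = phi r Y := by
  have : Nonempty ↥Y := hY.to_subtype
  obtain ⟨s, hsc, hsd⟩ := TopologicalSpace.exists_countable_dense ↥Y
  obtain ⟨f, hf⟩ := hsc.exists_eq_range hsd.nonempty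
  set g : ↥Y → ℝ := fun b => ((H.symm b : ↥X) : ℝ) with hg
  have hgc : Continuous g := continuous_subtype_val.comp H.symm.continuous
  have hden : ∀ (b : ↥Y) (δ : ℝ), 0 < δ → ∃ n, dist (f n) b < δ := by
    intro b δ hδ
    have hb : b ∈ closure s := hsd b
    rw [Metric.mem_closure_iff] at hb
    obtain ⟨a, has, ha⟩ := hb δ hδ
    rw [hf] at has
    obtain ⟨n, rfl⟩ := has
    exact ⟨n, by rwa [dist_comm]⟩
  have hcont : ∀ (b₀ : ↥Y) (ε : ℝ), 0 < ε →
      ∃ δ > 0, ∀ b : ↥Y, dist b b₀ < δ → dist (g b) (g b₀) < ε := by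
    intro b₀ ε hε
    obtain ⟨δ, hδ, hq⟩ := Metric.continuousAt_iff.mp hgc.continuousAt ε hε
    exact ⟨δ, hδ, fun b hb => hq hb⟩
  refine ⟨fun n => ((f n : ℝ), g (f n)), ?_⟩
  ext x
  constructor
  · intro hx
    refine ⟨(H ⟨x, hx⟩ : ℝ), (H ⟨x, hx⟩).2, ?_⟩
    intro ε hε
    obtain ⟨δ, hδ, hcb⟩ := hcont (H ⟨x, hx⟩) ε hε
    refine ⟨δ, hδ, fun n hn => ?_⟩
    have h1 : dist (f n) (H ⟨x, hx⟩) < δ := by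
      rw [Subtype.dist_eq, Real.dist_eq]; exact hn
    have h2 := hcb _ h1
    have h3 : g (H ⟨x, hx⟩) = x := by
      simp [hg]
    rw [h3, Real.dist_eq] at h2
    exact h2
  · rintro ⟨y, hy, P⟩
    have hx0 : x = g ⟨y, hy⟩ := by
      by_contra hne
      have hpos : 0 < |x - g ⟨y, hy⟩| / 2 := by
        have : x - g ⟨y, hy⟩ ≠ 0 := sub_ne_zero.mpr hne
        positivity
      obtain ⟨δ₁, hδ₁, h1⟩ := P _ hpos
      obtain ⟨δ₂, hδ₂, h2⟩ := hcont ⟨y, hy⟩ _ hpos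
      obtain ⟨n, hn⟩ := hden ⟨y, hy⟩ (min δ₁ δ₂) (lt_min hδ₁ hδ₂)
      rw [Subtype.dist_eq, Real.dist_eq] at hn
      have e2 := h1 n (lt_of_lt_of_le hn (min_le_left _ _))
      have e3 := h2 (f n) (by rw [Subtype.dist_eq, Real.dist_eq]; exact lt_of_lt_of_le hn (min_le_right _ _))
      rw [Real.dist_eq] at e3
      have e2' : |x - g (f n)| < |x - g ⟨y, hy⟩| / 2 := by
        have h := e2
        rw [abs_sub_comm] at h
        exact h
      have : |x - g ⟨y, hy⟩| < |x - g ⟨y, hy⟩| := by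
        calc |x - g ⟨y, hy⟩| ≤ |x - g (f n)| + |g (f n) - g ⟨y, hy⟩| := abs_sub_le _ _ _
          _ < |x - g ⟨y, hy⟩| / 2 + |x - g ⟨y, hy⟩| / 2 := add_lt_add e2' e3
          _ = |x - g ⟨y, hy⟩| := by ring
      exact lt_irrefl _ this
    rw [hx0]
    exact (H.symm ⟨y, hy⟩).2

lemma mk_data_le : #(ℕ → ℝ × ℝ) ≤ continuum := by
  have h1 : #(ℕ → ℝ × ℝ) = #(ℝ × ℝ) ^ (ℵ₀ : Cardinal) := by
    rw [← Cardinal.power_def, mk_nat]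
  rw [h1]
  have h2 : #(ℝ × ℝ) = continuum := by
    simp [Cardinal.mk_prod, Cardinal.mk_real, Cardinal.mul_eq_self aleph0_le_continuum]
  rw [h2, continuum_power_aleph0]

lemma class_le (Y : Set ℝ) :
    #{X : Set ℝ // Nonempty (↥X ≃ₜ ↥Y)} ≤ continuum := by
  rcases eq_empty_or_nonempty Y with hY | hY
  · have hsub : ∀ p : {X : Set ℝ // Nonempty (↥X ≃ₜ ↥Y)}, p.1 = ∅ := by
      rintro ⟨X, ⟨H⟩⟩
      have hYe : IsEmpty ↥Y := by rw [hY]; exact Set.isEmpty_coe_sort.mpr rfl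
      have hXe : IsEmpty ↥X := ⟨fun a => hYe.false (H a)⟩
      exact Set.isEmpty_coe_sort.mp hXe
    have hinj : Function.Injective (fun _ : {X : Set ℝ // Nonempty (↥X ≃ₜ ↥Y)} => (() : Unit)) :=
      fun p q _ => Subtype.ext ((hsub p).trans (hsub q).symm)
    refine (Cardinal.mk_le_of_injective hinj).trans ?_
    simp only [Cardinal.mk_eq_one]
    exact le_trans (by norm_num) aleph0_le_continuum
  · have key : ∀ p : {X : Set ℝ // Nonempty (↥X ≃ₜ ↥Y)}, ∃ r, p.1 = phi r Y := by
      rintro ⟨X, ⟨H⟩⟩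
      exact recover hY H
    choose F hF using key
    have hinj : Function.Injective F := by
      intro p q hpq
      apply Subtype.ext
      rw [hF p, hF q, hpq]
    exact (Cardinal.mk_le_of_injective hinj).trans mk_data_le

/-- The setoid of subsets of the irrationals under homeomorphism. -/
def T : Type := {S : Set ℝ // S ⊆ Irr}

instance homeoSetoid : Setoid T :=
  ⟨fun A B => Nonempty (↥A.1 ≃ₜ ↥B.1),
   fun _ => ⟨Homeomorph.refl _⟩,
   fun ⟨h⟩ => ⟨h.symm⟩,
   fun ⟨h⟩ ⟨h'⟩ => ⟨h.trans h'⟩⟩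

lemma mk_Irr : #↥Irr = continuum := by
  have : Irr = (Set.range ((↑) : ℚ → ℝ))ᶜ := rfl
  rw [this]
  have hlt : #↥(Set.range ((↑) : ℚ → ℝ)) < #ℝ := by
    have : #↥(Set.range ((↑) : ℚ → ℝ)) ≤ ℵ₀ := (Set.countable_range _).le_aleph0
    rw [Cardinal.mk_real]
    exact this.trans_lt aleph0_lt_continuum
  rw [Cardinal.mk_compl_of_infinite _ hlt, Cardinal.mk_real]

lemma mk_T : #T = 2 ^ continuum := by
  have e : T ≃ Set ↥Irr := Equiv.Set.powerset Irr
  rw [Cardinal.mk_congr e, Cardinal.mk_set, mk_Irr]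

lemma fiber_le (q : Quotient homeoSetoid) :
    #{x : T // Quotient.mk homeoSetoid x = q} ≤ continuum := by
  have hmap : ∀ p : {x : T // Quotient.mk homeoSetoid x = q},
      Nonempty (↥p.1.1 ≃ₜ ↥(q.out.1)) := by
    rintro ⟨x, hx⟩
    exact Quotient.exact (hx.trans q.out_eq.symm)
  have hinj : Function.Injective (fun p : {x : T // Quotient.mk homeoSetoid x = q} =>
      (⟨p.1.1, hmap p⟩ : {X : Set ℝ // Nonempty (↥X ≃ₜ ↥(q.out.1))})) := by
    intro p p' h
    have h2 : p.1.1 = p'.1.1 := by simpa using h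
    exact Subtype.ext (Subtype.ext h2)
  exact (Cardinal.mk_le_of_injective hinj).trans (class_le _)

lemma mk_T_le : #T ≤ #(Quotient homeoSetoid) * continuum := by
  calc #T = #(Σ q : Quotient homeoSetoid, {x : T // Quotient.mk homeoSetoid x = q}) :=
        Cardinal.mk_congr (Equiv.sigmaFiberEquiv _).symm
    _ = Cardinal.sum (fun q => #{x : T // Quotient.mk homeoSetoid x = q}) := Cardinal.mk_sigma _
    _ ≤ Cardinal.sum (fun _ : Quotient homeoSetoid => continuum) :=
        Cardinal.sum_le_sum _ _ fiber_le
    _ = #(Quotient homeoSetoid) * continuum := Cardinal.sum_const' _ _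

lemma mk_Q : #(Quotient homeoSetoid) = 2 ^ continuum := by
  apply le_antisymm
  · exact Cardinal.mk_quotient_le.trans_eq mk_T
  · by_contra hlt
    push_neg at hlt
    have h := mk_T_le
    rw [mk_T] at h
    have hbig : #(Quotient homeoSetoid) * continuum < 2 ^ continuum := by
      apply Cardinal.mul_lt_of_lt
      · exact aleph0_le_continuum.trans (Cardinal.cantor continuum).le
      · exact hlt
      · exact Cardinal.cantor continuum
    exact absurd (h.trans_lt hbig) (lt_irrefl _)

end

end Stmt17

/-- There is a family of totally disconnected subsets of `ℝ`
of cardinality `2^𝔠` whose members are pairwise non-homeomorphic. -/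
theorem stmt_17 :
    ∃ 𝓕 : Set (Set ℝ),
      Cardinal.mk 𝓕 = 2 ^ Cardinal.continuum ∧
      (∀ X ∈ 𝓕, IsTotallyDisconnected X) ∧
      (∀ X ∈ 𝓕, ∀ Y ∈ 𝓕, X ≠ Y → ¬ Nonempty (↥X ≃ₜ ↥Y)) := by
  classical
  refine ⟨Set.range (fun q : Quotient Stmt17.homeoSetoid => q.out.1), ?_, ?_, ?_⟩
  · have hFinj : Function.Injective (fun q : Quotient Stmt17.homeoSetoid => q.out.1) :=
      fun q q' h => Quotient.out_injective (Subtype.ext h)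
    rw [Cardinal.mk_range_eq _ hFinj, Stmt17.mk_Q]
  · rintro X ⟨q, rfl⟩
    exact Stmt17.totallyDisconnected_of_subset_irr q.out.2
  · rintro X ⟨q, rfl⟩ Y ⟨q', rfl⟩ hne hhom
    have hq : q.out ≈ q'.out := hhom
    rw [Quotient.out_equiv_out] at hq
    exact hne (by rw [hq])
end

section
/- There exists a family of discrete subsets of ℝ that has the cardinality of the continuum and such that for any two distinct members D, E of the family there is no strictly increasing bijection from D onto E. -/
open Set

noncomputable section
namespace Stmt19

/-- `x` has an immediate successor in `s`. -/
def HasSucc (s : Set ℝ) (x : ℝ) : Prop := ∃ y ∈ s, x < y ∧ ∀ z ∈ s, x < z → y ≤ z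
/-- `x` has an immediate predecessor in `s`. -/
def HasPred (s : Set ℝ) (x : ℝ) : Prop := ∃ y ∈ s, y < x ∧ ∀ z ∈ s, z < x → z ≤ y

def w (n k : ℕ) : ℝ := 4*n + 1 - 1/(k+2)
def p (n : ℕ) : ℝ := 4*n + 5/4
def q (n : ℕ) : ℝ := 4*n + 3/2
def v (n k : ℕ) : ℝ := 4*n + 2 + 1/(k+2)

def S (A : Set ℕ) : Set ℝ :=
  {x | (∃ n k, x = w n k) ∨ (∃ n, n ∉ A ∧ x = p n) ∨ (∃ n, x = q n) ∨ (∃ n k, x = v n k)}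

lemma mem_w (A : Set ℕ) (n k : ℕ) : w n k ∈ S A := Or.inl ⟨n, k, rfl⟩
lemma mem_p {A : Set ℕ} {n : ℕ} (hn : n ∉ A) : p n ∈ S A := Or.inr (Or.inl ⟨n, hn, rfl⟩)
lemma mem_q (A : Set ℕ) (n : ℕ) : q n ∈ S A := Or.inr (Or.inr (Or.inl ⟨n, rfl⟩))
lemma mem_v (A : Set ℕ) (n k : ℕ) : v n k ∈ S A := Or.inr (Or.inr (Or.inr ⟨n, k, rfl⟩))

lemma nat_eq {m n : ℕ} (h1 : (m:ℝ) < (n:ℝ) + 1) (h2 : (n:ℝ) < (m:ℝ) + 1) : m = n := by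
  have h1' : m < n + 1 := by exact_mod_cast h1
  have h2' : n < m + 1 := by exact_mod_cast h2
  omega

lemma i2pos (k : ℕ) : 0 < 1/((k:ℝ)+2) := by positivity
lemma i2le (k : ℕ) : 1/((k:ℝ)+2) ≤ 1/2 := by
  apply one_div_le_one_div_of_le (by norm_num)
  have hk : (0:ℝ) ≤ (k:ℝ) := Nat.cast_nonneg k
  linarith
lemma i1pos (k : ℕ) : 0 < 1/((k:ℝ)+1) := by positivity
lemma i1le (k : ℕ) : 1/((k:ℝ)+1) ≤ 1 := by
  rw [div_le_one (by positivity)]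
  have hk : (0:ℝ) ≤ (k:ℝ) := Nat.cast_nonneg k
  linarith
lemma i3pos (k : ℕ) : 0 < 1/((k:ℝ)+3) := by positivity

lemma one_div_lt_rev {x y : ℝ} (hx : 0 < x) (h : 1/x < 1/y) : y < x := by
  by_contra hc
  push_neg at hc
  exact absurd h (not_lt.2 (one_div_le_one_div_of_le hx hc))

lemma w_succ (n k : ℕ) : w n (k+1) = 4*(n:ℝ) + 1 - 1/((k:ℝ)+3) := by
  simp only [w]; push_cast; ring
lemma v_succ (n k : ℕ) : v n (k+1) = 4*(n:ℝ) + 2 + 1/((k:ℝ)+3) := by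
  simp only [v]; push_cast; ring
lemma w_zero (n : ℕ) : w n 0 = 4*(n:ℝ) + 1/2 := by simp only [w]; push_cast; ring
lemma v_zero (n : ℕ) : v n 0 = 4*(n:ℝ) + 5/2 := by simp only [v]; push_cast; ring

/-- Isolation around `w n k`. -/
lemma Iw {A : Set ℕ} {z : ℝ} (n k : ℕ) (hz : z ∈ S A)
    (hlo : 4*(n:ℝ) + 1 - 1/((k:ℝ)+1) < z) (hhi : z < 4*(n:ℝ) + 1 - 1/((k:ℝ)+3)) :
    z = w n k := by
  have hk1 := i1pos k; have hk1' := i1le k; have hk3 := i3pos k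
  rcases hz with ⟨m, j, rfl⟩ | ⟨m, hm, rfl⟩ | ⟨m, rfl⟩ | ⟨m, j, rfl⟩
  · have hj2 := i2pos j; have hj2' := i2le j
    simp only [w] at hlo hhi ⊢
    have hmn : m = n := nat_eq (by linarith) (by linarith)
    subst hmn
    have e1 : 1/((k:ℝ)+3) < 1/((j:ℝ)+2) := by linarith
    have e2 : 1/((j:ℝ)+2) < 1/((k:ℝ)+1) := by linarith
    have e1' := one_div_lt_rev (by positivity) e1
    have e2' := one_div_lt_rev (by positivity) e2
    have hjk : j = k := by
      have a1 : j + 2 < k + 3 := by exact_mod_cast e1'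
      have a2 : k + 1 < j + 2 := by exact_mod_cast e2'
      omega
    rw [hjk]
  · exfalso; simp only [p] at hlo hhi
    have hmn : m = n := nat_eq (by linarith) (by linarith)
    subst hmn; linarith
  · exfalso; simp only [q] at hlo hhi
    have hmn : m = n := nat_eq (by linarith) (by linarith)
    subst hmn; linarith
  · exfalso; have hj2 := i2pos j; have hj2' := i2le j
    simp only [v] at hlo hhi
    have hmn : m = n := nat_eq (by linarith) (by linarith)
    subst hmn; linarith

/-- Isolation around `p n`. -/
lemma Ip {A : Set ℕ} {z : ℝ} (n : ℕ) (hz : z ∈ S A)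
    (hlo : 4*(n:ℝ) + 1 < z) (hhi : z < 4*(n:ℝ) + 3/2) : z = p n := by
  rcases hz with ⟨m, j, rfl⟩ | ⟨m, hm, rfl⟩ | ⟨m, rfl⟩ | ⟨m, j, rfl⟩
  · exfalso; have hj2 := i2pos j; have hj2' := i2le j
    simp only [w] at hlo hhi
    have hmn : m = n := nat_eq (by linarith) (by linarith)
    subst hmn; linarith
  · simp only [p] at hlo hhi ⊢
    have hmn : m = n := nat_eq (by linarith) (by linarith)
    rw [hmn]
  · exfalso; simp only [q] at hlo hhi
    have hmn : m = n := nat_eq (by linarith) (by linarith)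
    subst hmn; linarith
  · exfalso; have hj2 := i2pos j; have hj2' := i2le j
    simp only [v] at hlo hhi
    have hmn : m = n := nat_eq (by linarith) (by linarith)
    subst hmn; linarith

/-- Isolation around `q n`. -/
lemma Iq {A : Set ℕ} {z : ℝ} (n : ℕ) (hz : z ∈ S A)
    (hlo : 4*(n:ℝ) + 5/4 < z) (hhi : z < 4*(n:ℝ) + 2) : z = q n := by
  rcases hz with ⟨m, j, rfl⟩ | ⟨m, hm, rfl⟩ | ⟨m, rfl⟩ | ⟨m, j, rfl⟩
  · exfalso; have hj2 := i2pos j; have hj2' := i2le j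
    simp only [w] at hlo hhi
    have hmn : m = n := nat_eq (by linarith) (by linarith)
    subst hmn; linarith
  · exfalso; simp only [p] at hlo hhi
    have hmn : m = n := nat_eq (by linarith) (by linarith)
    subst hmn; linarith
  · simp only [q] at hlo hhi ⊢
    have hmn : m = n := nat_eq (by linarith) (by linarith)
    rw [hmn]
  · exfalso; have hj2 := i2pos j; have hj2' := i2le j
    simp only [v] at hlo hhi
    have hmn : m = n := nat_eq (by linarith) (by linarith)
    subst hmn; linarith

/-- Isolation around `v n k`. -/
lemma Iv {A : Set ℕ} {z : ℝ} (n k : ℕ) (hz : z ∈ S A)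
    (hlo : 4*(n:ℝ) + 2 + 1/((k:ℝ)+3) < z) (hhi : z < 4*(n:ℝ) + 2 + 1/((k:ℝ)+1)) :
    z = v n k := by
  have hk1 := i1pos k; have hk1' := i1le k; have hk3 := i3pos k
  rcases hz with ⟨m, j, rfl⟩ | ⟨m, hm, rfl⟩ | ⟨m, rfl⟩ | ⟨m, j, rfl⟩
  · exfalso; have hj2 := i2pos j; have hj2' := i2le j
    simp only [w] at hlo hhi
    have hmn : m = n := nat_eq (by linarith) (by linarith)
    subst hmn; linarith
  · exfalso; simp only [p] at hlo hhi
    have hmn : m = n := nat_eq (by linarith) (by linarith)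
    subst hmn; linarith
  · exfalso; simp only [q] at hlo hhi
    have hmn : m = n := nat_eq (by linarith) (by linarith)
    subst hmn; linarith
  · have hj2 := i2pos j; have hj2' := i2le j
    simp only [v] at hlo hhi ⊢
    have hmn : m = n := nat_eq (by linarith) (by linarith)
    subst hmn
    have e1 : 1/((k:ℝ)+3) < 1/((j:ℝ)+2) := by linarith
    have e2 : 1/((j:ℝ)+2) < 1/((k:ℝ)+1) := by linarith
    have e1' := one_div_lt_rev (by positivity) e1
    have e2' := one_div_lt_rev (by positivity) e2
    have hjk : j = k := by
      have a1 : j + 2 < k + 3 := by exact_mod_cast e1'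
      have a2 : k + 1 < j + 2 := by exact_mod_cast e2'
      omega
    rw [hjk]

/-- Gap between `q n` and the `v n` block. -/
lemma G3 {A : Set ℕ} {z : ℝ} (n : ℕ) (hz : z ∈ S A)
    (h1 : 4*(n:ℝ) + 3/2 < z) (h2 : z ≤ 4*(n:ℝ) + 2) : False := by
  rcases hz with ⟨m, j, rfl⟩ | ⟨m, hm, rfl⟩ | ⟨m, rfl⟩ | ⟨m, j, rfl⟩
  · have hj2 := i2pos j; have hj2' := i2le j
    simp only [w] at h1 h2
    have hmn : m = n := nat_eq (by linarith) (by linarith)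
    subst hmn; linarith
  · simp only [p] at h1 h2
    have hmn : m = n := nat_eq (by linarith) (by linarith)
    subst hmn; linarith
  · simp only [q] at h1 h2
    have hmn : m = n := nat_eq (by linarith) (by linarith)
    subst hmn; linarith
  · have hj2 := i2pos j; have hj2' := i2le j
    simp only [v] at h1 h2
    have hmn : m = n := nat_eq (by linarith) (by linarith)
    subst hmn; linarith

/-- Gap between `v n 0` and `w (n+1) 0`. -/
lemma G5 {A : Set ℕ} {z : ℝ} (n : ℕ) (hz : z ∈ S A)
    (h1 : 4*(n:ℝ) + 5/2 < z) (h2 : z < 4*(n:ℝ) + 9/2) : False := by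
  rcases hz with ⟨m, j, rfl⟩ | ⟨m, hm, rfl⟩ | ⟨m, rfl⟩ | ⟨m, j, rfl⟩
  · have hj2 := i2pos j; have hj2' := i2le j
    simp only [w] at h1 h2
    have hnm : n < m := by exact_mod_cast (show (n:ℝ) < (m:ℝ) by linarith)
    have hnm' : (n:ℝ) + 1 ≤ (m:ℝ) := by exact_mod_cast hnm
    linarith
  · simp only [p] at h1 h2
    have hnm : n < m := by exact_mod_cast (show (n:ℝ) < (m:ℝ) by linarith)
    have hnm' : (n:ℝ) + 1 ≤ (m:ℝ) := by exact_mod_cast hnm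
    linarith
  · simp only [q] at h1 h2
    have hnm : n < m := by exact_mod_cast (show (n:ℝ) < (m:ℝ) by linarith)
    have hnm' : (n:ℝ) + 1 ≤ (m:ℝ) := by exact_mod_cast hnm
    linarith
  · have hj2 := i2pos j; have hj2' := i2le j
    simp only [v] at h1 h2
    have hnm : n < m := by exact_mod_cast (show (n:ℝ) < (m:ℝ) by linarith)
    have hnm' : (n:ℝ) + 1 ≤ (m:ℝ) := by exact_mod_cast hnm
    linarith

/-- When `n ∈ A` there are no points in `[4n+1, q n)`. -/
lemma G6 {A : Set ℕ} {z : ℝ} (n : ℕ) (hA : n ∈ A) (hz : z ∈ S A)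
    (h1 : 4*(n:ℝ) + 1 ≤ z) (h2 : z < 4*(n:ℝ) + 3/2) : False := by
  rcases hz with ⟨m, j, rfl⟩ | ⟨m, hm, rfl⟩ | ⟨m, rfl⟩ | ⟨m, j, rfl⟩
  · have hj2 := i2pos j; have hj2' := i2le j
    simp only [w] at h1 h2
    have hmn : m = n := nat_eq (by linarith) (by linarith)
    subst hmn; linarith
  · simp only [p] at h1 h2
    have hmn : m = n := nat_eq (by linarith) (by linarith)
    subst hmn; exact hm hA
  · simp only [q] at h1 h2
    have hmn : m = n := nat_eq (by linarith) (by linarith)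
    subst hmn; linarith
  · have hj2 := i2pos j; have hj2' := i2le j
    simp only [v] at h1 h2
    have hmn : m = n := nat_eq (by linarith) (by linarith)
    subst hmn; linarith


lemma succ_w (A : Set ℕ) (n k : ℕ) : HasSucc (S A) (w n k) := by
  have hk2 := i2pos k; have hk3 := i3pos k; have hk1 := i1pos k
  have h23 : 1/((k:ℝ)+3) < 1/((k:ℝ)+2) :=
    one_div_lt_one_div_of_lt (by positivity) (by linarith)
  have h12 : 1/((k:ℝ)+2) < 1/((k:ℝ)+1) :=
    one_div_lt_one_div_of_lt (by positivity) (by linarith)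
  refine ⟨w n (k+1), mem_w A n (k+1), ?_, ?_⟩
  · rw [w_succ]; simp only [w]; linarith
  · intro z hz hlt
    by_contra hc; push_neg at hc
    rw [w_succ] at hc
    simp only [w] at hlt
    have hz' := Iw n k hz (by linarith) hc
    rw [hz'] at hlt
    simp only [w] at hlt
    linarith

lemma succ_p (A : Set ℕ) (n : ℕ) : HasSucc (S A) (p n) := by
  refine ⟨q n, mem_q A n, by simp only [p, q]; linarith, ?_⟩
  intro z hz hlt
  by_contra hc; push_neg at hc
  simp only [p] at hlt
  have hc' : z < 4*(n:ℝ) + 2 := by simp only [q] at hc; linarith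
  have hz' := Iq n hz hlt hc'
  rw [hz'] at hc
  exact lt_irrefl _ hc

lemma succ_v0 (A : Set ℕ) (n : ℕ) : HasSucc (S A) (v n 0) := by
  refine ⟨w (n+1) 0, mem_w A (n+1) 0, ?_, ?_⟩
  · rw [w_zero, v_zero]; push_cast; linarith
  · intro z hz hlt
    by_contra hc; push_neg at hc
    rw [v_zero] at hlt
    rw [w_zero] at hc
    exact G5 n hz hlt (by push_cast at hc ⊢; linarith)

lemma succ_vS (A : Set ℕ) (n k : ℕ) : HasSucc (S A) (v n (k+1)) := by
  have hk2 := i2pos k; have hk3 := i3pos k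
  have h34 : 1/((k:ℝ)+4) < 1/((k:ℝ)+3) :=
    one_div_lt_one_div_of_lt (by positivity) (by linarith)
  refine ⟨v n k, mem_v A n k, ?_, ?_⟩
  · rw [v_succ]; simp only [v]
    have : 1/((k:ℝ)+3) < 1/((k:ℝ)+2) :=
      one_div_lt_one_div_of_lt (by positivity) (by linarith)
    linarith
  · intro z hz hlt
    by_contra hc; push_neg at hc
    rw [v_succ] at hlt
    simp only [v] at hc
    have e1 : ((k:ℝ)+1)+3 = (k:ℝ)+4 := by ring
    have e2 : ((k:ℝ)+1)+1 = (k:ℝ)+2 := by ring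
    have hz' := Iv n (k+1) hz (by push_cast; rw [e1]; linarith)
      (by push_cast; rw [e2]; linarith)
    rw [hz', v_succ] at hlt
    exact lt_irrefl _ hlt

lemma nosucc_q (A : Set ℕ) (n : ℕ) : ¬ HasSucc (S A) (q n) := by
  rintro ⟨y, hy, hlt, hmin⟩
  simp only [q] at hlt
  have hy2 : 4*(n:ℝ) + 2 < y := by
    by_contra h; push_neg at h
    exact G3 n hy hlt h
  obtain ⟨j, hj⟩ := exists_nat_one_div_lt (show (0:ℝ) < y - (4*(n:ℝ)+2) by linarith)
  have hj2 := i2pos j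
  have hle : 1/((j:ℝ)+2) ≤ 1/((j:ℝ)+1) :=
    one_div_le_one_div_of_le (by positivity) (by linarith)
  have h1 : q n < v n j := by simp only [q, v]; linarith
  have h2 : v n j < y := by simp only [v]; linarith
  have := hmin _ (mem_v A n j) h1
  linarith

lemma nosucc_iff (A : Set ℕ) {x : ℝ} (hx : x ∈ S A) :
    ¬ HasSucc (S A) x ↔ ∃ n, x = q n := by
  constructor
  · intro h
    rcases hx with ⟨n, k, rfl⟩ | ⟨n, hn, rfl⟩ | ⟨n, rfl⟩ | ⟨n, k, rfl⟩
    · exact absurd (succ_w A n k) h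
    · exact absurd (succ_p A n) h
    · exact ⟨n, rfl⟩
    · cases k with
      | zero => exact absurd (succ_v0 A n) h
      | succ k => exact absurd (succ_vS A n k) h
  · rintro ⟨n, rfl⟩; exact nosucc_q A n

lemma pred_q_iff (A : Set ℕ) (n : ℕ) : HasPred (S A) (q n) ↔ n ∉ A := by
  constructor
  · rintro ⟨y, hy, hlt, hmax⟩ hA
    simp only [q] at hlt
    have hy1 : y < 4*(n:ℝ) + 1 := by
      by_contra h; push_neg at h
      exact G6 n hA hy h hlt
    obtain ⟨j, hj⟩ := exists_nat_one_div_lt (show (0:ℝ) < 4*(n:ℝ)+1 - y by linarith)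
    have hj2 := i2pos j
    have hle : 1/((j:ℝ)+2) ≤ 1/((j:ℝ)+1) :=
      one_div_le_one_div_of_le (by positivity) (by linarith)
    have h1 : w n j < q n := by simp only [w, q]; linarith
    have h2 : y < w n j := by simp only [w]; linarith
    have := hmax _ (mem_w A n j) h1
    linarith
  · intro hn
    refine ⟨p n, mem_p hn, by simp only [p, q]; linarith, ?_⟩
    intro z hz hlt
    by_contra hc; push_neg at hc
    simp only [p] at hc
    have hlt' : z < 4*(n:ℝ) + 2 := by simp only [q] at hlt; linarith
    have hz' := Iq n hz hc hlt'
    rw [hz'] at hlt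
    exact lt_irrefl _ hlt


lemma isolated (A : Set ℕ) {x : ℝ} (hx : x ∈ S A) :
    ∃ a b : ℝ, a < x ∧ x < b ∧ ∀ z ∈ S A, a < z → z < b → z = x := by
  rcases hx with ⟨n, k, rfl⟩ | ⟨n, hn, rfl⟩ | ⟨n, rfl⟩ | ⟨n, k, rfl⟩
  · have hk1 := i1pos k; have hk2 := i2pos k; have hk3 := i3pos k
    have h12 : 1/((k:ℝ)+2) < 1/((k:ℝ)+1) :=
      one_div_lt_one_div_of_lt (by positivity) (by linarith)
    have h23 : 1/((k:ℝ)+3) < 1/((k:ℝ)+2) :=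
      one_div_lt_one_div_of_lt (by positivity) (by linarith)
    exact ⟨4*(n:ℝ) + 1 - 1/((k:ℝ)+1), 4*(n:ℝ) + 1 - 1/((k:ℝ)+3),
      by simp only [w]; linarith, by simp only [w]; linarith,
      fun z hz h1 h2 => Iw n k hz h1 h2⟩
  · exact ⟨4*(n:ℝ) + 1, 4*(n:ℝ) + 3/2,
      by simp only [p]; linarith, by simp only [p]; linarith,
      fun z hz h1 h2 => Ip n hz h1 h2⟩
  · exact ⟨4*(n:ℝ) + 5/4, 4*(n:ℝ) + 2,
      by simp only [q]; linarith, by simp only [q]; linarith,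
      fun z hz h1 h2 => Iq n hz h1 h2⟩
  · have hk1 := i1pos k; have hk2 := i2pos k; have hk3 := i3pos k
    have h12 : 1/((k:ℝ)+2) < 1/((k:ℝ)+1) :=
      one_div_lt_one_div_of_lt (by positivity) (by linarith)
    have h23 : 1/((k:ℝ)+3) < 1/((k:ℝ)+2) :=
      one_div_lt_one_div_of_lt (by positivity) (by linarith)
    exact ⟨4*(n:ℝ) + 2 + 1/((k:ℝ)+3), 4*(n:ℝ) + 2 + 1/((k:ℝ)+1),
      by simp only [v]; linarith, by simp only [v]; linarith,
      fun z hz h1 h2 => Iv n k hz h1 h2⟩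

lemma discreteS (A : Set ℕ) : DiscreteTopology ↥(S A) := by
  rw [discreteTopology_subtype_iff]
  intro x hx
  obtain ⟨a, b, ha, hb, hu⟩ := isolated A hx
  rw [← Filter.empty_mem_iff_bot]
  have h1 : ({x}ᶜ ∩ Ioo a b) ∈ nhdsWithin x {x}ᶜ :=
    Filter.inter_mem self_mem_nhdsWithin
      (mem_nhdsWithin_of_mem_nhds (Ioo_mem_nhds ha hb))
  have h2 : S A ∈ Filter.principal (S A) := Filter.mem_principal_self _
  have key : ({x}ᶜ ∩ Ioo a b) ∩ S A = ∅ := by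
    ext y
    simp only [mem_inter_iff, mem_compl_iff, mem_singleton_iff, mem_Ioo, mem_empty_iff_false,
      iff_false, not_and, and_imp]
    intro hne h1' h2' hy
    exact hne (hu y hy h1' h2')
  rw [← key]
  exact Filter.inter_mem_inf h1 h2

lemma iso_succ {D E : Set ℝ} (e : ↥D ≃o ↥E) (x : ↥D) (h : HasSucc D ↑x) :
    HasSucc E ↑(e x) := by
  obtain ⟨y, hy, hxy, hmin⟩ := h
  have hxy' : x < ⟨y, hy⟩ := Subtype.coe_lt_coe.1 hxy
  refine ⟨(e ⟨y, hy⟩ : ↥E), (e ⟨y, hy⟩).2, Subtype.coe_lt_coe.2 (e.lt_iff_lt.2 hxy'), ?_⟩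
  intro z hz hltz
  have h2 : x < e.symm ⟨z, hz⟩ := by
    rw [← e.lt_iff_lt, e.apply_symm_apply]
    exact Subtype.coe_lt_coe.1 hltz
  have h3 : (⟨y, hy⟩ : ↥D) ≤ e.symm ⟨z, hz⟩ :=
    Subtype.coe_le_coe.1 (hmin _ (e.symm ⟨z, hz⟩).2 (Subtype.coe_lt_coe.2 h2))
  have h4 := e.le_iff_le.2 h3
  rw [e.apply_symm_apply] at h4
  exact Subtype.coe_le_coe.2 h4

lemma iso_pred {D E : Set ℝ} (e : ↥D ≃o ↥E) (x : ↥D) (h : HasPred D ↑x) :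
    HasPred E ↑(e x) := by
  obtain ⟨y, hy, hxy, hmax⟩ := h
  have hxy' : (⟨y, hy⟩ : ↥D) < x := Subtype.coe_lt_coe.1 hxy
  refine ⟨(e ⟨y, hy⟩ : ↥E), (e ⟨y, hy⟩).2, Subtype.coe_lt_coe.2 (e.lt_iff_lt.2 hxy'), ?_⟩
  intro z hz hltz
  have h2 : e.symm ⟨z, hz⟩ < x := by
    rw [← e.lt_iff_lt, e.apply_symm_apply]
    exact Subtype.coe_lt_coe.1 hltz
  have h3 : e.symm ⟨z, hz⟩ ≤ (⟨y, hy⟩ : ↥D) :=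
    Subtype.coe_le_coe.1 (hmax _ (e.symm ⟨z, hz⟩).2 (Subtype.coe_lt_coe.2 h2))
  have h4 := e.le_iff_le.2 h3
  rw [e.apply_symm_apply] at h4
  exact Subtype.coe_le_coe.2 h4

lemma iso_succ_iff {D E : Set ℝ} (e : ↥D ≃o ↥E) (x : ↥D) :
    HasSucc D ↑x ↔ HasSucc E ↑(e x) :=
  ⟨iso_succ e x, fun h => by
    have := iso_succ e.symm (e x) h
    rwa [e.symm_apply_apply] at this⟩

lemma iso_pred_iff {D E : Set ℝ} (e : ↥D ≃o ↥E) (x : ↥D) :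
    HasPred D ↑x ↔ HasPred E ↑(e x) :=
  ⟨iso_pred e x, fun h => by
    have := iso_pred e.symm (e x) h
    rwa [e.symm_apply_apply] at this⟩

lemma q_lt_q {m n : ℕ} : q m < q n ↔ m < n := by
  simp only [q]
  constructor
  · intro h
    exact_mod_cast (show (m:ℝ) < (n:ℝ) by linarith)
  · intro h
    have : (m:ℝ) < (n:ℝ) := by exact_mod_cast h
    linarith

lemma q_inj {m n : ℕ} (h : q m = q n) : m = n := by
  simp only [q] at h
  exact_mod_cast (show (m:ℝ) = (n:ℝ) by linarith)

lemma strictMono_surj_nat {g : ℕ → ℕ} (h1 : StrictMono g) (h2 : Function.Surjective g) :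
    ∀ n, g n = n := by
  have hle : ∀ j, j ≤ g j := fun j => by
    induction j with
    | zero => exact Nat.zero_le _
    | succ i hi => exact Nat.succ_le_of_lt (lt_of_le_of_lt hi (h1 (Nat.lt_succ_self i)))
  intro n
  induction n using Nat.strong_induction_on with
  | _ n ih =>
    obtain ⟨m, hm⟩ := h2 n
    have hmn : m ≤ n := hm ▸ hle m
    rcases lt_or_eq_of_le hmn with hlt | rfl
    · have := ih m hlt
      have := hle n
      omega
    · exact hm

lemma rigid {A B : Set ℕ} (f : ↥(S A) → ↥(S B)) (hb : Function.Bijective f)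
    (hm : StrictMono f) : S A = S B := by
  have e : ↥(S A) ≃o ↥(S B) := StrictMono.orderIsoOfSurjective f hm hb.2
  have hq : ∀ n : ℕ, ∃ m : ℕ, (↑(e ⟨q n, mem_q A n⟩) : ℝ) = q m := by
    intro n
    have h1 : ¬ HasSucc (S A) ↑(⟨q n, mem_q A n⟩ : ↥(S A)) := nosucc_q A n
    have h2 : ¬ HasSucc (S B) ↑(e ⟨q n, mem_q A n⟩) := fun h =>
      h1 ((iso_succ_iff e _).2 h)
    exact (nosucc_iff B (e ⟨q n, mem_q A n⟩).2).1 h2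
  choose g hg using hq
  have hgmono : StrictMono g := by
    intro a b hab
    have h1 : (⟨q a, mem_q A a⟩ : ↥(S A)) < ⟨q b, mem_q A b⟩ :=
      Subtype.coe_lt_coe.1 (by simpa using q_lt_q.2 hab)
    have h2 := Subtype.coe_lt_coe.2 (e.lt_iff_lt.2 h1)
    rw [hg a, hg b] at h2
    exact q_lt_q.1 h2
  have hgsurj : Function.Surjective g := by
    intro m
    set y := e.symm ⟨q m, mem_q B m⟩ with hy
    have h1 : ¬ HasSucc (S A) ↑y := by
      intro h
      have h2 := iso_succ e y h
      rw [hy, e.apply_symm_apply] at h2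
      exact nosucc_q B m h2
    obtain ⟨n, hn⟩ := (nosucc_iff A y.2).1 h1
    refine ⟨n, ?_⟩
    have hyn : (⟨q n, mem_q A n⟩ : ↥(S A)) = y := Subtype.ext hn.symm
    have := hg n
    rw [hyn, hy, e.apply_symm_apply] at this
    exact q_inj this.symm
  have hgid := strictMono_surj_nat hgmono hgsurj
  have hAB : A = B := by
    ext n
    have h1 : (↑(e ⟨q n, mem_q A n⟩) : ℝ) = q n := by rw [hg n, hgid n]
    have h2 := iso_pred_iff e ⟨q n, mem_q A n⟩
    rw [h1] at h2
    have h3 := (pred_q_iff A n).symm.trans (h2.trans (pred_q_iff B n))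
    exact not_iff_not.1 h3
  rw [hAB]

lemma S_inj : Function.Injective S := by
  intro A B h
  ext n
  have hA := pred_q_iff A n
  have hB := pred_q_iff B n
  rw [h] at hA
  exact not_iff_not.1 (hA.symm.trans hB)


lemma mk_family : Cardinal.mk ↥(Set.range S) = Cardinal.continuum := by
  rw [Cardinal.mk_range_eq S S_inj, Cardinal.mk_set, Cardinal.mk_nat,
    Cardinal.two_power_aleph0]

end Stmt19

end

/-- There is a family of discrete subsets of `ℝ`, of cardinality
continuum, no two distinct members of which are order-isomorphic. -/
theorem stmt_19 :
    ∃ 𝓓 : Set (Set ℝ),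
      Cardinal.mk 𝓓 = Cardinal.continuum ∧
      (∀ D ∈ 𝓓, DiscreteTopology ↥D) ∧
      (∀ D ∈ 𝓓, ∀ E ∈ 𝓓, D ≠ E →
        ¬ ∃ f : ↥D → ↥E, Function.Bijective f ∧ StrictMono f) := by
  refine ⟨Set.range Stmt19.S, Stmt19.mk_family, ?_, ?_⟩
  · rintro D ⟨A, rfl⟩
    exact Stmt19.discreteS A
  · rintro D ⟨A, rfl⟩ E ⟨B, rfl⟩ hne ⟨f, hbij, hmono⟩
    exact hne (Stmt19.rigid f hbij hmono)
end
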